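/- arXiv:1401.2659 — 6 statements merged into one kernel-verified Lean document; each statement's English description precedes it below -/
import Mathlib

section
/- For every n, p(n) is congruent modulo 2 to the number of partitions of n into distinct odd parts. -/
open Multiset

namespace PartParity

/-! ### Parity of a finset under an involution -/

variable {α : Type*} [DecidableEq α]

lemma even_card_of_invol (f : α → α) (s : Finset α)
    (hmap : ∀ a ∈ s, f a ∈ s) (hinv : ∀ a ∈ s, f (f a) = a)
    (hne : ∀ a ∈ s, f a ≠ a) : Even s.card := by
  induction s using Finset.strongInduction with
  | _ s ih =>
    rcases s.eq_empty_or_nonempty with rfl | ⟨a, ha⟩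
    · simp
    · have hfa : f a ∈ s := hmap a ha
      have hnea : f a ≠ a := hne a ha
      set t := (s.erase a).erase (f a) with ht
      have hts : t ⊂ s := by
        refine Finset.ssubset_of_subset_of_ssubset ?_ (Finset.erase_ssubset ha)
        exact Finset.erase_subset _ _
      have hmem : ∀ b, b ∈ t ↔ b ∈ s ∧ b ≠ a ∧ b ≠ f a := by
        intro b
        simp [ht, Finset.mem_erase]
        tauto
      have htmap : ∀ b ∈ t, f b ∈ t := by
        intro b hb
        rw [hmem] at hb ⊢
        obtain ⟨hbs, hba, hbfa⟩ := hb
        refine ⟨hmap b hbs, ?_, ?_⟩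
        · intro h
          apply hbfa
          rw [← hinv b hbs, h]
        · intro h
          apply hba
          have := hinv b hbs
          rw [h, hinv a ha] at this
          exact this.symm
      have htinv : ∀ b ∈ t, f (f b) = b := fun b hb => hinv b ((hmem b).1 hb).1
      have htne : ∀ b ∈ t, f b ≠ b := fun b hb => hne b ((hmem b).1 hb).1
      have hcard : s.card = t.card + 2 := by
        have h1 : (s.erase a).card = s.card - 1 := Finset.card_erase_of_mem ha
        have hfa' : f a ∈ s.erase a := Finset.mem_erase.2 ⟨hnea, hfa⟩
        have h2 : t.card = (s.erase a).card - 1 := Finset.card_erase_of_mem hfa'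
        have h3 : 1 ≤ s.card := Finset.card_pos.2 ⟨a, ha⟩
        have h4 : 1 ≤ (s.erase a).card := Finset.card_pos.2 ⟨f a, hfa'⟩
        omega
      have := ih t hts htmap htinv htne
      rw [hcard]
      obtain ⟨m, hm⟩ := this
      exact ⟨m + 1, by omega⟩

lemma card_modEq_filter_fixed [Fintype α] (f : α → α) (hf : ∀ a, f (f a) = a) :
    Fintype.card α ≡ (Finset.univ.filter fun a => f a = a).card [MOD 2] := by
  classical
  have hsplit : (Finset.univ.filter fun a => f a = a).card
      + (Finset.univ.filter fun a => ¬ (f a = a)).card = Fintype.card α :=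
    Finset.card_filter_add_card_filter_not _
  have heven : Even (Finset.univ.filter fun a => ¬ (f a = a)).card := by
    apply even_card_of_invol f
    · intro a ha
      simp only [Finset.mem_filter, Finset.mem_univ, true_and] at ha ⊢
      intro h
      have h2 := hf a
      rw [h] at h2
      exact ha h2
    · intro a _; exact hf a
    · intro a ha
      simpa using ha
  obtain ⟨m, hm⟩ := heven
  have : Fintype.card α = (Finset.univ.filter fun a => f a = a).card + 2 * m := by omega
  rw [this]
  simpa [Nat.ModEq] using (Nat.add_mul_mod_self_left _ 2 m).symm ▸ rfl

/-! ### The involution on multisets -/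

/-- The largest even element of `s` (or `0`). -/
def A (s : Multiset ℕ) : ℕ := (s.toFinset.filter (fun x => Even x)).sup id

/-- The largest repeated element of `s` (or `0`). -/
def B (s : Multiset ℕ) : ℕ := (s.toFinset.filter (fun x => 2 ≤ s.count x)).sup id

lemma A_spec {s : Multiset ℕ} (h : A s ≠ 0) : A s ∈ s ∧ Even (A s) := by
  by_cases hne : (s.toFinset.filter (fun x => Even x)).Nonempty
  · obtain ⟨b, hb, hsup⟩ := Finset.exists_mem_eq_sup _ hne id
    rw [Finset.mem_filter, Multiset.mem_toFinset] at hb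
    rw [A, hsup]
    exact hb
  · exfalso
    apply h
    rw [Finset.not_nonempty_iff_eq_empty] at hne
    rw [A, hne, Finset.sup_empty]
    rfl

lemma le_A {s : Multiset ℕ} {x : ℕ} (hx : x ∈ s) (he : Even x) : x ≤ A s := by
  apply Finset.le_sup (f := id)
  rw [Finset.mem_filter, Multiset.mem_toFinset]
  exact ⟨hx, he⟩

lemma B_spec {s : Multiset ℕ} (h : B s ≠ 0) : 2 ≤ s.count (B s) := by
  by_cases hne : (s.toFinset.filter (fun x => 2 ≤ s.count x)).Nonempty
  · obtain ⟨b, hb, hsup⟩ := Finset.exists_mem_eq_sup _ hne id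
    rw [Finset.mem_filter, Multiset.mem_toFinset] at hb
    rw [B, hsup]
    exact hb.2
  · exfalso
    apply h
    rw [Finset.not_nonempty_iff_eq_empty] at hne
    rw [B, hne, Finset.sup_empty]
    rfl

lemma le_B {s : Multiset ℕ} {x : ℕ} (hx : 2 ≤ s.count x) : x ≤ B s := by
  apply Finset.le_sup (f := id)
  rw [Finset.mem_filter, Multiset.mem_toFinset]
  exact ⟨Multiset.count_pos.1 (by omega), hx⟩

/-- The involution: split the largest even part, or merge two copies of the
largest repeated part. -/
def g (s : Multiset ℕ) : Multiset ℕ :=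
  if A s ≠ 0 ∧ 2 * B s ≤ A s then (A s / 2) ::ₘ (A s / 2) ::ₘ s.erase (A s)
  else if B s ≠ 0 then (2 * B s) ::ₘ (s.erase (B s)).erase (B s)
  else s

lemma g_sum (s : Multiset ℕ) : (g s).sum = s.sum := by
  rw [g]
  split_ifs with h1 h2
  · obtain ⟨hmem, heven⟩ := A_spec h1.1
    have : A s / 2 + A s / 2 = A s := by
      obtain ⟨k, hk⟩ := heven
      omega
    rw [Multiset.sum_cons, Multiset.sum_cons, ← add_assoc, this]
    conv_rhs => rw [← Multiset.cons_erase hmem, Multiset.sum_cons]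
  · have hb := B_spec h2
    have hb1 : B s ∈ s := Multiset.count_pos.1 (by omega)
    have hb2 : B s ∈ s.erase (B s) := by
      rw [← Multiset.count_pos, Multiset.count_erase_self]
      omega
    rw [Multiset.sum_cons]
    conv_rhs => rw [← Multiset.cons_erase hb1, Multiset.sum_cons,
      ← Multiset.cons_erase hb2, Multiset.sum_cons]
    ring
  · rfl

lemma g_pos {s : Multiset ℕ} (hpos : ∀ x ∈ s, 0 < x) : ∀ x ∈ g s, 0 < x := by
  intro x hx
  rw [g] at hx
  split_ifs at hx with h1 h2
  · obtain ⟨hmem, heven⟩ := A_spec h1.1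
    rcases Multiset.mem_cons.1 hx with rfl | hx
    · obtain ⟨k, hk⟩ := heven; have := h1.1; omega
    rcases Multiset.mem_cons.1 hx with rfl | hx
    · obtain ⟨k, hk⟩ := heven; have := h1.1; omega
    · exact hpos x (Multiset.mem_of_mem_erase hx)
  · rcases Multiset.mem_cons.1 hx with rfl | hx
    · omega
    · exact hpos x (Multiset.mem_of_mem_erase (Multiset.mem_of_mem_erase hx))
  · exact hpos x hx

section Invol

variable {s : Multiset ℕ} (hpos : ∀ x ∈ s, 0 < x)

include hpos in
lemma g_invol : g (g s) = s := by
  by_cases h1 : A s ≠ 0 ∧ 2 * B s ≤ A s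
  · -- split case
    obtain ⟨ha, hab⟩ := h1
    obtain ⟨hmem, heven⟩ := A_spec ha
    set a := A s with hA
    have hhalf : a / 2 + a / 2 = a := by obtain ⟨k, hk⟩ := heven; omega
    have hBle : B s ≤ a / 2 := by omega
    have hcount1 : s.count a = 1 := by
      have h1 : 1 ≤ s.count a := Multiset.count_pos.2 hmem
      by_contra h
      have : a ≤ B s := le_B (by omega)
      omega
    set t := (a / 2) ::ₘ (a / 2) ::ₘ s.erase a with htdef
    have hgs : g s = t := by rw [g, if_pos ⟨ha, hab⟩]
    -- evens of t are < a
    have hAt : A t < a := by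
      by_cases h : A t = 0
      · omega
      · obtain ⟨hmt, het⟩ := A_spec h
        rcases Multiset.mem_cons.1 hmt with he | hmt
        · omega
        rcases Multiset.mem_cons.1 hmt with he | hmt
        · omega
        · have hin : A t ∈ s := Multiset.mem_of_mem_erase hmt
          have hle : A t ≤ a := le_A hin het
          rcases lt_or_eq_of_le hle with h' | h'
          · exact h'
          · exfalso
            rw [h'] at hmt
            have : 1 ≤ (s.erase a).count a := Multiset.count_pos.2 hmt
            rw [Multiset.count_erase_self] at this
            omega
    have hBt : B t = a / 2 := by
      have hge : a / 2 ≤ B t := by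
        apply le_B
        have : t.count (a / 2) = 2 + (s.erase a).count (a / 2) := by
          simp [htdef, Multiset.count_cons]
          omega
        omega
      have hle : B t ≤ a / 2 := by
        by_cases h : B t = 0
        · omega
        · have hct := B_spec h
          by_cases hba : B t = a / 2
          · omega
          · have : t.count (B t) = (s.erase a).count (B t) := by
              have hba' := hba; rw [htdef] at hba'
              simp [htdef, Multiset.count_cons, hba']
            rw [this] at hct
            have h2 : 2 ≤ s.count (B t) := by
              have := Multiset.count_le_of_le (B t) (Multiset.erase_le a s)
              omega
            exact le_trans (le_B h2) hBle
      omega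
    have hane : ¬ (A t ≠ 0 ∧ 2 * B t ≤ A t) := by
      rintro ⟨h1, h2⟩
      rw [hBt] at h2
      omega
    have hBtne : B t ≠ 0 := by
      rw [hBt]; omega
    rw [hgs, g, if_neg hane, if_pos hBtne, hBt]
    have : (t.erase (a / 2)).erase (a / 2) = s.erase a := by
      rw [htdef, Multiset.erase_cons_head, Multiset.erase_cons_head]
    rw [this]
    have h2a : 2 * (a / 2) = a := by omega
    rw [h2a, Multiset.cons_erase hmem]
  · -- merge or fixed case
    by_cases hb : B s ≠ 0
    · obtain hcount := B_spec hb
      set b := B s with hB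
      have hablt : A s < 2 * b := by
        push_neg at h1
        by_cases ha : A s = 0
        · omega
        · have := h1 ha; omega
      have hb1 : b ∈ s := Multiset.count_pos.1 (by omega)
      have hb2 : b ∈ s.erase b := by
        rw [← Multiset.count_pos, Multiset.count_erase_self]; omega
      set t := (2 * b) ::ₘ (s.erase b).erase b with htdef
      have hgs : g s = t := by rw [g, if_neg h1, if_pos hb]
      have hcount' : ∀ x : ℕ, ((s.erase b).erase b).count x ≤ s.count x := by
        intro x
        have h1 := Multiset.count_le_of_le x (Multiset.erase_le b (s.erase b))
        have h2 := Multiset.count_le_of_le x (Multiset.erase_le b s)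
        omega
      have hAt : A t = 2 * b := by
        have hge : 2 * b ≤ A t := le_A (Multiset.mem_cons_self _ _) ⟨b, by ring⟩
        have hne : A t ≠ 0 := by omega
        obtain ⟨hmt, het⟩ := A_spec hne
        rcases Multiset.mem_cons.1 hmt with he | hmt
        · omega
        · have hin : A t ∈ s :=
            Multiset.mem_of_mem_erase (Multiset.mem_of_mem_erase hmt)
          have : A t ≤ A s := le_A hin het
          omega
      have hBt : B t ≤ b := by
        by_cases h : B t = 0
        · omega
        · have hct := B_spec h
          by_cases h2b : B t = 2 * b
          · exfalso
            have hnotin : (2 * b) ∉ (s.erase b).erase b := by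
              intro hin
              have : 2 * b ≤ A s :=
                le_A (Multiset.mem_of_mem_erase (Multiset.mem_of_mem_erase hin))
                  ⟨b, by ring⟩
              omega
            have : t.count (2 * b) = 1 := by
              rw [htdef, Multiset.count_cons_self,
                Multiset.count_eq_zero_of_notMem hnotin]
            rw [h2b, this] at hct
            omega
          · have : t.count (B t) = ((s.erase b).erase b).count (B t) := by
              have h2b' := h2b; rw [htdef] at h2b'
              simp [htdef, Multiset.count_cons, h2b']
            rw [this] at hct
            have := hcount' (B t)
            exact le_B (by omega)
      have hcond : A t ≠ 0 ∧ 2 * B t ≤ A t := by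
        constructor
        · omega
        · omega
      rw [hgs, g, if_pos hcond, hAt]
      have hhalf : 2 * b / 2 = b := by omega
      rw [hhalf]
      have : t.erase (2 * b) = (s.erase b).erase b := Multiset.erase_cons_head _ _
      rw [this, Multiset.cons_erase hb2, Multiset.cons_erase hb1]
    · push_neg at hb
      have : g s = s := by rw [g, if_neg h1, if_neg (by simpa using hb)]
      rw [this, this]

include hpos in
lemma g_fixed_iff : g s = s ↔ (∀ i ∈ s, ¬ Even i) ∧ s.Nodup := by
  constructor
  · intro hfix
    by_cases h1 : A s ≠ 0 ∧ 2 * B s ≤ A s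
    · exfalso
      obtain ⟨ha, hab⟩ := h1
      obtain ⟨hmem, heven⟩ := A_spec ha
      have hne : A s / 2 ≠ A s := by
        have := hpos _ hmem; omega
      have : (g s).count (A s) = s.count (A s) - 1 := by
        rw [g, if_pos ⟨ha, hab⟩]
        rw [Multiset.count_cons_of_ne (by omega), Multiset.count_cons_of_ne (by omega),
          Multiset.count_erase_self]
      rw [hfix] at this
      have := Multiset.count_pos.2 hmem
      omega
    · by_cases hb : B s ≠ 0
      · exfalso
        have hcount := B_spec hb
        have : (g s).count (B s) = s.count (B s) - 2 := by
          rw [g, if_neg h1, if_pos hb]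
          rw [Multiset.count_cons_of_ne (by omega),
            Multiset.count_erase_self, Multiset.count_erase_self]
          omega
        rw [hfix] at this
        omega
      · push_neg at hb
        push_neg at h1
        constructor
        · intro i hi hev
          have hA : A s = 0 := by
            by_contra ha
            have := h1 ha
            omega
          have := le_A hi hev
          have := hpos i hi
          omega
        · rw [Multiset.nodup_iff_count_le_one]
          intro x
          by_contra h
          have hx : 2 ≤ s.count x := by omega
          have := le_B hx
          have : x ∈ s := Multiset.count_pos.1 (by omega)
          have := hpos x this
          omega
  · rintro ⟨hodd, hnodup⟩
    have hA : A s = 0 := by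
      by_contra ha
      obtain ⟨hmem, heven⟩ := A_spec ha
      exact hodd _ hmem heven
    have hB : B s = 0 := by
      by_contra hb
      have := B_spec hb
      have := Multiset.nodup_iff_count_le_one.1 hnodup (B s)
      omega
    rw [g, if_neg (by simp [hA]), if_neg (by simpa using hB)]

end Invol

/-! ### The involution on partitions -/

/-- The involution on partitions of `n`. -/
def F {n : ℕ} (p : Nat.Partition n) : Nat.Partition n where
  parts := g p.parts
  parts_pos := fun hi => g_pos (fun _ hx => p.parts_pos hx) _ hi
  parts_sum := by rw [g_sum]; exact p.parts_sum

lemma F_invol {n : ℕ} (p : Nat.Partition n) : F (F p) = p := by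
  ext1
  exact g_invol (fun _ hx => p.parts_pos hx)

end PartParity

theorem partition_card_modEq_oddDistincts_card (n : ℕ) :
    Fintype.card (Nat.Partition n) ≡ (Nat.Partition.oddDistincts n).card [MOD 2] := by
  classical
  have h := PartParity.card_modEq_filter_fixed PartParity.F (PartParity.F_invol (n := n))
  have heq : (Finset.univ.filter fun p => PartParity.F p = p) =
      Nat.Partition.oddDistincts n := by
    ext p
    simp only [Finset.mem_filter, Finset.mem_univ, true_and,
      Nat.Partition.oddDistincts, Nat.Partition.odds, Nat.Partition.restricted, Nat.Partition.distincts,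
      Finset.mem_inter]
    constructor
    · intro hfix
      have : PartParity.g p.parts = p.parts := by
        have := congrArg Nat.Partition.parts hfix
        exact this
      have := (PartParity.g_fixed_iff (fun _ hx => p.parts_pos hx)).1 this
      exact ⟨this.1, this.2⟩
    · rintro ⟨h1, h2⟩
      ext1
      exact (PartParity.g_fixed_iff (fun _ hx => p.parts_pos hx)).2 ⟨h1, h2⟩
  rw [heq] at h
  exact h
end

section
/- Let a ≥ b ≥ 1 and let D_{a,b}(n) denote the set of partitions of n into distinct parts each congruent to b modulo a. For j ≥ 1, let D^j_{a,b}(n) be the set of partitions λ in D_{a,b}(n) with at least j parts satisfying λ_1 − λ_2 = … = λ_{j−1} − λ_j = a (with D^1_{a,b}(n) = D_{a,b}(n)). Then the map subtracting a from each of the first j parts gives a bijection from D^j_{a,b}(n) \ D^{j+1}_{a,b}(n) to D^j_{a,b}(n − aj), provided D^{j+1}_{a,b}(n) is nonempty. -/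
/-- `Dab a b n`: partitions of `n` into distinct parts each congruent to `b` mod `a`. -/
def Dab (a b n : ℕ) : Finset (Nat.Partition n) :=
  Finset.univ.filter (fun P => P.parts.Nodup ∧ ∀ x ∈ P.parts, x % a = b % a)

/-- The parts of a partition listed in nonincreasing order. -/
def partsDesc {n : ℕ} (P : Nat.Partition n) : List ℕ :=
  (P.parts.sort (· ≤ ·)).reverse

open Classical in
/-- `Dj a b j n`: partitions in `Dab a b n` with at least `j` parts whose first `j - 1`
consecutive gaps `λ_1 - λ_2, …, λ_{j-1} - λ_j` all equal `a`. -/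
noncomputable def Dj (a b j n : ℕ) : Finset (Nat.Partition n) :=
  (Dab a b n).filter (fun P => j ≤ Multiset.card P.parts ∧
    ∀ i, i + 1 < j → (partsDesc P).getD i 0 = (partsDesc P).getD (i + 1) 0 + a)

/-! ### Auxiliary lemmas -/

namespace Stmt5Aux

lemma getD_eq {L : List ℕ} {i : ℕ} (h : i < L.length) : L.getD i 0 = L[i] := by
  simp [List.getD_eq_getElem?_getD, List.getElem?_eq_getElem h]

lemma mem_Dj {a b j n : ℕ} {P : Nat.Partition n} :
    P ∈ Dj a b j n ↔ (P.parts.Nodup ∧ ∀ x ∈ P.parts, x % a = b % a) ∧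
      j ≤ Multiset.card P.parts ∧
      ∀ i, i + 1 < j → (partsDesc P).getD i 0 = (partsDesc P).getD (i + 1) 0 + a := by
  simp [Dj, Dab, Finset.mem_filter, and_assoc]

lemma mem_partsDesc {n : ℕ} {P : Nat.Partition n} {x : ℕ} :
    x ∈ partsDesc P ↔ x ∈ P.parts := by
  simp [partsDesc]

lemma length_partsDesc {n : ℕ} (P : Nat.Partition n) :
    (partsDesc P).length = Multiset.card P.parts := by
  simp [partsDesc]

lemma parts_eq {n : ℕ} (P : Nat.Partition n) : P.parts = ↑(partsDesc P) := by
  rw [partsDesc, Multiset.coe_reverse, Multiset.sort_eq]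

lemma partsDesc_inj {n : ℕ} {P P' : Nat.Partition n} (h : partsDesc P = partsDesc P') :
    P = P' :=
  Nat.Partition.ext (by rw [parts_eq, parts_eq, h])

lemma sum_partsDesc {n : ℕ} (P : Nat.Partition n) : (partsDesc P).sum = n := by
  have := P.parts_sum
  rw [parts_eq P, Multiset.sum_coe] at this
  exact this

lemma partsDesc_sorted {n : ℕ} (P : Nat.Partition n) (h : P.parts.Nodup) :
    (partsDesc P).Pairwise (· > ·) := by
  rw [partsDesc, List.pairwise_reverse]
  have hs : (P.parts.sort (· ≤ ·)).Pairwise (· ≤ ·) := Multiset.pairwise_sort _ _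
  have hn : (P.parts.sort (· ≤ ·)).Nodup := by
    rw [← Multiset.coe_nodup, Multiset.sort_eq]; exact h
  exact hs.imp₂ (fun _ _ h1 h2 => lt_of_le_of_ne h1 h2) hn

lemma partsDesc_mk {n : ℕ} (L : List ℕ) (h : L.Pairwise (· > ·))
    (h1 : ∀ {i : ℕ}, i ∈ (L : Multiset ℕ) → 0 < i) (h2 : (L : Multiset ℕ).sum = n) :
    partsDesc (⟨(L : Multiset ℕ), h1, h2⟩ : Nat.Partition n) = L := by
  have hperm : (Multiset.sort (L : Multiset ℕ) (· ≤ ·)).Perm L.reverse := by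
    rw [← Multiset.coe_eq_coe, Multiset.sort_eq, Multiset.coe_reverse]
  have hs2 : L.reverse.Pairwise (· ≤ ·) := by
    rw [List.pairwise_reverse]
    exact h.imp (fun hab => le_of_lt hab)
  have hsort : Multiset.sort (L : Multiset ℕ) (· ≤ ·) = L.reverse :=
    List.Perm.eq_of_pairwise' (Multiset.pairwise_sort _ _) hs2 hperm
  simp [partsDesc, hsort]

lemma sorted_getD {L : List ℕ} (h : L.Pairwise (· > ·)) {i k : ℕ} (hik : i < k)
    (hk : k < L.length) : L.getD k 0 < L.getD i 0 := by
  rw [getD_eq (lt_trans hik hk), getD_eq hk]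
  exact List.pairwise_iff_getElem.1 h i k (lt_trans hik hk) hk hik

lemma ge_b {a b x : ℕ} (hb : 1 ≤ b) (hab : b ≤ a) (hx : 0 < x) (h : x % a = b % a) :
    b ≤ x := by
  by_contra hlt
  push_neg at hlt
  have hxa : x < a := lt_of_lt_of_le hlt hab
  rw [Nat.mod_eq_of_lt hxa] at h
  rcases Nat.lt_or_ge b a with h1 | h1
  · rw [Nat.mod_eq_of_lt h1] at h; omega
  · have hba : b = a := le_antisymm hab h1
    subst hba
    simp at h; omega

lemma dvd_sub_of_mod_eq {a x y : ℕ} (hxy : y ≤ x) (hx : x % a = y % a) : a ∣ x - y := by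
  have : y ≡ x [MOD a] := hx.symm
  exact (Nat.modEq_iff_dvd' hxy).1 this

lemma eq_b {a b x : ℕ} (hb : 1 ≤ b) (hab : b ≤ a) (hx : 0 < x) (h : x % a = b % a)
    (hlt : x < a + b) : x = b := by
  have h1 : b ≤ x := ge_b hb hab hx h
  have h2 : a ∣ x - b := dvd_sub_of_mod_eq h1 h
  have h3 : x - b < a := by omega
  have h4 : x - b = 0 := Nat.eq_zero_of_dvd_of_lt h2 h3
  omega

lemma ge_add_a {a b x y : ℕ} (hx : x % a = b % a) (hy : y % a = b % a) (hlt : y < x)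
    (hne : x ≠ y + a) (ha : 0 < a) : y + 2 * a ≤ x := by
  have h1 : a ∣ x - y := dvd_sub_of_mod_eq (le_of_lt hlt) (hx.trans hy.symm)
  obtain ⟨k, hk⟩ := h1
  have hk1 : k ≠ 0 := by rintro rfl; omega
  have hk2 : k ≠ 1 := by rintro rfl; omega
  have : 2 ≤ k := by omega
  have := Nat.mul_le_mul_left a this
  omega

lemma part_pos {n : ℕ} {P : Nat.Partition n} {i : ℕ}
    (hi : i < (partsDesc P).length) : 0 < (partsDesc P).getD i 0 := by
  rw [getD_eq hi]
  exact P.parts_pos (mem_partsDesc.1 (List.getElem_mem hi))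

lemma part_mod {a b n : ℕ} {P : Nat.Partition n}
    (hmod : ∀ x ∈ P.parts, x % a = b % a) {i : ℕ} (hi : i < (partsDesc P).length) :
    (partsDesc P).getD i 0 % a = b % a := by
  rw [getD_eq hi]
  exact hmod _ (mem_partsDesc.1 (List.getElem_mem hi))

lemma part_ge_b {a b n : ℕ} (hb : 1 ≤ b) (hab : b ≤ a) {P : Nat.Partition n}
    (hmod : ∀ x ∈ P.parts, x % a = b % a) {i : ℕ} (hi : i < (partsDesc P).length) :
    b ≤ (partsDesc P).getD i 0 :=
  ge_b hb hab (part_pos hi) (part_mod hmod hi)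

lemma gap_chain {L : List ℕ} {a j : ℕ}
    (h : ∀ i, i + 1 < j → L.getD i 0 = L.getD (i + 1) 0 + a) :
    ∀ d i, i + d < j → L.getD i 0 = L.getD (i + d) 0 + a * d := by
  intro d
  induction d with
  | zero => intro i _; simp
  | succ d ih =>
    intro i hi
    have h1 : L.getD i 0 = L.getD (i + 1) 0 + a := h i (by omega)
    have h2 : L.getD (i + 1) 0 = L.getD (i + 1 + d) 0 + a * d := ih (i + 1) (by omega)
    rw [h1, h2, show i + 1 + d = i + (d + 1) by omega]
    ring

lemma list_sum_eq : ∀ (L : List ℕ), L.sum = ∑ i ∈ Finset.range L.length, L.getD i 0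
  | [] => by simp
  | x :: xs => by
    rw [List.sum_cons, list_sum_eq xs, List.length_cons, Finset.sum_range_succ']
    simp [List.getD_cons_succ, List.getD_cons_zero]
    omega

lemma nsum_lower {a b j n : ℕ} (hb : 1 ≤ b) (hab : b ≤ a) {Q : Nat.Partition n}
    (hQ : Q ∈ Dj a b (j + 1) n) :
    (∑ i ∈ Finset.range (j + 1), (b + a * (j - i))) ≤ n := by
  obtain ⟨⟨hnd, hmod⟩, hcard, hgap⟩ := mem_Dj.1 hQ
  set M := partsDesc Q with hM
  have hlen : j + 1 ≤ M.length := by rw [hM, length_partsDesc]; exact hcard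
  have hsum : M.sum = n := sum_partsDesc Q
  have h1 : (∑ i ∈ Finset.range (j + 1), M.getD i 0) ≤ M.sum := by
    rw [list_sum_eq M]
    exact Finset.sum_le_sum_of_subset (Finset.range_subset_range.2 hlen)
  have h2 : ∀ i ∈ Finset.range (j + 1), b + a * (j - i) ≤ M.getD i 0 := by
    intro i hi
    rw [Finset.mem_range] at hi
    have hij : i ≤ j := by omega
    have hchain := gap_chain hgap (j - i) i (by omega)
    rw [show i + (j - i) = j by omega] at hchain
    have hMj : b ≤ M.getD j 0 := part_ge_b (i := j) hb hab hmod (by rw [← hM]; omega)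
    calc b + a * (j - i) ≤ M.getD j 0 + a * (j - i) := Nat.add_le_add_right hMj _
    _ = M.getD i 0 := hchain.symm
  calc (∑ i ∈ Finset.range (j + 1), (b + a * (j - i)))
      ≤ ∑ i ∈ Finset.range (j + 1), M.getD i 0 := Finset.sum_le_sum h2
  _ ≤ M.sum := h1
  _ = n := hsum

lemma key_lower {a b j n : ℕ} (hb : 1 ≤ b) (hab : b ≤ a) (hj : 1 ≤ j)
    (hne : (Dj a b (j + 1) n).Nonempty) {P : Nat.Partition n}
    (hP : P ∈ Dj a b j n) (hP' : P ∉ Dj a b (j + 1) n) :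
    a + b ≤ (partsDesc P).getD (j - 1) 0 := by
  obtain ⟨⟨hnd, hmod⟩, hcard, hgap⟩ := mem_Dj.1 hP
  set L := partsDesc P with hL
  have hlen : j ≤ L.length := by rw [hL, length_partsDesc]; exact hcard
  have hj1 : j - 1 < L.length := by omega
  by_contra hlt
  push_neg at hlt
  have heq : L.getD (j - 1) 0 = b :=
    eq_b hb hab (part_pos hj1) (part_mod hmod hj1) hlt
  -- first, L has exactly j parts
  have hlenj : L.length = j := by
    by_contra hne2
    have hjlen : j < L.length := by omega
    have h1 : L.getD j 0 < L.getD (j - 1) 0 := sorted_getD (partsDesc_sorted P hnd) (by omega) hjlen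
    have h2 : b ≤ L.getD j 0 := part_ge_b hb hab hmod hjlen
    omega
  -- so n is the sum of the arithmetic progression
  have hsum : n = ∑ i ∈ Finset.range j, (b + a * (j - 1 - i)) := by
    have h1 : L.sum = n := sum_partsDesc P
    rw [← h1, list_sum_eq L, hlenj]
    apply Finset.sum_congr rfl
    intro i hi
    rw [Finset.mem_range] at hi
    have hchain := gap_chain hgap (j - 1 - i) i (by omega)
    rw [show i + (j - 1 - i) = j - 1 by omega, heq] at hchain
    exact hchain
  obtain ⟨Q, hQ⟩ := hne
  have hlow := nsum_lower hb hab hQ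
  rw [Finset.sum_range_succ] at hlow
  simp only [Nat.sub_self, Nat.mul_zero, Nat.add_zero] at hlow
  have hstep : (∑ i ∈ Finset.range j, (b + a * (j - i)))
      = (∑ i ∈ Finset.range j, (b + a * (j - 1 - i))) + a * j := by
    have h3 : ∀ i ∈ Finset.range j, b + a * (j - i) = (b + a * (j - 1 - i)) + a := by
      intro i hi
      rw [Finset.mem_range] at hi
      rw [show j - i = (j - 1 - i) + 1 by omega, Nat.mul_succ]
      ring
    rw [Finset.sum_congr rfl h3, Finset.sum_add_distrib, Finset.sum_const, Finset.card_range,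
      smul_eq_mul, Nat.mul_comm j a]
  rw [hstep, ← hsum] at hlow
  -- hlow : n + a * j + b ≤ n
  set m := a * j with hm
  omega


lemma patch_length (f : ℕ → ℕ) (L : List ℕ) (j : ℕ) :
    ((L.take j).map f ++ L.drop j).length = L.length := by
  simp only [List.length_append, List.length_map, List.length_take, List.length_drop]
  omega

lemma patch_getElem? (f : ℕ → ℕ) (L : List ℕ) {j : ℕ} (hj : j ≤ L.length) (i : ℕ) :
    ((L.take j).map f ++ L.drop j)[i]? = if i < j then (L[i]?).map f else L[i]? := by
  rw [List.getElem?_append]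
  simp only [List.length_map, List.length_take, List.getElem?_map, List.getElem?_take,
    List.getElem?_drop]
  rcases Nat.lt_or_ge i j with h | h
  · simp [Nat.min_eq_left hj, h]
  · simp [Nat.min_eq_left hj, Nat.not_lt.2 h, show j + (i - j) = i by omega]

lemma patch_getD (f : ℕ → ℕ) (L : List ℕ) {j : ℕ} (hj : j ≤ L.length) (i : ℕ) :
    ((L.take j).map f ++ L.drop j).getD i 0 = if i < j then f (L.getD i 0) else L.getD i 0 := by
  rw [List.getD_eq_getElem?_getD, patch_getElem? f L hj i, List.getD_eq_getElem?_getD]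
  rcases Nat.lt_or_ge i j with h | h
  · have hi : i < L.length := lt_of_lt_of_le h hj
    simp [h, List.getElem?_eq_getElem hi]
  · simp [Nat.not_lt.2 h]

lemma mapIdx_id' : ∀ (L : List ℕ), L.mapIdx (fun _ x => x) = L
  | [] => by simp
  | x :: xs => by rw [List.mapIdx_cons]; exact congrArg (x :: ·) (mapIdx_id' xs)

lemma mapIdx_ite (g : ℕ → ℕ) (j : ℕ) (L : List ℕ) :
    L.mapIdx (fun i x => if i < j then g x else x) = (L.take j).map g ++ L.drop j := by
  induction L generalizing j with
  | nil => simp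
  | cons x xs ih =>
    cases j with
    | zero =>
      simp only [Nat.not_lt_zero, if_false, List.take_zero, List.map_nil, List.nil_append,
        List.drop_zero]
      exact mapIdx_id' _
    | succ j =>
      rw [List.mapIdx_cons]
      simp only [Nat.add_lt_add_iff_right, Nat.zero_lt_succ, if_true]
      rw [ih j, List.take_succ_cons, List.drop_succ_cons, List.map_cons, List.cons_append]

lemma sum_map_sub (a : ℕ) : ∀ (T : List ℕ), (∀ x ∈ T, a ≤ x) →
    (T.map (fun x => x - a)).sum + a * T.length = T.sum
  | [], _ => by simp
  | x :: xs, h => by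
    have hx : a ≤ x := h x List.mem_cons_self
    have ih := sum_map_sub a xs (fun y hy => h y (List.mem_cons_of_mem x hy))
    simp only [List.map_cons, List.sum_cons, List.length_cons, Nat.mul_succ]
    omega

lemma sum_map_add (a : ℕ) : ∀ (T : List ℕ),
    (T.map (fun x => x + a)).sum = T.sum + a * T.length
  | [] => by simp
  | x :: xs => by
    have ih := sum_map_add a xs
    simp only [List.map_cons, List.sum_cons, List.length_cons, Nat.mul_succ]
    omega

lemma mem_take_bound {L : List ℕ} {j : ℕ} (hj : j ≤ L.length) {c : ℕ}
    (h : ∀ i, i < j → c ≤ L.getD i 0) : ∀ x ∈ L.take j, c ≤ x := by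
  intro x hx
  obtain ⟨i, hi, hix⟩ := List.mem_iff_getElem.1 hx
  have hij : i < j := by
    have h0 := hi
    rw [List.length_take] at h0
    exact lt_of_lt_of_le h0 (min_le_left _ _)
  have h1 : (L.take j)[i]? = some x := by
    rw [List.getElem?_eq_getElem hi]; exact congrArg some hix
  rw [List.getElem?_take, if_pos hij] at h1
  have h2 : L.getD i 0 = x := by rw [List.getD_eq_getElem?_getD, h1]; rfl
  rw [← h2]; exact h i hij

lemma pairwise_gt_of_getD {L : List ℕ}
    (h : ∀ i k, i < k → k < L.length → L.getD k 0 < L.getD i 0) :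
    L.Pairwise (· > ·) := by
  rw [List.pairwise_iff_getElem]
  intro i k hi hk hik
  have := h i k hik hk
  rwa [getD_eq hi, getD_eq hk] at this

lemma fwd_spec {a b j n : ℕ} (hb : 1 ≤ b) (hab : b ≤ a) (hj : 1 ≤ j)
    (hne : (Dj a b (j + 1) n).Nonempty) {P : Nat.Partition n}
    (hP : P ∈ Dj a b j n) (hP' : P ∉ Dj a b (j + 1) n) :
    ∃ Q : Nat.Partition (n - a * j), Q ∈ Dj a b j (n - a * j) ∧
      partsDesc Q = ((partsDesc P).take j).map (fun x => x - a) ++ (partsDesc P).drop j := by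
  obtain ⟨⟨hnd, hmod⟩, hcard, hgap⟩ := mem_Dj.1 hP
  have hlen : j ≤ (partsDesc P).length := by rw [length_partsDesc]; exact hcard
  have hsort := partsDesc_sorted P hnd
  have key := key_lower hb hab hj hne hP hP'
  have hlow : ∀ i, i < j → a + b ≤ (partsDesc P).getD i 0 := by
    intro i hi
    have hchain := gap_chain hgap (j - 1 - i) i (by omega)
    rw [show i + (j - 1 - i) = j - 1 by omega] at hchain
    calc a + b ≤ (partsDesc P).getD (j - 1) 0 := key
      _ ≤ (partsDesc P).getD (j - 1) 0 + a * (j - 1 - i) := Nat.le_add_right _ _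
      _ = (partsDesc P).getD i 0 := hchain.symm
  have hgapbig : j < (partsDesc P).length →
      (partsDesc P).getD j 0 + 2 * a ≤ (partsDesc P).getD (j - 1) 0 := by
    intro hjlen
    have hlt : (partsDesc P).getD j 0 < (partsDesc P).getD (j - 1) 0 :=
      sorted_getD hsort (by omega) hjlen
    have hne2 : (partsDesc P).getD (j - 1) 0 ≠ (partsDesc P).getD j 0 + a := by
      intro heq
      apply hP'
      rw [mem_Dj]
      refine ⟨⟨hnd, hmod⟩, by rw [← length_partsDesc]; omega, ?_⟩
      intro i hi
      rcases Nat.lt_or_ge (i + 1) j with h | h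
      · exact hgap i h
      · have hi' : i = j - 1 := by omega
        subst hi'
        rw [show j - 1 + 1 = j by omega]
        exact heq
    exact ge_add_a (part_mod hmod (by omega)) (part_mod hmod hjlen) hlt hne2 (by omega)
  set L' := ((partsDesc P).take j).map (fun x => x - a) ++ (partsDesc P).drop j with hL'
  have hlen' : L'.length = (partsDesc P).length := patch_length _ _ _
  have hget : ∀ i, L'.getD i 0 =
      if i < j then (partsDesc P).getD i 0 - a else (partsDesc P).getD i 0 :=
    fun i => patch_getD _ _ hlen i
  have hsort' : L'.Pairwise (· > ·) := by
    apply pairwise_gt_of_getD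
    intro i k hik hk
    rw [hlen'] at hk
    rw [hget, hget]
    rcases Nat.lt_or_ge k j with hkj | hkj
    · have h1 : (partsDesc P).getD k 0 < (partsDesc P).getD i 0 :=
        sorted_getD hsort hik (lt_of_lt_of_le hkj hlen)
      have h2 := hlow k hkj
      rw [if_pos (lt_trans hik hkj), if_pos hkj]
      omega
    · rcases Nat.lt_or_ge i j with hij | hij
      · have h1 : (partsDesc P).getD k 0 ≤ (partsDesc P).getD j 0 := by
          rcases Nat.eq_or_lt_of_le hkj with h | h
          · rw [← h]
          · exact le_of_lt (sorted_getD hsort h hk)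
        have h2 := hgapbig (by omega)
        have h3 : (partsDesc P).getD (j - 1) 0 ≤ (partsDesc P).getD i 0 := by
          rcases Nat.lt_or_ge i (j - 1) with h | h
          · exact le_of_lt (sorted_getD hsort h (by omega))
          · rw [show i = j - 1 by omega]
        rw [if_pos hij, if_neg (Nat.not_lt.2 hkj)]
        omega
      · have h1 : (partsDesc P).getD k 0 < (partsDesc P).getD i 0 := sorted_getD hsort hik hk
        rw [if_neg (Nat.not_lt.2 hkj), if_neg (Nat.not_lt.2 hij)]
        omega
  have hpos' : ∀ x ∈ L', 0 < x := by
    intro x hx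
    obtain ⟨i, hi, hix⟩ := List.mem_iff_getElem.1 hx
    rw [← getD_eq hi, hget] at hix
    rw [hlen'] at hi
    rcases Nat.lt_or_ge i j with h | h
    · rw [if_pos h] at hix
      have := hlow i h
      omega
    · rw [if_neg (Nat.not_lt.2 h)] at hix
      have := part_pos (P := P) hi
      omega
  have hmod' : ∀ x ∈ L', x % a = b % a := by
    intro x hx
    obtain ⟨i, hi, hix⟩ := List.mem_iff_getElem.1 hx
    rw [← getD_eq hi, hget] at hix
    rw [hlen'] at hi
    rcases Nat.lt_or_ge i j with h | h
    · rw [if_pos h] at hix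
      have h1 := hlow i h
      have h2 := part_mod hmod hi
      rw [← hix]
      have h3 : (partsDesc P).getD i 0 - a + a = (partsDesc P).getD i 0 := by omega
      calc ((partsDesc P).getD i 0 - a) % a
          = ((partsDesc P).getD i 0 - a + a) % a := (Nat.add_mod_right _ _).symm
        _ = b % a := by rw [h3]; exact h2
    · rw [if_neg (Nat.not_lt.2 h)] at hix
      rw [← hix]
      exact part_mod hmod hi
  have hsum' : L'.sum + a * j = n := by
    have h2 := sum_map_sub a ((partsDesc P).take j)
      (mem_take_bound hlen (fun i hi => le_trans (Nat.le_add_right a b) (hlow i hi)))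
    have htl : ((partsDesc P).take j).length = j := by
      rw [List.length_take]; exact Nat.min_eq_left hlen
    rw [htl] at h2
    have h3 : L'.sum = (((partsDesc P).take j).map (fun x => x - a)).sum
        + ((partsDesc P).drop j).sum := by rw [hL', List.sum_append]
    have h4 := List.sum_take_add_sum_drop (partsDesc P) j
    have h5 : (partsDesc P).sum = n := sum_partsDesc P
    omega
  have hsum'' : (L' : Multiset ℕ).sum = n - a * j := by
    rw [Multiset.sum_coe]; omega
  refine ⟨⟨(L' : Multiset ℕ), fun {i} hi => hpos' _ (Multiset.mem_coe.1 hi), hsum''⟩, ?_, ?_⟩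
  · rw [mem_Dj]
    rw [partsDesc_mk L' hsort' _ _]
    refine ⟨⟨Multiset.coe_nodup.2 (hsort'.imp (fun h => ne_of_gt h)),
      fun x hx => hmod' x (Multiset.mem_coe.1 hx)⟩, ?_, ?_⟩
    · show j ≤ Multiset.card (L' : Multiset ℕ)
      rw [Multiset.coe_card, hlen']
      exact hlen
    · intro i hi
      rw [hget, hget, if_pos (by omega : i < j), if_pos hi]
      have h1 := hgap i hi
      have h2 := hlow (i + 1) hi
      omega
  · exact partsDesc_mk L' hsort' _ _

lemma bwd_spec {a b j n : ℕ} (hb : 1 ≤ b) (hab : b ≤ a) (hj : 1 ≤ j)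
    (han : b + a * j ≤ n) {Q : Nat.Partition (n - a * j)}
    (hQ : Q ∈ Dj a b j (n - a * j)) :
    ∃ P : Nat.Partition n, (P ∈ Dj a b j n ∧ P ∉ Dj a b (j + 1) n) ∧
      partsDesc P = ((partsDesc Q).take j).map (fun x => x + a) ++ (partsDesc Q).drop j := by
  obtain ⟨⟨hnd, hmod⟩, hcard, hgap⟩ := mem_Dj.1 hQ
  have hlen : j ≤ (partsDesc Q).length := by rw [length_partsDesc]; exact hcard
  have hsort := partsDesc_sorted Q hnd
  set M' := ((partsDesc Q).take j).map (fun x => x + a) ++ (partsDesc Q).drop j with hM'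
  have hlen' : M'.length = (partsDesc Q).length := patch_length _ _ _
  have hget : ∀ i, M'.getD i 0 =
      if i < j then (partsDesc Q).getD i 0 + a else (partsDesc Q).getD i 0 :=
    fun i => patch_getD _ _ hlen i
  have hsort' : M'.Pairwise (· > ·) := by
    apply pairwise_gt_of_getD
    intro i k hik hk
    rw [hlen'] at hk
    rw [hget, hget]
    rcases Nat.lt_or_ge k j with hkj | hkj
    · have h1 : (partsDesc Q).getD k 0 < (partsDesc Q).getD i 0 :=
        sorted_getD hsort hik (lt_of_lt_of_le hkj hlen)
      rw [if_pos (lt_trans hik hkj), if_pos hkj]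
      omega
    · rcases Nat.lt_or_ge i j with hij | hij
      · have h1 : (partsDesc Q).getD k 0 < (partsDesc Q).getD (j - 1) 0 :=
          sorted_getD hsort (by omega) hk
        have h3 : (partsDesc Q).getD (j - 1) 0 ≤ (partsDesc Q).getD i 0 := by
          rcases Nat.lt_or_ge i (j - 1) with h | h
          · exact le_of_lt (sorted_getD hsort h (by omega))
          · rw [show i = j - 1 by omega]
        rw [if_pos hij, if_neg (Nat.not_lt.2 hkj)]
        omega
      · have h1 : (partsDesc Q).getD k 0 < (partsDesc Q).getD i 0 := sorted_getD hsort hik hk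
        rw [if_neg (Nat.not_lt.2 hkj), if_neg (Nat.not_lt.2 hij)]
        omega
  have hpos' : ∀ x ∈ M', 0 < x := by
    intro x hx
    obtain ⟨i, hi, hix⟩ := List.mem_iff_getElem.1 hx
    rw [← getD_eq hi, hget] at hix
    rw [hlen'] at hi
    have := part_pos (P := Q) hi
    rcases Nat.lt_or_ge i j with h | h
    · rw [if_pos h] at hix; omega
    · rw [if_neg (Nat.not_lt.2 h)] at hix; omega
  have hmod' : ∀ x ∈ M', x % a = b % a := by
    intro x hx
    obtain ⟨i, hi, hix⟩ := List.mem_iff_getElem.1 hx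
    rw [← getD_eq hi, hget] at hix
    rw [hlen'] at hi
    have h2 := part_mod hmod hi
    rcases Nat.lt_or_ge i j with h | h
    · rw [if_pos h] at hix
      rw [← hix, Nat.add_mod_right]
      exact h2
    · rw [if_neg (Nat.not_lt.2 h)] at hix
      rw [← hix]
      exact h2
  have hsum' : M'.sum = n := by
    have h2 := sum_map_add a ((partsDesc Q).take j)
    have htl : ((partsDesc Q).take j).length = j := by
      rw [List.length_take]; exact Nat.min_eq_left hlen
    rw [htl] at h2
    have h3 : M'.sum = (((partsDesc Q).take j).map (fun x => x + a)).sum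
        + ((partsDesc Q).drop j).sum := by rw [hM', List.sum_append]
    have h4 := List.sum_take_add_sum_drop (partsDesc Q) j
    have h5 : (partsDesc Q).sum = n - a * j := sum_partsDesc Q
    omega
  have hsum'' : (M' : Multiset ℕ).sum = n := by rw [Multiset.sum_coe]; exact hsum'
  refine ⟨⟨(M' : Multiset ℕ), fun {i} hi => hpos' _ (Multiset.mem_coe.1 hi), hsum''⟩,
    ⟨?_, ?_⟩, ?_⟩
  · rw [mem_Dj]
    rw [partsDesc_mk M' hsort' _ _]
    refine ⟨⟨Multiset.coe_nodup.2 (hsort'.imp (fun h => ne_of_gt h)),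
      fun x hx => hmod' x (Multiset.mem_coe.1 hx)⟩, ?_, ?_⟩
    · show j ≤ Multiset.card (M' : Multiset ℕ)
      rw [Multiset.coe_card, hlen']
      exact hlen
    · intro i hi
      rw [hget, hget, if_pos (by omega : i < j), if_pos hi]
      have h1 := hgap i hi
      omega
  · intro hmem
    rw [mem_Dj] at hmem
    obtain ⟨_, hcard2, hgap2⟩ := hmem
    rw [partsDesc_mk M' hsort' _ _] at hgap2
    have hcard2' : j < (partsDesc Q).length := by
      rw [← hlen', ← Multiset.coe_card]
      exact hcard2
    have h1 := hgap2 (j - 1) (by omega)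
    rw [show j - 1 + 1 = j by omega] at h1
    rw [hget, hget, if_pos (by omega : j - 1 < j), if_neg (by omega : ¬ j < j)] at h1
    have h2 : (partsDesc Q).getD j 0 < (partsDesc Q).getD (j - 1) 0 :=
      sorted_getD hsort (by omega) hcard2'
    omega
  · exact partsDesc_mk M' hsort' _ _

lemma sub_then_add {a j : ℕ} {L : List ℕ} (hj : j ≤ L.length)
    (h : ∀ i, i < j → a ≤ L.getD i 0) :
    ((((L.take j).map (fun x => x - a) ++ L.drop j).take j).map (fun x => x + a)
      ++ ((L.take j).map (fun x => x - a) ++ L.drop j).drop j) = L := by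
  apply List.ext_getElem?
  intro i
  have hlen1 : ((L.take j).map (fun x => x - a) ++ L.drop j).length = L.length :=
    patch_length _ _ _
  rw [patch_getElem? _ _ (by rw [hlen1]; exact hj) i, patch_getElem? _ _ hj i]
  rcases Nat.lt_or_ge i j with hij | hij
  · rw [if_pos hij, if_pos hij]
    have hiL : i < L.length := lt_of_lt_of_le hij hj
    have ha : a ≤ L[i] := by rw [← getD_eq hiL]; exact h i hij
    rw [List.getElem?_eq_getElem hiL]
    simp only [Option.map_some]
    exact congrArg some (by omega)
  · rw [if_neg (Nat.not_lt.2 hij), if_neg (Nat.not_lt.2 hij)]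

lemma add_then_sub {a j : ℕ} {M : List ℕ} (hj : j ≤ M.length) :
    ((((M.take j).map (fun x => x + a) ++ M.drop j).take j).map (fun x => x - a)
      ++ ((M.take j).map (fun x => x + a) ++ M.drop j).drop j) = M := by
  apply List.ext_getElem?
  intro i
  have hlen1 : ((M.take j).map (fun x => x + a) ++ M.drop j).length = M.length :=
    patch_length _ _ _
  rw [patch_getElem? _ _ (by rw [hlen1]; exact hj) i, patch_getElem? _ _ hj i]
  rcases Nat.lt_or_ge i j with hij | hij
  · rw [if_pos hij, if_pos hij]
    have hiM : i < M.length := lt_of_lt_of_le hij hj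
    rw [List.getElem?_eq_getElem hiM]
    simp only [Option.map_some]
    exact congrArg some (by omega)
  · rw [if_neg (Nat.not_lt.2 hij), if_neg (Nat.not_lt.2 hij)]

end Stmt5Aux

open Stmt5Aux in
/-- Subtracting `a` from each of the first `j` parts is a bijection from
`D^j_{a,b}(n) \ D^{j+1}_{a,b}(n)` to `D^j_{a,b}(n - aj)`, provided `D^{j+1}_{a,b}(n)`
is nonempty. -/
theorem stmt5 (a b j n : ℕ) (hb : 1 ≤ b) (hab : b ≤ a) (hj : 1 ≤ j)
    (hne : (Dj a b (j + 1) n).Nonempty) :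
    ∃ e : {P : Nat.Partition n // P ∈ Dj a b j n ∧ P ∉ Dj a b (j + 1) n} ≃
        {Q : Nat.Partition (n - a * j) // Q ∈ Dj a b j (n - a * j)},
      ∀ P, partsDesc (e P).1 =
        (partsDesc P.1).mapIdx (fun i x => if i < j then x - a else x) := by
  classical
  have han : b + a * j ≤ n := by
    obtain ⟨R, hR⟩ := hne
    have h1 := nsum_lower hb hab hR
    have h2 : b + a * j ≤ ∑ i ∈ Finset.range (j + 1), (b + a * (j - i)) := by
      have h3 := Finset.single_le_sum (f := fun i => b + a * (j - i))
        (fun i _ => Nat.zero_le _) (Finset.mem_range.2 (Nat.succ_pos j))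
      simpa using h3
    omega
  have hFex : ∀ P : {P : Nat.Partition n // P ∈ Dj a b j n ∧ P ∉ Dj a b (j + 1) n},
      ∃ Q : Nat.Partition (n - a * j), Q ∈ Dj a b j (n - a * j) ∧
        partsDesc Q = ((partsDesc P.1).take j).map (fun x => x - a) ++ (partsDesc P.1).drop j :=
    fun P => fwd_spec hb hab hj hne P.2.1 P.2.2
  choose F hFmem hFdesc using hFex
  have hGex : ∀ Q : {Q : Nat.Partition (n - a * j) // Q ∈ Dj a b j (n - a * j)},
      ∃ P : Nat.Partition n, (P ∈ Dj a b j n ∧ P ∉ Dj a b (j + 1) n) ∧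
        partsDesc P = ((partsDesc Q.1).take j).map (fun x => x + a) ++ (partsDesc Q.1).drop j :=
    fun Q => bwd_spec hb hab hj han Q.2
  choose G hGmem hGdesc using hGex
  refine ⟨⟨fun P => ⟨F P, hFmem P⟩, fun Q => ⟨G Q, hGmem Q⟩, ?_, ?_⟩, ?_⟩
  · intro P
    apply Subtype.ext
    apply partsDesc_inj
    show partsDesc (G ⟨F P, hFmem P⟩) = partsDesc P.1
    rw [hGdesc ⟨F P, hFmem P⟩]
    show ((partsDesc (F P)).take j).map (fun x => x + a) ++ (partsDesc (F P)).drop j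
      = partsDesc P.1
    rw [hFdesc P]
    obtain ⟨⟨hnd, hmod⟩, hcard, hgap⟩ := mem_Dj.1 P.2.1
    have hlen : j ≤ (partsDesc P.1).length := by rw [length_partsDesc]; exact hcard
    have key := key_lower hb hab hj hne P.2.1 P.2.2
    have hlow : ∀ i, i < j → a ≤ (partsDesc P.1).getD i 0 := by
      intro i hi
      have hchain := gap_chain hgap (j - 1 - i) i (by omega)
      rw [show i + (j - 1 - i) = j - 1 by omega] at hchain
      calc a ≤ (partsDesc P.1).getD (j - 1) 0 := by omega
        _ ≤ (partsDesc P.1).getD (j - 1) 0 + a * (j - 1 - i) := Nat.le_add_right _ _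
        _ = (partsDesc P.1).getD i 0 := hchain.symm
    exact sub_then_add hlen hlow
  · intro Q
    apply Subtype.ext
    apply partsDesc_inj
    show partsDesc (F ⟨G Q, hGmem Q⟩) = partsDesc Q.1
    rw [hFdesc ⟨G Q, hGmem Q⟩]
    show ((partsDesc (G Q)).take j).map (fun x => x - a) ++ (partsDesc (G Q)).drop j
      = partsDesc Q.1
    rw [hGdesc Q]
    obtain ⟨⟨hnd, hmod⟩, hcard, hgap⟩ := mem_Dj.1 Q.2
    have hlen : j ≤ (partsDesc Q.1).length := by rw [length_partsDesc]; exact hcard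
    exact add_then_sub hlen
  · intro P
    exact (hFdesc P).trans (mapIdx_ite (fun x => x - a) j (partsDesc P.1)).symm
end

section
/- Let a ≥ b ≥ 1, k ≥ 1, and n = Σ_{i=0}^{k−1}(ai + b). Then D^k_{a,b}(n) contains exactly one partition, namely λ with λ_i = a(k − i) + b for 1 ≤ i ≤ k. -/
lemma list_sum_eq_getD (l : List ℕ) : l.sum = ∑ i ∈ Finset.range l.length, l.getD i 0 := by
  induction l with
  | nil => simp
  | cons a l ih =>
    rw [List.sum_cons, List.length_cons, Finset.sum_range_succ', ih]
    simp [Nat.add_comm]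

lemma sum_map_range (g : ℕ → ℕ) (k : ℕ) :
    ((List.range k).map g).sum = ∑ i ∈ Finset.range k, g i := by
  induction k with
  | zero => simp
  | succ k ih =>
    rw [List.range_succ, List.map_append, List.sum_append, Finset.sum_range_succ, ih]
    simp

/-- If `n = Σ_{i=0}^{k-1} (a i + b)`, then `D^k_{a,b}(n)` contains exactly one
partition, the staircase `λ_i = a (k - i) + b` (for `1 ≤ i ≤ k`). -/
theorem stmt7 (a b k n : ℕ) (hb : 1 ≤ b) (hab : b ≤ a) (hk : 1 ≤ k)
    (hn : n = ∑ i ∈ Finset.range k, (a * i + b)) :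
    (Dj a b k n).card = 1 ∧
      ∀ P ∈ Dj a b k n, partsDesc P = (List.range k).map (fun i => a * (k - 1 - i) + b) := by
  have ha : 1 ≤ a := le_trans hb hab
  set f : ℕ → ℕ := fun i => a * (k - 1 - i) + b with hf
  set L : List ℕ := (List.range k).map f with hL
  have hLlen : L.length = k := by simp [hL]
  have hLget : ∀ i < k, L.getD i 0 = a * (k - 1 - i) + b := by
    intro i hi
    rw [List.getD_eq_getElem _ _ (by rw [hLlen]; exact hi)]
    simp [hL, hf]
  have hLsum : L.sum = n := by
    rw [hn, hL, sum_map_range, ← Finset.sum_range_reflect (fun i => a * i + b) k]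
  have hn' : n = k * b + a * ∑ i ∈ Finset.range k, i := by
    rw [hn, Finset.sum_add_distrib, ← Finset.mul_sum, Finset.sum_const, Finset.card_range,
      smul_eq_mul]
    ring
  -- uniqueness of the description
  have main : ∀ P ∈ Dj a b k n, partsDesc P = L := by
    intro P hP
    simp only [Dj, Dab, Finset.mem_filter] at hP
    obtain ⟨⟨-, hnd, hmod⟩, hcard, hgap⟩ := hP
    set l := partsDesc P with hl
    have hlen : l.length = Multiset.card P.parts := by
      simp [hl, partsDesc]
    have hmem : ∀ x ∈ l, x ∈ P.parts := by
      intro x hx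
      rw [hl, partsDesc, List.mem_reverse, Multiset.mem_sort] at hx
      exact hx
    have hsum : l.sum = n := by
      have h1 : (↑(P.parts.sort (· ≤ ·)) : Multiset ℕ).sum = P.parts.sum := by
        rw [Multiset.sort_eq]
      rw [hl, partsDesc, List.sum_reverse]
      rw [Multiset.sum_coe] at h1
      rw [h1, P.parts_sum]
    have hpos : ∀ x ∈ l, b ≤ x := by
      intro x hx
      have hxP := hmem x hx
      have hx0 := P.parts_pos hxP
      have hxm := hmod x hxP
      rcases Nat.lt_or_ge b a with h | h
      · rw [Nat.mod_eq_of_lt h] at hxm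
        calc b = x % a := hxm.symm
          _ ≤ x := Nat.mod_le x a
      · have hba : b = a := le_antisymm hab h
        rw [hba, Nat.mod_self] at hxm
        rw [hba]
        exact Nat.le_of_dvd hx0 (Nat.dvd_of_mod_eq_zero hxm)
    set m := l.getD (k - 1) 0 with hm
    have hkl : k ≤ l.length := hlen ▸ hcard
    have hmb : b ≤ m := by
      apply hpos
      rw [hm, List.getD_eq_getElem _ _ (by omega)]
      exact List.getElem_mem _
    have harith : ∀ j, j < k → l.getD (k - 1 - j) 0 = m + a * j := by
      intro j
      induction j with
      | zero => intro _; simp [hm]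
      | succ j ih =>
        intro hj
        have h1 : k - 1 - (j + 1) + 1 = k - 1 - j := by omega
        have h2 := hgap (k - 1 - (j + 1)) (by omega)
        rw [h2, h1, ih (by omega)]
        ring
    have hget : ∀ i < k, l.getD i 0 = m + a * (k - 1 - i) := by
      intro i hi
      have := harith (k - 1 - i) (by omega)
      rwa [show k - 1 - (k - 1 - i) = i by omega] at this
    have hsplit : n = (∑ i ∈ Finset.range k, l.getD i 0)
        + ∑ i ∈ Finset.Ico k l.length, l.getD i 0 := by
      rw [← hsum, list_sum_eq_getD, Finset.range_eq_Ico,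
        ← Finset.sum_Ico_consecutive _ (Nat.zero_le k) hkl, ← Finset.range_eq_Ico]
    have h1 : ∑ i ∈ Finset.range k, l.getD i 0
        = k * m + a * ∑ i ∈ Finset.range k, i := by
      rw [Finset.sum_congr rfl (fun i hi => hget i (Finset.mem_range.mp hi)),
        Finset.sum_add_distrib, ← Finset.mul_sum, Finset.sum_const, Finset.card_range,
        smul_eq_mul]
      have hT : ∑ i ∈ Finset.range k, (k - 1 - i) = ∑ i ∈ Finset.range k, i := by
        exact Finset.sum_range_reflect (fun i => i) k
      rw [hT]
    have htl : l.length - k ≤ ∑ i ∈ Finset.Ico k l.length, l.getD i 0 := by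
      have : ∀ i ∈ Finset.Ico k l.length, 1 ≤ l.getD i 0 := by
        intro i hi
        obtain ⟨-, hi2⟩ := Finset.mem_Ico.mp hi
        refine le_trans hb (hpos _ ?_)
        rw [List.getD_eq_getElem _ _ hi2]
        exact List.getElem_mem _
      calc l.length - k = ∑ _i ∈ Finset.Ico k l.length, 1 := by
            simp [Nat.card_Ico]
        _ ≤ _ := Finset.sum_le_sum this
    have hkm : k * b ≤ k * m := Nat.mul_le_mul_left k hmb
    have hmul : k * m = k * b := by omega
    have hm_b : m = b := Nat.eq_of_mul_eq_mul_left (by omega) hmul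
    have hlenk : l.length = k := by omega
    apply List.ext_getElem (by rw [hlenk, hLlen])
    intro i hi1 hi2
    have hik : i < k := by omega
    have e1 := hget i hik
    rw [List.getD_eq_getElem _ _ hi1] at e1
    have e2 := hLget i hik
    rw [List.getD_eq_getElem _ _ hi2] at e2
    rw [e1, e2, hm_b]
    omega
  -- the staircase partition
  have hLnodup : L.Nodup := by
    rw [hL]
    refine List.Nodup.map_on ?_ (List.nodup_range (n := k))
    intro x hx y hy hxy
    rw [List.mem_range] at hx hy
    simp only [hf] at hxy
    have : k - 1 - x = k - 1 - y := Nat.eq_of_mul_eq_mul_left ha (by omega)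
    omega
  let S : Nat.Partition n :=
    ⟨↑L, by
      intro x hx
      rw [Multiset.mem_coe, hL, List.mem_map] at hx
      obtain ⟨i, -, rfl⟩ := hx
      simp only [hf]
      omega, by rw [Multiset.sum_coe, hLsum]⟩
  have hSparts : S.parts = ↑L := rfl
  have hSdesc : partsDesc S = L := by
    have hsorted : L.reverse.Pairwise (· ≤ ·) := by
      rw [List.pairwise_reverse, hL]
      refine List.Pairwise.map f ?_ (List.pairwise_lt_range (n := k))
      intro x y hxy
      show f y ≤ f x
      simp only [hf]
      have : k - 1 - y ≤ k - 1 - x := by omega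
      exact Nat.add_le_add_right (Nat.mul_le_mul_left a this) b
    have hsort : (↑L : Multiset ℕ).sort (· ≤ ·) = L.reverse := by
      apply List.Perm.eq_of_pairwise' (Multiset.pairwise_sort _ _) hsorted ?_
      refine List.Perm.trans ?_ (List.reverse_perm L).symm
      rw [← Multiset.coe_eq_coe, Multiset.sort_eq]
    rw [partsDesc, hSparts, hsort, List.reverse_reverse]
  have hSmem : S ∈ Dj a b k n := by
    simp only [Dj, Dab, Finset.mem_filter]
    refine ⟨⟨Finset.mem_univ _, ?_, ?_⟩, ?_, ?_⟩
    · exact Multiset.coe_nodup.mpr hLnodup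
    · intro x hx
      rw [Multiset.mem_coe, hL, List.mem_map] at hx
      obtain ⟨i, -, rfl⟩ := hx
      simp only [hf]
      rw [Nat.mul_add_mod]
    · rw [Multiset.coe_card, hLlen]
    · intro i hi
      rw [hSdesc, hLget i (by omega), hLget (i + 1) hi]
      have h1 : k - 1 - i = k - 1 - (i + 1) + 1 := by omega
      rw [h1]
      ring
  refine ⟨?_, main⟩
  rw [Finset.card_eq_one]
  refine ⟨S, Finset.eq_singleton_iff_unique_mem.mpr ⟨hSmem, fun P hP => ?_⟩⟩
  have h := main P hP
  apply Nat.Partition.ext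
  calc P.parts = ↑(P.parts.sort (· ≤ ·)) := (Multiset.sort_eq _ _).symm
    _ = ↑((partsDesc P).reverse) := by rw [partsDesc, List.reverse_reverse]
    _ = ↑(L.reverse) := by rw [h]
    _ = ↑L := Multiset.coe_reverse L
    _ = S.parts := rfl
end

section
/- Let a ≥ b ≥ 1, d ≥ 2, j ≥ 1. If |D^{j+1}_{a,b}(n)| is not divisible by d and D^{j+1}_{a,b}(n) is nonempty, then |D^j_{a,b}(n − aj)| ≢ |D^j_{a,b}(n)| (mod d). -/
/-- Subtract `a` from the first `j` entries. -/
def shiftL (a : ℕ) : ℕ → List ℕ → List ℕ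
  | 0, L => L
  | _+1, [] => []
  | j+1, x :: L => (x - a) :: shiftL a j L

/-- Add `a` to the first `j` entries. -/
def unshiftL (a : ℕ) : ℕ → List ℕ → List ℕ
  | 0, L => L
  | _+1, [] => []
  | j+1, x :: L => (x + a) :: unshiftL a j L

lemma length_shiftL (a j : ℕ) (L : List ℕ) : (shiftL a j L).length = L.length := by
  induction j generalizing L with
  | zero => rfl
  | succ j ih => cases L with
    | nil => rfl
    | cons x T => simp [shiftL, ih]

lemma length_unshiftL (a j : ℕ) (L : List ℕ) : (unshiftL a j L).length = L.length := by
  induction j generalizing L with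
  | zero => rfl
  | succ j ih => cases L with
    | nil => rfl
    | cons x T => simp [unshiftL, ih]

lemma getD_shiftL_lt (a : ℕ) {j i : ℕ} (L : List ℕ) (h : i < j) :
    (shiftL a j L).getD i 0 = L.getD i 0 - a := by
  induction j generalizing L i with
  | zero => omega
  | succ j ih =>
    cases L with
    | nil => simp [shiftL]
    | cons x T =>
      cases i with
      | zero => simp [shiftL]
      | succ i => simpa [shiftL] using ih T (by omega)

lemma getD_shiftL_ge (a : ℕ) {j i : ℕ} (L : List ℕ) (h : j ≤ i) :
    (shiftL a j L).getD i 0 = L.getD i 0 := by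
  induction j generalizing L i with
  | zero => rfl
  | succ j ih =>
    cases L with
    | nil => simp [shiftL]
    | cons x T =>
      cases i with
      | zero => omega
      | succ i => simpa [shiftL] using ih T (by omega)

lemma getD_unshiftL_lt (a : ℕ) {j i : ℕ} (L : List ℕ) (h : i < j) (hl : i < L.length) :
    (unshiftL a j L).getD i 0 = L.getD i 0 + a := by
  induction j generalizing L i with
  | zero => omega
  | succ j ih =>
    cases L with
    | nil => simp at hl
    | cons x T =>
      cases i with
      | zero => simp [unshiftL]
      | succ i => simpa [unshiftL] using ih T (by omega) (by simpa using hl)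

lemma getD_unshiftL_ge (a : ℕ) {j i : ℕ} (L : List ℕ) (h : j ≤ i) :
    (unshiftL a j L).getD i 0 = L.getD i 0 := by
  induction j generalizing L i with
  | zero => rfl
  | succ j ih =>
    cases L with
    | nil => simp [unshiftL]
    | cons x T =>
      cases i with
      | zero => omega
      | succ i => simpa [unshiftL] using ih T (by omega)

lemma sum_unshiftL (a : ℕ) {j : ℕ} (L : List ℕ) (h : j ≤ L.length) :
    (unshiftL a j L).sum = L.sum + a * j := by
  induction j generalizing L with
  | zero => show L.sum = L.sum + a * 0; simp
  | succ j ih =>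
    cases L with
    | nil => simp at h
    | cons x T =>
      have := ih T (by simpa using h)
      simp only [unshiftL, List.sum_cons, this]
      ring

lemma shiftL_unshiftL (a j : ℕ) (L : List ℕ) : shiftL a j (unshiftL a j L) = L := by
  induction j generalizing L with
  | zero => rfl
  | succ j ih =>
    cases L with
    | nil => rfl
    | cons x T => simp [shiftL, unshiftL, ih]

lemma unshiftL_shiftL (a : ℕ) {j : ℕ} (L : List ℕ)
    (h : ∀ i, i < j → i < L.length → a ≤ L.getD i 0) :
    unshiftL a j (shiftL a j L) = L := by
  induction j generalizing L with
  | zero => rfl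
  | succ j ih =>
    cases L with
    | nil => rfl
    | cons x T =>
      have hx : a ≤ x := by simpa using h 0 (by omega) (by simp)
      simp only [shiftL, unshiftL]
      rw [ih T (fun i hi hl => by simpa using h (i+1) (by omega) (by simpa using hl))]
      congr 1
      omega

lemma sorted_getD_le {L : List ℕ} (h : L.Pairwise (· > ·)) {i k : ℕ} (hik : i ≤ k)
    (hk : k < L.length) : L.getD k 0 ≤ L.getD i 0 := by
  rcases eq_or_lt_of_le hik with rfl | hik
  · exact le_refl _
  · rw [List.getD_eq_getElem L 0 hk, List.getD_eq_getElem L 0 (hik.trans hk)]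
    exact le_of_lt (List.pairwise_iff_getElem.mp h i k (hik.trans hk) hk hik)

lemma list_sum_eq_sum_getD (L : List ℕ) :
    L.sum = ∑ i ∈ Finset.range L.length, L.getD i 0 := by
  induction L with
  | nil => simp
  | cons x T ih =>
    rw [List.sum_cons, List.length_cons, Finset.sum_range_succ', ih]
    simp [add_comm]

lemma coe_partsDesc {n : ℕ} (P : Nat.Partition n) : (↑(partsDesc P) : Multiset ℕ) = P.parts := by
  simp [partsDesc, Multiset.coe_reverse, Multiset.sort_eq]

lemma length_partsDesc {n : ℕ} (P : Nat.Partition n) :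
    (partsDesc P).length = Multiset.card P.parts := by
  rw [← coe_partsDesc P]; simp

lemma mem_partsDesc {n : ℕ} (P : Nat.Partition n) (x : ℕ) :
    x ∈ partsDesc P ↔ x ∈ P.parts := by
  rw [← coe_partsDesc P]; simp

lemma sorted_partsDesc {n : ℕ} (P : Nat.Partition n) :
    (partsDesc P).Pairwise (· ≥ ·) := by
  have := Multiset.pairwise_sort P.parts (· ≤ ·)
  rw [partsDesc, List.pairwise_reverse]
  exact this.imp (fun h => h)

lemma sorted_gt_partsDesc {n : ℕ} (P : Nat.Partition n) (hnd : P.parts.Nodup) :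
    (partsDesc P).Pairwise (· > ·) := by
  have h1 : (partsDesc P).Nodup := by
    rw [← Multiset.coe_nodup, coe_partsDesc]; exact hnd
  have h2 := sorted_partsDesc P
  exact (h2.and h1).imp (fun h => lt_of_le_of_ne h.1 (Ne.symm h.2))

def ofList (n : ℕ) (L : List ℕ) (hpos : ∀ x ∈ L, 0 < x) (hsum : L.sum = n) :
    Nat.Partition n :=
  ⟨(↑L : Multiset ℕ), fun hx => hpos _ hx, by simpa using hsum⟩

lemma parts_ofList (n : ℕ) (L : List ℕ) (hpos : ∀ x ∈ L, 0 < x) (hsum : L.sum = n) :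
    (ofList n L hpos hsum).parts = ↑L := rfl

lemma partsDesc_ofList (n : ℕ) (L : List ℕ) (hpos : ∀ x ∈ L, 0 < x) (hsum : L.sum = n)
    (hL : L.Pairwise (· ≥ ·)) : partsDesc (ofList n L hpos hsum) = L := by
  have hperm : (Multiset.sort (↑L : Multiset ℕ) (· ≤ ·)).Perm L.reverse := by
    rw [← Multiset.coe_eq_coe, Multiset.sort_eq, Multiset.coe_reverse]
  have hsorted : (L.reverse).Pairwise (· ≤ ·) := by
    rw [List.pairwise_reverse]
    exact hL.imp (fun h => h)
  have := List.Perm.eq_of_pairwise' (Multiset.pairwise_sort _ _) hsorted hperm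
  rw [partsDesc, parts_ofList, this, List.reverse_reverse]

lemma mem_Dj_iff {a b j n : ℕ} (P : Nat.Partition n) :
    P ∈ Dj a b j n ↔ P.parts.Nodup ∧ (∀ x ∈ P.parts, x % a = b % a) ∧
      j ≤ Multiset.card P.parts ∧
      (∀ i, i + 1 < j → (partsDesc P).getD i 0 = (partsDesc P).getD (i + 1) 0 + a) := by
  simp [Dj, Dab, Finset.mem_filter, and_assoc]

lemma mod_ge {a b x : ℕ} (hb : 1 ≤ b) (hab : b ≤ a) (hx : 0 < x) (hm : x % a = b % a) :
    b ≤ x := by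
  rcases eq_or_lt_of_le hab with rfl | hlt
  · have : b % b = 0 := Nat.mod_self b
    rw [this] at hm
    have : b ∣ x := Nat.dvd_of_mod_eq_zero hm
    exact Nat.le_of_dvd hx this
  · rw [Nat.mod_eq_of_lt hlt] at hm
    by_contra hc
    push_neg at hc
    rw [Nat.mod_eq_of_lt (hc.trans hlt)] at hm
    omega

lemma gap_dvd {a x y : ℕ} (hm : x % a = y % a) (hxy : y ≤ x) : a ∣ x - y := by
  exact (Nat.modEq_iff_dvd' hxy).mp (Nat.ModEq.symm hm)

lemma gap_ge {a x y : ℕ} (ha : 0 < a) (hxy : y < x) (hm : x % a = y % a) : y + a ≤ x := by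
  have hd : a ∣ x - y := gap_dvd hm hxy.le
  have := Nat.le_of_dvd (by omega) hd
  omega

lemma gap_ge2 {a x y : ℕ} (ha : 0 < a) (hxy : y < x) (hm : x % a = y % a)
    (hne : x ≠ y + a) : y + 2 * a ≤ x := by
  have hd : a ∣ x - y := gap_dvd hm hxy.le
  obtain ⟨c, hc⟩ := hd
  have hc0 : c ≠ 0 := by rintro rfl; omega
  have hc1 : c ≠ 1 := by rintro rfl; omega
  have : 2 ≤ c := by omega
  have : 2 * a ≤ a * c := by nlinarith
  omega

section bounds
variable {a b : ℕ} {L : List ℕ}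

lemma getD_mem (L : List ℕ) {i : ℕ} (h : i < L.length) : L.getD i 0 ∈ L := by
  rw [List.getD_eq_getElem L 0 h]; exact List.getElem_mem h

lemma getD_lower (hb : 1 ≤ b) (hab : b ≤ a)
    (hs : L.Pairwise (· > ·)) (hpos : ∀ x ∈ L, 0 < x) (hm : ∀ x ∈ L, x % a = b % a) :
    ∀ m i, i + m < L.length → b + a * m ≤ L.getD i 0 := by
  intro m
  induction m with
  | zero =>
    intro i hi
    have hil : i < L.length := by omega
    have := mod_ge hb hab (hpos _ (getD_mem L hil)) (hm _ (getD_mem L hil))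
    omega
  | succ m ih =>
    intro i hi
    have h1 : b + a * m ≤ L.getD (i + 1) 0 := ih (i + 1) (by omega)
    have hgt : L.getD (i + 1) 0 < L.getD i 0 := by
      rw [List.getD_eq_getElem L 0 (show i + 1 < L.length by omega),
        List.getD_eq_getElem L 0 (show i < L.length by omega)]
      exact List.pairwise_iff_getElem.mp hs i (i + 1) (by omega) (by omega) (by omega)
    have hgap : L.getD (i + 1) 0 + a ≤ L.getD i 0 :=
      gap_ge (by omega) hgt (by
        rw [hm _ (getD_mem L (show i < L.length by omega)),
          hm _ (getD_mem L (show i + 1 < L.length by omega))])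
    have : a * (m + 1) = a * m + a := by ring
    omega

lemma sum_lower (hb : 1 ≤ b) (hab : b ≤ a)
    (hs : L.Pairwise (· > ·)) (hpos : ∀ x ∈ L, 0 < x) (hm : ∀ x ∈ L, x % a = b % a) :
    ∑ i ∈ Finset.range L.length, (b + a * i) ≤ L.sum := by
  rw [list_sum_eq_sum_getD, ← Finset.sum_range_reflect]
  apply Finset.sum_le_sum
  intro i hi
  rw [Finset.mem_range] at hi
  exact getD_lower hb hab hs hpos hm (L.length - 1 - i) i (by omega)
end bounds

lemma Dj_facts {a b j n : ℕ} (P : Nat.Partition n) (hP : P ∈ Dj a b j n) :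
    (partsDesc P).Pairwise (· > ·) ∧ (∀ x ∈ partsDesc P, 0 < x) ∧
    (∀ x ∈ partsDesc P, x % a = b % a) ∧ j ≤ (partsDesc P).length ∧
    (∀ i, i + 1 < j → (partsDesc P).getD i 0 = (partsDesc P).getD (i + 1) 0 + a) ∧
    (partsDesc P).sum = n := by
  rw [mem_Dj_iff] at hP
  obtain ⟨hnd, hm, hcard, hgap⟩ := hP
  refine ⟨sorted_gt_partsDesc P hnd, ?_, ?_, ?_, hgap, ?_⟩
  · intro x hx; exact P.parts_pos ((mem_partsDesc P x).mp hx)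
  · intro x hx; exact hm x ((mem_partsDesc P x).mp hx)
  · rw [length_partsDesc]; exact hcard
  · have : (↑(partsDesc P) : Multiset ℕ).sum = P.parts.sum := by rw [coe_partsDesc]
    simpa using this.trans P.parts_sum

lemma n_lower {a b j n : ℕ} (hb : 1 ≤ b) (hab : b ≤ a)
    (hne : (Dj a b (j + 1) n).Nonempty) :
    ∑ i ∈ Finset.range (j + 1), (b + a * i) ≤ n := by
  obtain ⟨R, hR⟩ := hne
  obtain ⟨hs, hpos, hm, hlen, _, hsum⟩ := Dj_facts R hR
  calc ∑ i ∈ Finset.range (j + 1), (b + a * i)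
      ≤ ∑ i ∈ Finset.range (partsDesc R).length, (b + a * i) := by
        apply Finset.sum_le_sum_of_subset
        exact Finset.range_subset_range.mpr hlen
    _ ≤ (partsDesc R).sum := sum_lower hb hab hs hpos hm
    _ = n := hsum

lemma aj_le_n {a b j n : ℕ} (hb : 1 ≤ b) (hab : b ≤ a)
    (hne : (Dj a b (j + 1) n).Nonempty) : a * j ≤ n := by
  have h1 := n_lower hb hab hne
  have h2 : b + a * j ≤ ∑ i ∈ Finset.range (j + 1), (b + a * i) :=
    Finset.single_le_sum (f := fun i => b + a * i) (fun i _ => Nat.zero_le _)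
      (Finset.self_mem_range_succ j)
  omega

lemma key_bound {a b j n : ℕ} (hb : 1 ≤ b) (hab : b ≤ a) (hj : 1 ≤ j)
    (hne : (Dj a b (j + 1) n).Nonempty) {P : Nat.Partition n} (hP : P ∈ Dj a b j n) :
    a + b ≤ (partsDesc P).getD (j - 1) 0 := by
  obtain ⟨hs, hpos, hm, hlen, hgap, hsum⟩ := Dj_facts P hP
  set L := partsDesc P with hL
  have hjlen : j - 1 < L.length := by omega
  have hbase : b ≤ L.getD (j - 1) 0 := by
    have := getD_lower hb hab hs hpos hm 0 (j - 1) (by omega)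
    omega
  rcases eq_or_lt_of_le hbase with heq | hlt
  · -- bad case: L.getD (j-1) 0 = b; derive contradiction
    exfalso
    -- length is exactly j
    have hlenj : L.length = j := by
      by_contra hc
      have hjl : j < L.length := by omega
      have h1 : b ≤ L.getD j 0 := by
        have := getD_lower hb hab hs hpos hm 0 j (by omega)
        omega
      have h2 : L.getD j 0 < L.getD (j - 1) 0 := by
        rw [List.getD_eq_getElem L 0 hjl, List.getD_eq_getElem L 0 hjlen]
        exact List.pairwise_iff_getElem.mp hs (j - 1) j hjlen hjl (by omega)
      omega
    -- exact values
    have hvals : ∀ m, m ≤ j - 1 → L.getD (j - 1 - m) 0 = b + a * m := by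
      intro m
      induction m with
      | zero => intro _; simpa using heq.symm
      | succ m ih =>
        intro hmj
        have hprev := ih (by omega)
        have hi : (j - 1 - (m + 1)) + 1 < j := by omega
        have := hgap (j - 1 - (m + 1)) hi
        have he : (j - 1 - (m + 1)) + 1 = j - 1 - m := by omega
        rw [he] at this
        rw [this, hprev]
        ring
    have hsumval : L.sum = ∑ i ∈ Finset.range j, (b + a * i) := by
      rw [list_sum_eq_sum_getD, hlenj, ← Finset.sum_range_reflect]
      apply Finset.sum_congr rfl
      intro i hi
      rw [Finset.mem_range] at hi
      exact hvals i (by omega)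
    have hn1 := n_lower hb hab hne
    rw [Finset.sum_range_succ] at hn1
    rw [hsum] at hsumval
    omega
  · -- L.getD (j-1) 0 > b, so ≥ b + a
    have hmod : L.getD (j - 1) 0 % a = b % a := hm _ (getD_mem L hjlen)
    have := gap_ge (a := a) (by omega) hlt (by rw [hmod])
    omega

def trivPart (m : ℕ) : Nat.Partition m :=
  ⟨Multiset.replicate m 1, fun hi => by rw [Multiset.eq_of_mem_replicate hi]; omega,
   by simp [Multiset.sum_replicate]⟩

noncomputable def fP (a j : ℕ) {n : ℕ} (P : Nat.Partition n) : Nat.Partition (n - a * j) :=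
  if h : (∀ x ∈ shiftL a j (partsDesc P), 0 < x) ∧ (shiftL a j (partsDesc P)).sum = n - a * j
  then ofList _ _ h.1 h.2 else trivPart _

noncomputable def gP (a j n : ℕ) (Q : Nat.Partition (n - a * j)) : Nat.Partition n :=
  if h : (∀ x ∈ unshiftL a j (partsDesc Q), 0 < x) ∧ (unshiftL a j (partsDesc Q)).sum = n
  then ofList _ _ h.1 h.2 else trivPart _

lemma partsDesc_inj {n : ℕ} {P Q : Nat.Partition n} (h : partsDesc P = partsDesc Q) :
    P = Q := by
  apply Nat.Partition.ext
  rw [← coe_partsDesc P, ← coe_partsDesc Q, h]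

lemma sub_a_mod {a x : ℕ} (h : a ≤ x) : (x - a) % a = x % a := by
  conv_rhs => rw [← Nat.sub_add_cancel h]
  rw [Nat.add_mod_right]

lemma forward {a b j n : ℕ} (hb : 1 ≤ b) (hab : b ≤ a) (hj : 1 ≤ j)
    (hne : (Dj a b (j + 1) n).Nonempty) {P : Nat.Partition n}
    (hP : P ∈ Dj a b j n \ Dj a b (j + 1) n) :
    fP a j P ∈ Dj a b j (n - a * j) ∧ partsDesc (fP a j P) = shiftL a j (partsDesc P) := by
  obtain ⟨hP1, hP2⟩ := Finset.mem_sdiff.mp hP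
  obtain ⟨hs, hpos, hm, hlen, hgap, hsum⟩ := Dj_facts P hP1
  have hkey := key_bound hb hab hj hne hP1
  set L := partsDesc P with hLdef
  have ha : 1 ≤ a := le_trans hb hab
  have hjlen : j - 1 < L.length := by omega
  -- every one of the first j entries is ≥ a + b
  have hfirst : ∀ i, i < j → a + b ≤ L.getD i 0 := by
    intro i hi
    exact le_trans hkey (sorted_getD_le hs (by omega) hjlen)
  -- the (j-1)-th gap is ≥ 2a when there are more than j parts
  have hbig : j < L.length → L.getD j 0 + 2 * a ≤ L.getD (j - 1) 0 := by
    intro hjl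
    have hne' : L.getD (j - 1) 0 ≠ L.getD j 0 + a := by
      intro hcontra
      apply hP2
      rw [mem_Dj_iff]
      rw [mem_Dj_iff] at hP1
      obtain ⟨h1, h2, h3, h4⟩ := hP1
      refine ⟨h1, h2, ?_, ?_⟩
      · rw [← length_partsDesc, ← hLdef]; omega
      · intro i hi
        rcases lt_or_eq_of_le (show i + 1 ≤ j by omega) with hlt | heq
        · exact h4 i hlt
        · have : i = j - 1 := by omega
          rw [this]
          have : j - 1 + 1 = j := by omega
          rw [this]
          exact hcontra
    have hgt : L.getD j 0 < L.getD (j - 1) 0 := by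
      rw [List.getD_eq_getElem L 0 hjl, List.getD_eq_getElem L 0 hjlen]
      exact List.pairwise_iff_getElem.mp hs (j - 1) j hjlen hjl (by omega)
    exact gap_ge2 (by omega) hgt
      (by rw [hm _ (getD_mem L hjlen), hm _ (getD_mem L hjl)]) hne'
  set L' := shiftL a j L with hL'def
  have hlen' : L'.length = L.length := length_shiftL a j L
  -- getD description of L'
  have hgd : ∀ i, i < L.length →
      L'.getD i 0 = if i < j then L.getD i 0 - a else L.getD i 0 := by
    intro i _
    split
    · exact getD_shiftL_lt a L (by assumption)
    · exact getD_shiftL_ge a L (by omega)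
  have hpos' : ∀ x ∈ L', 0 < x := by
    intro x hx
    obtain ⟨i, hi, hxi⟩ := List.mem_iff_getElem.mp hx
    rw [← List.getD_eq_getElem L' 0 hi] at hxi
    rw [hlen'] at hi
    rw [hgd i hi] at hxi
    subst hxi
    split
    · have := hfirst i (by assumption); omega
    · exact hpos _ (getD_mem L hi)
  have hmod' : ∀ x ∈ L', x % a = b % a := by
    intro x hx
    obtain ⟨i, hi, hxi⟩ := List.mem_iff_getElem.mp hx
    rw [← List.getD_eq_getElem L' 0 hi] at hxi
    rw [hlen'] at hi
    rw [hgd i hi] at hxi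
    subst hxi
    split
    · rw [sub_a_mod (by have := hfirst i (by assumption); omega)]
      exact hm _ (getD_mem L hi)
    · exact hm _ (getD_mem L hi)
  have hstrict : ∀ i k, i < k → k < L.length → L.getD k 0 < L.getD i 0 := by
    intro i k hik hk
    rw [List.getD_eq_getElem L 0 hk, List.getD_eq_getElem L 0 (hik.trans hk)]
    exact List.pairwise_iff_getElem.mp hs i k (hik.trans hk) hk hik
  have hsorted' : L'.Pairwise (· > ·) := by
    rw [List.pairwise_iff_getElem]
    intro i k hi hk hik
    rw [← List.getD_eq_getElem L' 0 hi, ← List.getD_eq_getElem L' 0 hk]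
    rw [hlen'] at hi hk
    rw [hgd i hi, hgd k hk]
    have hlt := hstrict i k hik hk
    by_cases hkj : k < j
    · have h1 := hfirst k hkj
      simp only [if_pos (by omega : i < j), if_pos hkj]
      omega
    · by_cases hij : i < j
      · simp only [if_pos hij, if_neg hkj]
        -- i < j ≤ k
        have hjk : j ≤ k := by omega
        have hjl : j < L.length := by omega
        have h1 : L.getD (j - 1) 0 ≤ L.getD i 0 := sorted_getD_le hs (by omega) hjlen
        have h2 : L.getD k 0 ≤ L.getD j 0 := sorted_getD_le hs hjk hk
        have h3 := hbig hjl
        omega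
      · simp only [if_neg hij, if_neg hkj]
        exact hlt
  have hgaps' : ∀ i, i + 1 < j → L'.getD i 0 = L'.getD (i + 1) 0 + a := by
    intro i hi
    have h1 : i < L.length := by omega
    have h2 : i + 1 < L.length := by omega
    rw [hgd i h1, hgd (i + 1) h2, if_pos (by omega : i < j), if_pos hi]
    have h3 := hgap i hi
    have h4 := hfirst (i + 1) hi
    omega
  have hrec : unshiftL a j L' = L :=
    unshiftL_shiftL a L (fun i hi _ => by have := hfirst i hi; omega)
  have hsum' : L'.sum = n - a * j := by
    have h1 : (unshiftL a j L').sum = L'.sum + a * j :=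
      sum_unshiftL a L' (by omega)
    rw [hrec, hsum] at h1
    have := aj_le_n hb hab hne
    omega
  have hcond : (∀ x ∈ shiftL a j (partsDesc P), 0 < x) ∧
      (shiftL a j (partsDesc P)).sum = n - a * j := ⟨hpos', hsum'⟩
  have hfP : fP a j P = ofList _ _ hcond.1 hcond.2 := dif_pos hcond
  have hpd : partsDesc (fP a j P) = L' := by
    rw [hfP]
    exact partsDesc_ofList _ _ _ _ (hsorted'.imp le_of_lt)
  refine ⟨?_, hpd⟩
  rw [mem_Dj_iff]
  have hparts : (fP a j P).parts = (↑L' : Multiset ℕ) := by rw [hfP]; rfl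
  refine ⟨?_, ?_, ?_, ?_⟩
  · rw [hparts, Multiset.coe_nodup]
    exact List.Pairwise.imp (fun h => ne_of_gt h) hsorted'
  · intro x hx
    rw [hparts] at hx
    exact hmod' x (by simpa using hx)
  · rw [hparts]
    simp only [Multiset.coe_card]
    omega
  · intro i hi
    rw [hpd]
    exact hgaps' i hi

lemma backward {a b j n : ℕ} (hb : 1 ≤ b) (hab : b ≤ a) (hj : 1 ≤ j)
    (hne : (Dj a b (j + 1) n).Nonempty) {Q : Nat.Partition (n - a * j)}
    (hQ : Q ∈ Dj a b j (n - a * j)) :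
    gP a j n Q ∈ Dj a b j n \ Dj a b (j + 1) n ∧
      partsDesc (gP a j n Q) = unshiftL a j (partsDesc Q) := by
  obtain ⟨hs, hpos, hm, hlen, hgap, hsum⟩ := Dj_facts Q hQ
  set M := partsDesc Q with hMdef
  have ha : 1 ≤ a := le_trans hb hab
  set M' := unshiftL a j M with hM'def
  have hlen' : M'.length = M.length := length_unshiftL a j M
  have hgd : ∀ i, i < M.length →
      M'.getD i 0 = if i < j then M.getD i 0 + a else M.getD i 0 := by
    intro i hi
    split
    · exact getD_unshiftL_lt a M (by assumption) hi
    · exact getD_unshiftL_ge a M (by omega)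
  have hpos' : ∀ x ∈ M', 0 < x := by
    intro x hx
    obtain ⟨i, hi, hxi⟩ := List.mem_iff_getElem.mp hx
    rw [← List.getD_eq_getElem M' 0 hi] at hxi
    rw [hlen'] at hi
    rw [hgd i hi] at hxi
    subst hxi
    have := hpos _ (getD_mem M hi)
    split <;> omega
  have hmod' : ∀ x ∈ M', x % a = b % a := by
    intro x hx
    obtain ⟨i, hi, hxi⟩ := List.mem_iff_getElem.mp hx
    rw [← List.getD_eq_getElem M' 0 hi] at hxi
    rw [hlen'] at hi
    rw [hgd i hi] at hxi
    subst hxi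
    split
    · rw [Nat.add_mod_right]
      exact hm _ (getD_mem M hi)
    · exact hm _ (getD_mem M hi)
  have hstrict : ∀ i k, i < k → k < M.length → M.getD k 0 < M.getD i 0 := by
    intro i k hik hk
    rw [List.getD_eq_getElem M 0 hk, List.getD_eq_getElem M 0 (hik.trans hk)]
    exact List.pairwise_iff_getElem.mp hs i k (hik.trans hk) hk hik
  have hsorted' : M'.Pairwise (· > ·) := by
    rw [List.pairwise_iff_getElem]
    intro i k hi hk hik
    rw [← List.getD_eq_getElem M' 0 hi, ← List.getD_eq_getElem M' 0 hk]
    rw [hlen'] at hi hk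
    rw [hgd i hi, hgd k hk]
    have hlt := hstrict i k hik hk
    split <;> split <;> omega
  have hgaps' : ∀ i, i + 1 < j → M'.getD i 0 = M'.getD (i + 1) 0 + a := by
    intro i hi
    have h1 : i < M.length := by omega
    have h2 : i + 1 < M.length := by omega
    rw [hgd i h1, hgd (i + 1) h2, if_pos (by omega : i < j), if_pos hi]
    have := hgap i hi
    omega
  have hsum' : M'.sum = n := by
    have h1 : M'.sum = M.sum + a * j := sum_unshiftL a M hlen
    have := aj_le_n hb hab hne
    omega
  have hcond : (∀ x ∈ unshiftL a j (partsDesc Q), 0 < x) ∧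
      (unshiftL a j (partsDesc Q)).sum = n := ⟨hpos', hsum'⟩
  have hgP : gP a j n Q = ofList _ _ hcond.1 hcond.2 := dif_pos hcond
  have hpd : partsDesc (gP a j n Q) = M' := by
    rw [hgP]
    exact partsDesc_ofList _ _ _ _ (hsorted'.imp le_of_lt)
  refine ⟨Finset.mem_sdiff.mpr ⟨?_, ?_⟩, hpd⟩
  · rw [mem_Dj_iff]
    have hparts : (gP a j n Q).parts = (↑M' : Multiset ℕ) := by rw [hgP]; rfl
    refine ⟨?_, ?_, ?_, ?_⟩
    · rw [hparts, Multiset.coe_nodup]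
      exact List.Pairwise.imp (fun h => ne_of_gt h) hsorted'
    · intro x hx
      rw [hparts] at hx
      exact hmod' x (by simpa using hx)
    · rw [hparts]
      simp only [Multiset.coe_card]
      omega
    · intro i hi
      rw [hpd]
      exact hgaps' i hi
  · -- not in D^{j+1}
    intro hmem
    rw [mem_Dj_iff] at hmem
    obtain ⟨_, _, hcard, hgaps⟩ := hmem
    have hjlenM : j < M.length := by
      have : Multiset.card (gP a j n Q).parts = M'.length := by
        rw [← length_partsDesc, hpd]
      omega
    have hcontra := hgaps (j - 1) (by omega)
    rw [hpd] at hcontra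
    have he : j - 1 + 1 = j := by omega
    rw [he] at hcontra
    have h1 : M'.getD (j - 1) 0 = M.getD (j - 1) 0 + a :=
      getD_unshiftL_lt a M (by omega) (by omega)
    have h2 : M'.getD j 0 = M.getD j 0 := getD_unshiftL_ge a M (le_refl j)
    have h3 := hstrict (j - 1) j (by omega) hjlenM
    omega

lemma Dj_succ_subset {a b j n : ℕ} : Dj a b (j + 1) n ⊆ Dj a b j n := by
  intro P hP
  rw [mem_Dj_iff] at hP ⊢
  obtain ⟨h1, h2, h3, h4⟩ := hP
  exact ⟨h1, h2, by omega, fun i hi => h4 i (by omega)⟩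

lemma card_identity {a b j n : ℕ} (hb : 1 ≤ b) (hab : b ≤ a) (hj : 1 ≤ j)
    (hne : (Dj a b (j + 1) n).Nonempty) :
    (Dj a b j n).card = (Dj a b j (n - a * j)).card + (Dj a b (j + 1) n).card := by
  have hsub : Dj a b (j + 1) n ⊆ Dj a b j n := Dj_succ_subset
  have hcard : (Dj a b j n \ Dj a b (j + 1) n).card = (Dj a b j (n - a * j)).card := by
    apply Finset.card_bij' (fun P _ => fP a j P) (fun Q _ => gP a j n Q)
    · intro P hP
      exact (forward hb hab hj hne hP).1
    · intro Q hQ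
      exact (backward hb hab hj hne hQ).1
    · intro P hP
      obtain ⟨hmem, hpd⟩ := forward hb hab hj hne hP
      obtain ⟨hs, hpos, hm, hlen, hgap, hsum⟩ :=
        Dj_facts P (Finset.mem_sdiff.mp hP).1
      have hkey := key_bound hb hab hj hne (Finset.mem_sdiff.mp hP).1
      have hfirst : ∀ i, i < j → a + b ≤ (partsDesc P).getD i 0 := by
        intro i hi
        exact le_trans hkey (sorted_getD_le hs (by omega) (by omega))
      obtain ⟨_, hpd2⟩ := backward hb hab hj hne hmem
      apply partsDesc_inj
      rw [hpd2, hpd]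
      exact unshiftL_shiftL a _ (fun i hi _ => by have := hfirst i hi; omega)
    · intro Q hQ
      obtain ⟨hmem, hpd⟩ := backward hb hab hj hne hQ
      obtain ⟨_, hpd2⟩ := forward hb hab hj hne hmem
      apply partsDesc_inj
      rw [hpd2, hpd]
      exact shiftL_unshiftL a j _
  have h1 := Finset.card_sdiff_of_subset hsub
  have h2 := Finset.card_le_card hsub
  omega

/-- If `|D^{j+1}_{a,b}(n)|` is nonzero and not divisible by `d`, then
`|D^j_{a,b}(n - aj)| ≢ |D^j_{a,b}(n)| (mod d)`. -/
theorem stmt8 (a b d j n : ℕ) (hb : 1 ≤ b) (hab : b ≤ a) (hd : 2 ≤ d) (hj : 1 ≤ j)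
    (hne : (Dj a b (j + 1) n).Nonempty) (hdvd : ¬ d ∣ (Dj a b (j + 1) n).card) :
    ¬ (Dj a b j (n - a * j)).card ≡ (Dj a b j n).card [MOD d] := by
  intro h
  apply hdvd
  rw [card_identity hb hab hj hne] at h
  have := (Nat.modEq_iff_dvd' (Nat.le_add_right _ _)).mp h
  simpa using this
end

section
/- Let a ≥ b ≥ 1, c ≥ 0, d ≥ 2, and A = {n : n ≡ bc (mod a)}. Then there exist residues r, s with 0 ≤ r < s < d such that |D_{a,b}(n)| ≡ r (mod d) for infinitely many n ∈ A and |D_{a,b}(n)| ≡ s (mod d) for infinitely many n ∈ A. -/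
open Finset

namespace Stmt10

def nth (Y : Finset ℕ) (t : ℕ) : ℕ :=
  if h : t < Y.card then Y.orderEmbOfFin rfl ⟨t, h⟩ else 0

lemma nth_mem {Y : Finset ℕ} {t : ℕ} (h : t < Y.card) : nth Y t ∈ Y := by
  rw [nth, dif_pos h]; exact Finset.orderEmbOfFin_mem _ _ _

lemma nth_lt {Y : Finset ℕ} {t t' : ℕ} (h : t < t') (h' : t' < Y.card) :
    nth Y t < nth Y t' := by
  rw [nth, nth, dif_pos h', dif_pos (h.trans h')]
  exact (Y.orderEmbOfFin rfl).strictMono (by exact_mod_cast h)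

lemma nth_surj {Y : Finset ℕ} {y : ℕ} (h : y ∈ Y) : ∃ t, t < Y.card ∧ nth Y t = y := by
  have := Finset.range_orderEmbOfFin Y (rfl : Y.card = Y.card)
  have hy : y ∈ Set.range (Y.orderEmbOfFin rfl) := by rw [this]; exact_mod_cast h
  obtain ⟨j, hj⟩ := hy
  exact ⟨j.val, j.isLt, by rw [nth, dif_pos j.isLt]; simpa using hj⟩

lemma image_nth (Y : Finset ℕ) : (range Y.card).image (nth Y) = Y := by
  ext y
  constructor
  · intro hy
    obtain ⟨t, ht, rfl⟩ := Finset.mem_image.1 hy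
    exact nth_mem (mem_range.1 ht)
  · intro hy
    obtain ⟨t, ht, rfl⟩ := nth_surj hy
    exact Finset.mem_image.2 ⟨t, mem_range.2 ht, rfl⟩

lemma nth_injOn (Y : Finset ℕ) : Set.InjOn (nth Y) (range Y.card) := by
  intro t ht t' ht' h
  simp only [coe_range, Set.mem_Iio] at ht ht'
  rcases lt_trichotomy t t' with h1 | h1 | h1
  · exact absurd h (nth_lt h1 ht').ne
  · exact h1
  · exact absurd h.symm (nth_lt h1 ht).ne

lemma sum_nth (Y : Finset ℕ) : Y.sum id = ∑ t ∈ range Y.card, nth Y t := by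
  conv_lhs => rw [← image_nth Y]
  rw [Finset.sum_image (fun x hx y hy h => nth_injOn Y (by exact_mod_cast hx) (by exact_mod_cast hy) h)]
  simp

lemma nth_image {w : ℕ → ℕ} {k : ℕ} (hw : ∀ {t t'}, t < t' → t' < k → w t < w t') :
    ((range k).image w).card = k ∧ ∀ t < k, nth ((range k).image w) t = w t := by
  have hinj : Set.InjOn w (range k) := by
    intro t ht t' ht' h
    simp only [coe_range, Set.mem_Iio] at ht ht'
    rcases lt_trichotomy t t' with h1 | h1 | h1
    · exact absurd h (hw h1 ht').ne
    · exact h1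
    · exact absurd h.symm (hw h1 ht).ne
  have hcard : ((range k).image w).card = k := by
    rw [Finset.card_image_of_injOn hinj, card_range]
  refine ⟨hcard, ?_⟩
  have hf : (fun j : Fin k => w j.val) = ((range k).image w).orderEmbOfFin hcard := by
    apply Finset.orderEmbOfFin_unique
    · intro x; exact Finset.mem_image.2 ⟨x.val, mem_range.2 x.isLt, rfl⟩
    · intro x y hxy
      exact hw (by exact_mod_cast hxy) y.isLt
  intro t ht
  have ht2 : t < ((range k).image w).card := by rw [hcard]; exact ht
  rw [nth, dif_pos ht2]
  have h1 : ((range k).image w).orderEmbOfFin rfl ⟨t, ht2⟩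
      = ((range k).image w).orderEmbOfFin hcard ⟨t, ht⟩ :=
    Finset.orderEmbOfFin_eq_orderEmbOfFin_iff.2 rfl
  rw [h1, ← congrFun hf ⟨t, ht⟩]


section
variable {a b : ℕ}

def Valid (a b : ℕ) (Y : Finset ℕ) : Prop := ∀ y ∈ Y, y % a = b % a ∧ 0 < y

lemma mod_lb (hb : 1 ≤ b) (hab : b ≤ a) {y : ℕ} (hy : y % a = b % a) (h0 : 0 < y) :
    b ≤ y := by
  rcases le_or_gt a y with h | h
  · exact hab.trans h
  · rw [Nat.mod_eq_of_lt h] at hy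
    rcases lt_or_eq_of_le hab with h1 | h1
    · rw [Nat.mod_eq_of_lt h1] at hy; omega
    · subst h1; rw [Nat.mod_self] at hy; omega

lemma mod_step {a x y : ℕ} (hxy : x < y) (hm : x % a = y % a) : x + a ≤ y := by
  have ha : 0 < a := by
    rcases Nat.eq_zero_or_pos a with h | h
    · subst h; simp [Nat.mod_zero] at hm; omega
    · exact h
  have hx := Nat.div_add_mod x a
  have hy := Nat.div_add_mod y a
  have hvu : x / a < y / a := by
    by_contra h
    push_neg at h
    have : y ≤ x := by
      calc y = a * (y / a) + y % a := hy.symm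
        _ ≤ a * (x / a) + x % a := by
            rw [← hm]; exact Nat.add_le_add_right (Nat.mul_le_mul_left a h) _
        _ = x := hx
    omega
  calc x + a = a * (x / a) + x % a + a := by rw [hx]
    _ = a * (x / a + 1) + x % a := by ring
    _ ≤ a * (y / a) + y % a := by
        rw [hm]; exact Nat.add_le_add_right (Nat.mul_le_mul_left a hvu) _
    _ = y := hy

lemma nth_step {Y : Finset ℕ} (hv : Valid a b Y) {t : ℕ} (h : t + 1 < Y.card) :
    nth Y t + a ≤ nth Y (t + 1) :=
  mod_step (nth_lt (Nat.lt_succ_self t) h)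
    ((hv _ (nth_mem (by omega))).1.trans (hv _ (nth_mem h)).1.symm)

lemma nth_lb (hb : 1 ≤ b) (hab : b ≤ a) {Y : Finset ℕ} (hv : Valid a b Y) :
    ∀ t, t < Y.card → b + a * t ≤ nth Y t := by
  intro t
  induction t with
  | zero => intro ht; simpa using mod_lb hb hab (hv _ (nth_mem ht)).1 (hv _ (nth_mem ht)).2
  | succ t ih =>
      intro ht
      have h1 := ih (by omega)
      have h2 := nth_step hv ht
      have : a * (t+1) = a * t + a := by ring
      omega

def T (K : ℕ) : ℕ := ∑ j ∈ range K, j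

lemma T_succ (K : ℕ) : T (K + 1) = T K + K := Finset.sum_range_succ _ _

lemma T_mono {K L : ℕ} (h : K ≤ L) : T K ≤ T L :=
  Finset.sum_le_sum_of_subset (by simpa using range_subset_range.2 h)

lemma sum_lb (hb : 1 ≤ b) (hab : b ≤ a) {Y : Finset ℕ} (hv : Valid a b Y) :
    Y.card * b + a * T Y.card ≤ Y.sum id := by
  rw [sum_nth]
  calc Y.card * b + a * T Y.card = ∑ t ∈ range Y.card, (b + a * t) := by
        rw [Finset.sum_add_distrib, Finset.sum_const, card_range, ← Finset.mul_sum]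
        simp [T, mul_comm]
    _ ≤ ∑ t ∈ range Y.card, nth Y t :=
        Finset.sum_le_sum (fun t ht => nth_lb hb hab hv t (mem_range.1 ht))

def stair (a b K : ℕ) : Finset ℕ := (range K).image (fun j => b + a * j)

lemma stair_card (ha : 0 < a) (K : ℕ) : (stair a b K).card = K :=
  (nth_image (fun {t t'} h _ => by have h2 : a * t < a * t' := (Nat.mul_lt_mul_left ha).2 h; omega)).1

lemma stair_nth (ha : 0 < a) {K t : ℕ} (ht : t < K) : nth (stair a b K) t = b + a * t :=
  (nth_image (fun {t t'} h _ => by have h2 : a * t < a * t' := (Nat.mul_lt_mul_left ha).2 h; omega)).2 t ht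

lemma stair_sum (ha : 0 < a) (K : ℕ) : (stair a b K).sum id = K * b + a * T K := by
  have hc := stair_card (b := b) ha K
  rw [sum_nth, hc]
  rw [Finset.sum_congr rfl (fun t ht => stair_nth ha (mem_range.1 ht))]
  rw [Finset.sum_add_distrib, Finset.sum_const, card_range, ← Finset.mul_sum]
  simp [T, mul_comm]

lemma stair_valid (hb : 1 ≤ b) (K : ℕ) : Valid a b (stair a b K) := by
  intro y hy
  obtain ⟨j, _, rfl⟩ := Finset.mem_image.1 hy
  exact ⟨Nat.add_mul_mod_self_left b a j, by omega⟩

lemma eq_stair_of_sum_eq (hb : 1 ≤ b) (hab : b ≤ a) {Y : Finset ℕ} (hv : Valid a b Y)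
    (hs : Y.sum id = Y.card * b + a * T Y.card) : Y = stair a b Y.card := by
  have ha : 0 < a := by omega
  have hpt : ∀ t ∈ range Y.card, nth Y t = b + a * t := by
    have hsum : ∑ t ∈ range Y.card, (b + a * t) = ∑ t ∈ range Y.card, nth Y t := by
      rw [← sum_nth, hs, Finset.sum_add_distrib, Finset.sum_const, card_range, ← Finset.mul_sum]
      simp [T, mul_comm]
    have := (Finset.sum_eq_sum_iff_of_le
      (fun t ht => nth_lb hb hab hv t (mem_range.1 ht))).1 hsum
    intro t ht; exact (this t ht).symm
  have h3 : stair a b Y.card = (range Y.card).image (nth Y) := by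
    unfold stair
    apply Finset.image_congr
    intro t ht
    simp only [coe_range, Set.mem_Iio] at ht
    exact (hpt t (mem_range.2 ht)).symm
  rw [h3, image_nth]

lemma sum_mod {Y : Finset ℕ} (hv : Valid a b Y) : Y.sum id % a = Y.card * b % a := by
  classical
  induction Y using Finset.induction with
  | empty => simp
  | insert y Y hnotmem ih =>
      have hy := hv y (mem_insert_self y Y)
      have hv' : Valid a b Y := fun z hz => hv z (mem_insert_of_mem hz)
      rw [Finset.sum_insert hnotmem, Finset.card_insert_of_notMem hnotmem, Nat.add_mod]
      have h2 : (Y.card + 1) * b = b + Y.card * b := by ring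
      rw [h2, Nat.add_mod b, ← hy.1, ← ih hv']
      simp [id]


lemma nth_le {Y : Finset ℕ} {t t' : ℕ} (h : t ≤ t') (h' : t' < Y.card) :
    nth Y t ≤ nth Y t' := by
  rcases lt_or_eq_of_le h with h1 | h1
  · exact (nth_lt h1 h').le
  · rw [h1]

def gap (a b : ℕ) (Y : Finset ℕ) (i : ℕ) : Prop :=
  (i = Y.card ∧ b + a ≤ nth Y 0) ∨
    (i < Y.card ∧ nth Y (Y.card - i - 1) + 2 * a ≤ nth Y (Y.card - i))

instance (a b : ℕ) (Y : Finset ℕ) (i : ℕ) : Decidable (gap a b Y i) := by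
  unfold gap; exact inferInstance

def wplus (a : ℕ) (Y : Finset ℕ) (i t : ℕ) : ℕ :=
  nth Y t + if Y.card - i ≤ t then a else 0

def wminus (a : ℕ) (Y : Finset ℕ) (i t : ℕ) : ℕ :=
  nth Y t - if Y.card - i ≤ t then a else 0

def topAdd (a : ℕ) (Y : Finset ℕ) (i : ℕ) : Finset ℕ := (range Y.card).image (wplus a Y i)

def topSub (a : ℕ) (Y : Finset ℕ) (i : ℕ) : Finset ℕ := (range Y.card).image (wminus a Y i)

lemma shifted_big (hb : 1 ≤ b) (hab : b ≤ a) {Y : Finset ℕ} {i : ℕ} (hv : Valid a b Y)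
    (hgap : gap a b Y i) {t : ℕ} (h1 : Y.card - i ≤ t) (h2 : t < Y.card) :
    a + 1 ≤ nth Y t := by
  rcases hgap with ⟨hik, h0⟩ | ⟨hik, h0⟩
  · have := nth_le (Nat.zero_le t) h2
    omega
  · have hki : 1 ≤ Y.card - i := by omega
    have ht1 : 1 ≤ t := by omega
    have h2k : 1 < Y.card := by omega
    have hs : nth Y 0 + a ≤ nth Y 1 := by simpa using nth_step hv (t := 0) h2k
    have h01 : nth Y 1 ≤ nth Y t := nth_le ht1 h2
    have hpos := (hv _ (nth_mem (t := 0) (by omega))).2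
    omega

lemma wplus_mono {Y : Finset ℕ} {i : ℕ} {t t' : ℕ} (h : t < t') (h' : t' < Y.card) :
    wplus a Y i t < wplus a Y i t' := by
  have := nth_lt h h'
  unfold wplus
  rcases le_or_gt (Y.card - i) t with h1 | h1
  · rw [if_pos h1, if_pos (h1.trans h.le)]; omega
  · rcases le_or_gt (Y.card - i) t' with h2 | h2
    · rw [if_neg (by omega), if_pos h2]; omega
    · rw [if_neg (by omega), if_neg (by omega)]; omega

lemma topAdd_card {Y : Finset ℕ} {i : ℕ} : (topAdd a Y i).card = Y.card :=
  (nth_image (fun {t t'} h h' => wplus_mono h h')).1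

lemma topAdd_nth {Y : Finset ℕ} {i t : ℕ} (ht : t < Y.card) :
    nth (topAdd a Y i) t = wplus a Y i t :=
  (nth_image (fun {t t'} h h' => wplus_mono h h')).2 t ht

lemma wminus_mono (hb : 1 ≤ b) (hab : b ≤ a) {Y : Finset ℕ} {i : ℕ} (hv : Valid a b Y)
    (hgap : gap a b Y i) {t t' : ℕ} (h : t < t') (h' : t' < Y.card) :
    wminus a Y i t < wminus a Y i t' := by
  have hlt := nth_lt h h'
  unfold wminus
  rcases le_or_gt (Y.card - i) t with h1 | h1
  · have hbig := shifted_big hb hab hv hgap h1 (by omega)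
    rw [if_pos h1, if_pos (h1.trans h.le)]
    omega
  · rcases le_or_gt (Y.card - i) t' with h2 | h2
    · -- t unshifted, t' shifted
      have hik : i < Y.card := by omega
      have hgr : nth Y (Y.card - i - 1) + 2 * a ≤ nth Y (Y.card - i) := by
        rcases hgap with ⟨hik2, _⟩ | ⟨_, h0⟩
        · omega
        · exact h0
      have hle1 : nth Y t ≤ nth Y (Y.card - i - 1) := nth_le (by omega) (by omega)
      have hle2 : nth Y (Y.card - i) ≤ nth Y t' := nth_le h2 h'
      rw [if_neg (by omega), if_pos h2]
      omega
    · rw [if_neg (by omega), if_neg (by omega)]; omega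

lemma topSub_card (hb : 1 ≤ b) (hab : b ≤ a) {Y : Finset ℕ} {i : ℕ} (hv : Valid a b Y)
    (hgap : gap a b Y i) : (topSub a Y i).card = Y.card :=
  (nth_image (fun {t t'} h h' => wminus_mono hb hab hv hgap h h')).1

lemma topSub_nth (hb : 1 ≤ b) (hab : b ≤ a) {Y : Finset ℕ} {i t : ℕ} (hv : Valid a b Y)
    (hgap : gap a b Y i) (ht : t < Y.card) :
    nth (topSub a Y i) t = wminus a Y i t :=
  (nth_image (fun {t t'} h h' => wminus_mono hb hab hv hgap h h')).2 t ht

lemma count_shift {k i : ℕ} (hik : i ≤ k) :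
    (∑ t ∈ range k, if k - i ≤ t then a else 0) = a * i := by
  rw [Finset.sum_ite, Finset.sum_const, Finset.sum_const_zero, add_zero]
  have : (range k).filter (fun t => k - i ≤ t) = Ico (k - i) k := by
    ext t
    simp only [mem_filter, mem_range, mem_Ico]
    omega
  rw [this, Nat.card_Ico]
  have : k - (k - i) = i := by omega
  rw [this, smul_eq_mul, mul_comm]

lemma topAdd_sum {Y : Finset ℕ} {i : ℕ} (hik : i ≤ Y.card) :
    (topAdd a Y i).sum id = Y.sum id + a * i := by
  rw [sum_nth, topAdd_card]
  rw [Finset.sum_congr rfl (fun t ht => topAdd_nth (mem_range.1 ht))]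
  unfold wplus
  rw [Finset.sum_add_distrib, count_shift hik, ← sum_nth]

lemma topSub_sum (hb : 1 ≤ b) (hab : b ≤ a) {Y : Finset ℕ} {i : ℕ} (hv : Valid a b Y)
    (hgap : gap a b Y i) (hik : i ≤ Y.card) :
    (topSub a Y i).sum id + a * i = Y.sum id := by
  have hpt : ∀ t ∈ range Y.card,
      wminus a Y i t + (if Y.card - i ≤ t then a else 0) = nth Y t := by
    intro t ht
    have ht' := mem_range.1 ht
    unfold wminus
    rcases le_or_gt (Y.card - i) t with h1 | h1
    · have := shifted_big hb hab hv hgap h1 ht'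
      rw [if_pos h1]; omega
    · rw [if_neg (by omega)]; omega
  rw [sum_nth, topSub_card hb hab hv hgap,
    Finset.sum_congr rfl (fun t ht => topSub_nth hb hab hv hgap (mem_range.1 ht)),
    ← count_shift (a := a) (k := Y.card) hik, ← Finset.sum_add_distrib,
    Finset.sum_congr rfl hpt, ← sum_nth]

lemma topAdd_valid (hb : 1 ≤ b) (hab : b ≤ a) {Y : Finset ℕ} {i : ℕ} (hv : Valid a b Y) :
    Valid a b (topAdd a Y i) := by
  intro y hy
  obtain ⟨t, ht, rfl⟩ := Finset.mem_image.1 hy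
  have ht' := mem_range.1 ht
  have hvt := hv _ (nth_mem ht')
  unfold wplus
  rcases le_or_gt (Y.card - i) t with h1 | h1
  · rw [if_pos h1]
    refine ⟨?_, by omega⟩
    rw [Nat.add_mod_right, hvt.1]
  · rw [if_neg (by omega)]
    simpa using hvt

lemma topSub_valid (hb : 1 ≤ b) (hab : b ≤ a) {Y : Finset ℕ} {i : ℕ} (hv : Valid a b Y)
    (hgap : gap a b Y i) : Valid a b (topSub a Y i) := by
  intro y hy
  obtain ⟨t, ht, rfl⟩ := Finset.mem_image.1 hy
  have ht' := mem_range.1 ht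
  have hvt := hv _ (nth_mem ht')
  unfold wminus
  rcases le_or_gt (Y.card - i) t with h1 | h1
  · have hbig := shifted_big hb hab hv hgap h1 ht'
    rw [if_pos h1]
    refine ⟨?_, by omega⟩
    have hrw : nth Y t - a + a = nth Y t := by omega
    have hmod : (nth Y t - a) % a = nth Y t % a := by
      conv_rhs => rw [← hrw, Nat.add_mod_right]
    rw [hmod, hvt.1]
  · rw [if_neg (by omega)]
    simpa using hvt

lemma topSub_topAdd (hb : 1 ≤ b) (hab : b ≤ a) {Y : Finset ℕ} {i : ℕ} (hv : Valid a b Y)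
    (hi1 : 1 ≤ i) (hik : i ≤ Y.card) :
    topSub a (topAdd a Y i) i = Y := by
  unfold topSub
  rw [topAdd_card]
  have : ∀ t ∈ range Y.card, wminus a (topAdd a Y i) i t = nth Y t := by
    intro t ht
    have ht' := mem_range.1 ht
    unfold wminus
    rw [topAdd_card, topAdd_nth ht']
    unfold wplus
    rcases le_or_gt (Y.card - i) t with h1 | h1
    · rw [if_pos h1]; omega
    · rw [if_neg (by omega)]; omega
  rw [Finset.image_congr (fun t ht => by
    have := this t (by simpa using ht); exact this)]
  exact image_nth Y

lemma topAdd_topSub (hb : 1 ≤ b) (hab : b ≤ a) {Y : Finset ℕ} {i : ℕ} (hv : Valid a b Y)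
    (hgap : gap a b Y i) (hik : i ≤ Y.card) :
    topAdd a (topSub a Y i) i = Y := by
  unfold topAdd
  rw [topSub_card hb hab hv hgap]
  have : ∀ t ∈ range Y.card, wplus a (topSub a Y i) i t = nth Y t := by
    intro t ht
    have ht' := mem_range.1 ht
    unfold wplus
    rw [topSub_card hb hab hv hgap, topSub_nth hb hab hv hgap ht']
    unfold wminus
    rcases le_or_gt (Y.card - i) t with h1 | h1
    · have := shifted_big hb hab hv hgap h1 ht'
      rw [if_pos h1]; omega
    · rw [if_neg (by omega)]; omega
  rw [Finset.image_congr (fun t ht => by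
    have := this t (by simpa using ht); exact this)]
  exact image_nth Y

lemma gap_topAdd (hb : 1 ≤ b) (hab : b ≤ a) {Y : Finset ℕ} {i : ℕ} (hv : Valid a b Y)
    (hi1 : 1 ≤ i) (hik : i ≤ Y.card) : gap a b (topAdd a Y i) i := by
  have hc := topAdd_card (a := a) (Y := Y) (i := i)
  rcases eq_or_lt_of_le hik with h1 | h1
  · left
    have h0 : (0:ℕ) < Y.card := by omega
    have hn0 : nth (topAdd a Y i) 0 = wplus a Y i 0 := topAdd_nth h0
    refine ⟨by omega, ?_⟩
    rw [hn0]
    unfold wplus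
    have : Y.card - i = 0 := by omega
    rw [this, if_pos (Nat.zero_le 0)]
    have hlb := nth_lb hb hab hv 0 h0
    omega
  · right
    have hki : 1 ≤ Y.card - i := by omega
    refine ⟨by omega, ?_⟩
    rw [hc, topAdd_nth (by omega), topAdd_nth (by omega)]
    unfold wplus
    rw [if_pos (le_refl _), if_neg (by omega)]
    have hs := nth_step hv (t := Y.card - i - 1) (by omega)
    have : Y.card - i - 1 + 1 = Y.card - i := by omega
    rw [this] at hs
    omega

lemma gap_topAdd_iff_lt (hb : 1 ≤ b) (hab : b ≤ a) {Y : Finset ℕ} {i j : ℕ} (hv : Valid a b Y)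
    (hj1 : 1 ≤ j) (hji : j < i) (hik : i ≤ Y.card) :
    gap a b (topAdd a Y i) j ↔ gap a b Y j := by
  have hc := topAdd_card (a := a) (Y := Y) (i := i)
  have hjk : j < Y.card := by omega
  have e1 : nth (topAdd a Y i) (Y.card - j - 1) = nth Y (Y.card - j - 1) + a := by
    rw [topAdd_nth (by omega)]
    unfold wplus
    rw [if_pos (by omega)]
  have e2 : nth (topAdd a Y i) (Y.card - j) = nth Y (Y.card - j) + a := by
    rw [topAdd_nth (by omega)]
    unfold wplus
    rw [if_pos (by omega)]
  constructor
  · rintro (⟨h1, _⟩ | ⟨h1, h2⟩)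
    · omega
    · right
      rw [hc] at h2
      rw [e1, e2] at h2
      exact ⟨hjk, by omega⟩
  · rintro (⟨h1, _⟩ | ⟨h1, h2⟩)
    · omega
    · right
      rw [hc, e1, e2]
      exact ⟨by omega, by omega⟩

lemma gap_topSub_iff_lt (hb : 1 ≤ b) (hab : b ≤ a) {Y : Finset ℕ} {i j : ℕ} (hv : Valid a b Y)
    (hgap : gap a b Y i) (hj1 : 1 ≤ j) (hji : j < i) (hik : i ≤ Y.card) :
    gap a b (topSub a Y i) j ↔ gap a b Y j := by
  have hc := topSub_card hb hab hv hgap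
  have hjk : j < Y.card := by omega
  have hb1 : a + 1 ≤ nth Y (Y.card - j - 1) :=
    shifted_big hb hab hv hgap (by omega) (by omega)
  have hb2 : a + 1 ≤ nth Y (Y.card - j) :=
    shifted_big hb hab hv hgap (by omega) (by omega)
  have e1 : nth (topSub a Y i) (Y.card - j - 1) = nth Y (Y.card - j - 1) - a := by
    rw [topSub_nth hb hab hv hgap (by omega)]
    unfold wminus
    rw [if_pos (by omega)]
  have e2 : nth (topSub a Y i) (Y.card - j) = nth Y (Y.card - j) - a := by
    rw [topSub_nth hb hab hv hgap (by omega)]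
    unfold wminus
    rw [if_pos (by omega)]
  constructor
  · rintro (⟨h1, _⟩ | ⟨h1, h2⟩)
    · omega
    · right
      rw [hc] at h2
      rw [e1, e2] at h2
      exact ⟨hjk, by omega⟩
  · rintro (⟨h1, _⟩ | ⟨h1, h2⟩)
    · omega
    · right
      rw [hc, e1, e2]
      exact ⟨by omega, by omega⟩


instance (a b : ℕ) (Y : Finset ℕ) : Decidable (Valid a b Y) := by
  unfold Valid; exact inferInstance

def Sset (a b n : ℕ) : Finset (Finset ℕ) :=
  ((range (n+1)).powerset).filter (fun Y => Valid a b Y ∧ Y.sum id = n)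

lemma mem_Sset {a b n : ℕ} {Y : Finset ℕ} :
    Y ∈ Sset a b n ↔ Valid a b Y ∧ Y.sum id = n := by
  unfold Sset
  rw [mem_filter, mem_powerset]
  constructor
  · tauto
  · rintro ⟨hv, hs⟩
    refine ⟨?_, hv, hs⟩
    intro y hy
    rw [mem_range]
    have : y ≤ Y.sum id := Finset.single_le_sum (fun i _ => Nat.zero_le (id i)) hy
    omega

def Sig (a b m M : ℕ) : Finset ((_ : Finset ℕ) × Finset ℕ) :=
  ((Icc 1 m).powerset).sigma (fun X => Sset a b (M - a * X.sum id))

lemma sum_Icc_split {s m : ℕ} (h : s ≤ m) :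
    (Icc (s+1) m).sum id + T (s+1) = T (m+1) := by
  unfold T
  have hsplit : range (m+1) = Icc (s+1) m ∪ range (s+1) := by
    ext j
    simp only [mem_range, mem_union, mem_Icc]
    omega
  have hdisj : Disjoint (Icc (s+1) m) (range (s+1)) := by
    rw [Finset.disjoint_left]
    intro j hj hj'
    simp only [mem_Icc] at hj
    simp only [mem_range] at hj'
    omega
  rw [hsplit, Finset.sum_union hdisj]
  simp [id]

lemma sum_Icc_id (m : ℕ) : (Icc 1 m).sum id = T (m+1) := by
  have := sum_Icc_split (s := 0) (m := m) (Nat.zero_le m)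
  simpa [T] using this

lemma mem_Sig_elim {a b m M : ℕ} {p : (_ : Finset ℕ) × Finset ℕ}
    (hM : a * T (m+1) ≤ M) (hp : p ∈ Sig a b m M) :
    p.1 ⊆ Icc 1 m ∧ Valid a b p.2 ∧ a * p.1.sum id + p.2.sum id = M := by
  rw [Sig, mem_sigma, mem_powerset, mem_Sset] at hp
  obtain ⟨hX, hv, hs⟩ := hp
  have h1 : p.1.sum id ≤ T (m+1) := by
    rw [← sum_Icc_id]
    exact Finset.sum_le_sum_of_subset hX
  have h2 : a * p.1.sum id ≤ M :=
    le_trans (Nat.mul_le_mul_left a h1) hM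
  exact ⟨hX, hv, by omega⟩

lemma mem_Sig_intro {a b m M : ℕ} {p : (_ : Finset ℕ) × Finset ℕ}
    (hX : p.1 ⊆ Icc 1 m) (hv : Valid a b p.2)
    (hs : a * p.1.sum id + p.2.sum id = M) : p ∈ Sig a b m M := by
  rw [Sig, mem_sigma, mem_powerset, mem_Sset]
  exact ⟨hX, hv, by omega⟩

def marked (a b : ℕ) (X Y : Finset ℕ) : Finset ℕ :=
  (Icc 1 Y.card).filter (fun i => i ∈ X ∨ gap a b Y i)

lemma no_gap_nth (hb : 1 ≤ b) (hab : b ≤ a) {Y : Finset ℕ} (hv : Valid a b Y)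
    (hng : ∀ i ∈ Icc 1 Y.card, ¬ gap a b Y i) :
    ∀ t, t < Y.card → nth Y t = b + a * t := by
  intro t
  induction t with
  | zero =>
      intro ht
      have hg := hng Y.card (by rw [mem_Icc]; omega)
      rw [gap] at hg
      push_neg at hg
      have h1 := hg.1 rfl
      have hvt := hv _ (nth_mem ht)
      have hlb := mod_lb hb hab hvt.1 hvt.2
      rcases lt_or_eq_of_le hlb with h2 | h2
      · have := mod_step h2 (hvt.1.symm)
        omega
      · omega
  | succ t ih =>
      intro ht
      have hlow := ih (by omega)
      have hg := hng (Y.card - t - 1) (by rw [mem_Icc]; omega)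
      rw [gap] at hg
      push_neg at hg
      have h2 := hg.2 (by omega)
      have he1 : Y.card - (Y.card - t - 1) - 1 = t := by omega
      have he2 : Y.card - (Y.card - t - 1) = t + 1 := by omega
      rw [he1, he2] at h2
      have hs := nth_step hv ht
      have hvt := hv _ (nth_mem ht)
      have hvt1 := hv _ (nth_mem (t := t) (by omega))
      have hmul : a * (t + 1) = a * t + a := by ring
      rcases lt_or_eq_of_le hs with h3 | h3
      · have hmod : (nth Y t + a) % a = nth Y (t+1) % a := by
          rw [Nat.add_mod_right, hvt1.1, hvt.1]
        have := mod_step h3 hmod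
        omega
      · omega

lemma arith1 (P V Q U S W R ak bb : ℕ) (e1 : P + (V + Q) = U + S) (e2 : W + R ≤ U + S)
    (e3 : P + Q + ak ≤ R) (e4 : V + bb ≤ W) (e5 : 1 ≤ bb) : False := by omega

lemma X_empty {X : Finset ℕ} {m : ℕ} (hX : X ⊆ Icc 1 m) (hs : X.sum id = 0) : X = ∅ := by
  by_contra h
  obtain ⟨x, hx⟩ := Finset.nonempty_iff_ne_empty.2 h
  have h1 := (mem_Icc.1 (hX hx)).1
  have h2 : x ≤ X.sum id := Finset.single_le_sum (fun i _ => Nat.zero_le (id i)) hx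
  omega


lemma pt_mem {a b m K : ℕ} (hb : 1 ≤ b) (hab : b ≤ a) :
    (⟨∅, stair a b K⟩ : (_ : Finset ℕ) × Finset ℕ) ∈ Sig a b m (K * b + a * T K) := by
  apply mem_Sig_intro
  · simp
  · exact stair_valid hb K
  · have := stair_sum (a := a) (b := b) (show 0 < a by omega) K
    simpa using this

lemma marked_pt_empty {a b K : ℕ} (hb : 1 ≤ b) (hab : b ≤ a) :
    marked a b ∅ (stair a b K) = ∅ := by
  have ha : 0 < a := by omega
  rw [marked, Finset.filter_eq_empty_iff]
  intro i hi
  rw [stair_card ha] at hi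
  have hi' := mem_Icc.1 hi
  rintro (h | h)
  · exact absurd h (notMem_empty i)
  · unfold gap at h
    rw [stair_card ha] at h
    rcases h with ⟨h1, h2⟩ | ⟨h1, h2⟩
    · have e0 := stair_nth (a := a) (b := b) ha (t := 0) (K := K) (by omega)
      rw [e0] at h2
      omega
    · have e1 := stair_nth (a := a) (b := b) ha (t := K - i - 1) (K := K) (by omega)
      have e2 := stair_nth (a := a) (b := b) ha (t := K - i) (K := K) (by omega)
      rw [e1, e2] at h2
      have he : K - i = (K - i - 1) + 1 := by omega
      have he2 : a * (K - i) = a * (K - i - 1) + a := by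
        conv_lhs => rw [he]
        ring
      omega

lemma dichotomy {a b c m K : ℕ} (hb : 1 ≤ b) (hab : b ≤ a) (hm : 1 ≤ m) (hK : m < K)
    (hKmin : ∀ k', m < k' → k' * b % a = c * b % a → K ≤ k')
    (hKc : K * b % a = c * b % a)
    {p : (_ : Finset ℕ) × Finset ℕ} (hp : p ∈ Sig a b m (K * b + a * T K)) :
    p = ⟨∅, stair a b K⟩ ∨ ((marked a b p.1 p.2).Nonempty ∧ p.2.card ≤ m) := by
  have ha : 0 < a := by omega
  have hMbig : a * T (m+1) ≤ K * b + a * T K := by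
    have h1 : a * T (m+1) ≤ a * T K := Nat.mul_le_mul_left a (T_mono (by omega))
    omega
  obtain ⟨X, Y⟩ := p
  obtain ⟨hX, hv, hsum⟩ := mem_Sig_elim hMbig hp
  simp only at hX hv hsum ⊢
  have hYmod : Y.sum id % a = Y.card * b % a := sum_mod hv
  have hMmod : (K * b + a * T K) % a = K * b % a := Nat.add_mul_mod_self_left _ _ _
  have hXmod : (a * X.sum id + Y.sum id) % a = Y.sum id % a := by
    rw [Nat.add_comm, Nat.add_mul_mod_self_left]
  have hclass : Y.card * b % a = K * b % a := by
    rw [← hYmod, ← hXmod, hsum, hMmod]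
  by_cases hkm : Y.card ≤ m
  · by_cases hne : (marked a b X Y).Nonempty
    · right; exact ⟨hne, hkm⟩
    · exfalso
      rw [Finset.not_nonempty_iff_eq_empty] at hne
      have hng : ∀ i ∈ Icc 1 Y.card, ¬ gap a b Y i := by
        intro i hi hgap
        have hmem : i ∈ marked a b X Y := by
          rw [marked, mem_filter]; exact ⟨hi, Or.inr hgap⟩
        rw [hne] at hmem; exact absurd hmem (notMem_empty i)
      have hXk : ∀ i ∈ Icc 1 Y.card, i ∉ X := by
        intro i hi hiX
        have hmem : i ∈ marked a b X Y := by
          rw [marked, mem_filter]; exact ⟨hi, Or.inl hiX⟩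
        rw [hne] at hmem; exact absurd hmem (notMem_empty i)
      have hnth := no_gap_nth hb hab hv hng
      have hYsum : Y.sum id = Y.card * b + a * T Y.card := by
        rw [sum_nth, Finset.sum_congr rfl (fun t ht => hnth t (mem_range.1 ht)),
          Finset.sum_add_distrib, Finset.sum_const, card_range, ← Finset.mul_sum]
        simp [T, mul_comm]
      have hXsub : X ⊆ Icc (Y.card + 1) m := by
        intro x hx
        have h1 := mem_Icc.1 (hX hx)
        rw [mem_Icc]
        refine ⟨?_, h1.2⟩
        by_contra h2
        exact hXk x (by rw [mem_Icc]; omega) hx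
      have hXsum : X.sum id + T (Y.card + 1) ≤ T (m+1) := by
        have h1 : X.sum id ≤ (Icc (Y.card + 1) m).sum id :=
          Finset.sum_le_sum_of_subset hXsub
        have h2 := sum_Icc_split (s := Y.card) (m := m) hkm
        omega
      apply arith1 (a * X.sum id) (Y.card * b) (a * T Y.card) (K * b) (a * T K)
        ((m+1) * b) (a * T (m+1)) (a * Y.card) b
      · rw [← hYsum]; exact hsum
      · have h1 : (m+1) * b ≤ K * b := Nat.mul_le_mul_right b (by omega)
        have h2 : a * T (m+1) ≤ a * T K := Nat.mul_le_mul_left a (T_mono (by omega))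
        omega
      · have h1 : X.sum id + T Y.card + Y.card ≤ T (m+1) := by
          have := T_succ Y.card; omega
        calc a * X.sum id + a * T Y.card + a * Y.card
            = a * (X.sum id + T Y.card + Y.card) := by ring
          _ ≤ a * T (m+1) := Nat.mul_le_mul_left a h1
      · have h1 : (Y.card + 1) * b ≤ (m+1) * b := Nat.mul_le_mul_right b (by omega)
        have h2 : (Y.card + 1) * b = Y.card * b + b := by ring
        omega
      · exact hb
  · left
    push_neg at hkm
    have hclass2 : Y.card * b % a = c * b % a := by rw [hclass, hKc]
    have hKk : K ≤ Y.card := hKmin _ hkm hclass2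
    have hYlb := sum_lb hb hab hv
    rcases lt_or_eq_of_le hKk with h1 | h1
    · exfalso
      have h2 : (K+1) * b ≤ Y.card * b := Nat.mul_le_mul_right b h1
      have h3 : a * T (K+1) ≤ a * T Y.card := Nat.mul_le_mul_left a (T_mono h1)
      have h4 : T (K + 1) = T K + K := T_succ K
      rw [h4] at h3
      have h5 : (K+1) * b = K * b + b := by ring
      have h6 : a * (T K + K) = a * T K + a * K := by ring
      rw [h6] at h3
      omega
    · have hYub : K * b + a * T K ≤ Y.sum id := by rw [h1]; exact hYlb
      have hX0 : X = ∅ := by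
        apply X_empty hX
        have hz : a * X.sum id = 0 := by omega
        rcases Nat.mul_eq_zero.1 hz with h | h
        · omega
        · exact h
      have hYs : Y.sum id = Y.card * b + a * T Y.card := by rw [← h1]; omega
      have hY : Y = stair a b Y.card := eq_stair_of_sum_eq hb hab hv hYs
      rw [hX0, hY, ← h1]


def phi (a b : ℕ) : ((_ : Finset ℕ) × Finset ℕ) → ((_ : Finset ℕ) × Finset ℕ)
  | ⟨X, Y⟩ =>
    if h : (marked a b X Y).Nonempty then
      if (marked a b X Y).min' h ∈ X then
        ⟨X.erase ((marked a b X Y).min' h), topAdd a Y ((marked a b X Y).min' h)⟩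
      else
        ⟨insert ((marked a b X Y).min' h) X, topSub a Y ((marked a b X Y).min' h)⟩
    else ⟨X, Y⟩

lemma mem_marked {a b : ℕ} {X Y : Finset ℕ} {i : ℕ} :
    i ∈ marked a b X Y ↔ (1 ≤ i ∧ i ≤ Y.card) ∧ (i ∈ X ∨ gap a b Y i) := by
  rw [marked, mem_filter, mem_Icc]

lemma inv_spec {a b c m K : ℕ} (hb : 1 ≤ b) (hab : b ≤ a) (hm : 1 ≤ m) (hK : m < K)
    (hKmin : ∀ k', m < k' → k' * b % a = c * b % a → K ≤ k')
    (hKc : K * b % a = c * b % a)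
    {p : (_ : Finset ℕ) × Finset ℕ} (hp : p ∈ Sig a b m (K * b + a * T K))
    (hne : p ≠ ⟨∅, stair a b K⟩) :
    (phi a b p ∈ Sig a b m (K * b + a * T K) ∧ phi a b p ≠ ⟨∅, stair a b K⟩) ∧
      ((phi a b p).1.card = p.1.card + 1 ∨ p.1.card = (phi a b p).1.card + 1) ∧
      phi a b p ≠ p ∧ phi a b (phi a b p) = p := by
  have ha : 0 < a := by omega
  have hMbig : a * T (m+1) ≤ K * b + a * T K := by
    have h1 : a * T (m+1) ≤ a * T K := Nat.mul_le_mul_left a (T_mono (by omega))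
    omega
  rcases dichotomy hb hab hm hK hKmin hKc hp with hpt | ⟨hMk, hkm⟩
  · exact absurd hpt hne
  obtain ⟨X, Y⟩ := p
  simp only at hMk hkm
  obtain ⟨hX, hv, hsum⟩ := mem_Sig_elim hMbig hp
  simp only at hX hv hsum
  set i := (marked a b X Y).min' hMk with hidef
  have hi_mem := Finset.min'_mem _ hMk
  rw [mem_marked] at hi_mem
  obtain ⟨⟨hi1, hik⟩, hor⟩ := hi_mem
  have hmin : ∀ j, 1 ≤ j → j ≤ Y.card → (j ∈ X ∨ gap a b Y j) → i ≤ j := by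
    intro j h1 h2 h3
    exact Finset.min'_le _ _ (mem_marked.2 ⟨⟨h1, h2⟩, h3⟩)
  by_cases hiX : i ∈ X
  · -- Case 1 : remove i from X, add a to top i parts
    have hphi : phi a b ⟨X, Y⟩ = ⟨X.erase i, topAdd a Y i⟩ := by
      rw [phi, dif_pos hMk, if_pos hiX]
    have htc : (topAdd a Y i).card = Y.card := topAdd_card
    have hgap' : gap a b (topAdd a Y i) i := gap_topAdd hb hab hv hi1 hik
    have hs1 : (X.erase i).sum id + i = X.sum id := by
      have := Finset.sum_erase_add X id hiX
      simpa using this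
    have hs2 : (topAdd a Y i).sum id = Y.sum id + a * i := topAdd_sum hik
    have hmemSig : phi a b ⟨X, Y⟩ ∈ Sig a b m (K * b + a * T K) := by
      rw [hphi]
      apply mem_Sig_intro
      · exact (Finset.erase_subset i X).trans hX
      · exact topAdd_valid hb hab hv
      · simp only
        have e1 : a * ((X.erase i).sum id + i) = a * X.sum id := by rw [hs1]
        have e2 : a * ((X.erase i).sum id + i) = a * (X.erase i).sum id + a * i := by ring
        omega
    have hMk' : (marked a b (X.erase i) (topAdd a Y i)).Nonempty := by
      refine ⟨i, mem_marked.2 ⟨⟨hi1, by rw [htc]; exact hik⟩, Or.inr hgap'⟩⟩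
    have hmin' : (marked a b (X.erase i) (topAdd a Y i)).min' hMk' = i := by
      apply le_antisymm
      · exact Finset.min'_le _ _ (mem_marked.2 ⟨⟨hi1, by rw [htc]; exact hik⟩, Or.inr hgap'⟩)
      · apply Finset.le_min'
        intro j hj
        rw [mem_marked, htc] at hj
        obtain ⟨⟨hj1, hjk⟩, hjor⟩ := hj
        by_contra hcon
        push_neg at hcon
        rcases hjor with hjX | hjgap
        · have : j ∈ X := Finset.mem_of_mem_erase hjX
          have := hmin j hj1 hjk (Or.inl this)
          omega
        · have : gap a b Y j := (gap_topAdd_iff_lt hb hab hv hj1 hcon hik).1 hjgap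
          have := hmin j hj1 hjk (Or.inr this)
          omega
    have hnept : phi a b ⟨X, Y⟩ ≠ ⟨∅, stair a b K⟩ := by
      rw [hphi]
      intro hcon
      have h1 : X.erase i = ∅ := congrArg Sigma.fst hcon
      have h2 : topAdd a Y i = stair a b K := congrArg Sigma.snd hcon
      rw [h1, h2] at hMk'
      rw [marked_pt_empty hb hab] at hMk'
      exact Finset.not_nonempty_empty hMk'
    have hinv : phi a b (phi a b ⟨X, Y⟩) = ⟨X, Y⟩ := by
      rw [hphi, phi, dif_pos hMk', hmin', if_neg (Finset.notMem_erase i X)]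
      rw [Finset.insert_erase hiX, topSub_topAdd hb hab hv hi1 hik]
    refine ⟨⟨hmemSig, hnept⟩, ?_, ?_, hinv⟩
    · right
      rw [hphi]
      simp only
      rw [Finset.card_erase_of_mem hiX]
      have : 1 ≤ X.card := Finset.card_pos.2 ⟨i, hiX⟩
      omega
    · rw [hphi]
      intro hcon
      have h1 : X.erase i = X := congrArg Sigma.fst hcon
      rw [Finset.erase_eq_self] at h1
      exact h1 hiX
  · -- Case 2 : insert i into X, subtract a from top i parts
    have hgap : gap a b Y i := hor.resolve_left hiX
    have hphi : phi a b ⟨X, Y⟩ = ⟨insert i X, topSub a Y i⟩ := by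
      rw [phi, dif_pos hMk, if_neg hiX]
    have htc : (topSub a Y i).card = Y.card := topSub_card hb hab hv hgap
    have hs1 : (insert i X).sum id = i + X.sum id := by
      have := Finset.sum_insert (f := id) hiX
      simpa using this
    have hs2 : (topSub a Y i).sum id + a * i = Y.sum id := topSub_sum hb hab hv hgap hik
    have hmemSig : phi a b ⟨X, Y⟩ ∈ Sig a b m (K * b + a * T K) := by
      rw [hphi]
      apply mem_Sig_intro
      · simp only
        apply Finset.insert_subset
        · rw [mem_Icc]; exact ⟨hi1, hik.trans hkm⟩
        · exact hX
      · exact topSub_valid hb hab hv hgap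
      · simp only
        rw [hs1]
        have e2 : a * (i + X.sum id) = a * i + a * X.sum id := by ring
        omega
    have hMk' : (marked a b (insert i X) (topSub a Y i)).Nonempty :=
      ⟨i, mem_marked.2 ⟨⟨hi1, by rw [htc]; exact hik⟩, Or.inl (Finset.mem_insert_self i X)⟩⟩
    have hmin' : (marked a b (insert i X) (topSub a Y i)).min' hMk' = i := by
      apply le_antisymm
      · exact Finset.min'_le _ _
          (mem_marked.2 ⟨⟨hi1, by rw [htc]; exact hik⟩, Or.inl (Finset.mem_insert_self i X)⟩)
      · apply Finset.le_min'
        intro j hj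
        rw [mem_marked, htc] at hj
        obtain ⟨⟨hj1, hjk⟩, hjor⟩ := hj
        by_contra hcon
        push_neg at hcon
        rcases hjor with hjX | hjgap
        · rcases Finset.mem_insert.1 hjX with h | h
          · omega
          · have := hmin j hj1 hjk (Or.inl h)
            omega
        · have : gap a b Y j := (gap_topSub_iff_lt hb hab hv hgap hj1 hcon hik).1 hjgap
          have := hmin j hj1 hjk (Or.inr this)
          omega
    have hnept : phi a b ⟨X, Y⟩ ≠ ⟨∅, stair a b K⟩ := by
      rw [hphi]
      intro hcon
      have h1 : insert i X = ∅ := congrArg Sigma.fst hcon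
      exact Finset.insert_ne_empty i X h1
    have hinv : phi a b (phi a b ⟨X, Y⟩) = ⟨X, Y⟩ := by
      rw [hphi, phi, dif_pos hMk', hmin', if_pos (Finset.mem_insert_self i X)]
      rw [Finset.erase_insert hiX, topAdd_topSub hb hab hv hgap hik]
    refine ⟨⟨hmemSig, hnept⟩, ?_, ?_, hinv⟩
    · left
      rw [hphi]
      simp only
      rw [Finset.card_insert_of_notMem hiX]
    · rw [hphi]
      intro hcon
      have h1 : insert i X = X := congrArg Sigma.fst hcon
      rw [Finset.insert_eq_self] at h1
      exact hiX h1


end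

lemma key_identity {a b c m K : ℕ} (hb : 1 ≤ b) (hab : b ≤ a) (hm : 1 ≤ m) (hK : m < K)
    (hKmin : ∀ k', m < k' → k' * b % a = c * b % a → K ≤ k')
    (hKc : K * b % a = c * b % a) :
    ∑ p ∈ Sig a b m (K * b + a * T K), ((-1 : ℤ) ^ p.1.card) = 1 := by
  have hpt : (⟨∅, stair a b K⟩ : (_ : Finset ℕ) × Finset ℕ) ∈ Sig a b m (K * b + a * T K) :=
    pt_mem hb hab
  rw [← Finset.add_sum_erase _ _ hpt]
  have h0 : ((-1 : ℤ) ^ ((⟨∅, stair a b K⟩ : (_ : Finset ℕ) × Finset ℕ)).1.card) = 1 := by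
    simp
  rw [h0]
  have hz : ∑ p ∈ (Sig a b m (K * b + a * T K)).erase ⟨∅, stair a b K⟩,
      ((-1 : ℤ) ^ p.1.card) = 0 := by
    apply Finset.sum_involution (fun p _ => phi a b p)
    · intro p hp
      rw [Finset.mem_erase] at hp
      obtain ⟨-, hcard, -, -⟩ := inv_spec hb hab hm hK hKmin hKc hp.2 hp.1
      rcases hcard with h | h
      · rw [h, pow_succ]; ring
      · rw [h, pow_succ]; ring
    · intro p hp _
      rw [Finset.mem_erase] at hp
      exact (inv_spec hb hab hm hK hKmin hKc hp.2 hp.1).2.2.1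
    · intro p hp
      rw [Finset.mem_erase] at hp
      obtain ⟨⟨hm1, hm2⟩, -, -, -⟩ := inv_spec hb hab hm hK hKmin hKc hp.2 hp.1
      rw [Finset.mem_erase]
      exact ⟨hm2, hm1⟩
    · intro p hp
      rw [Finset.mem_erase] at hp
      exact (inv_spec hb hab hm hK hKmin hKc hp.2 hp.1).2.2.2
  rw [hz]
  ring

lemma card_Dab (a b n : ℕ) : (Dab a b n).card = (Sset a b n).card := by
  apply Finset.card_bij (fun P _ => P.parts.toFinset)
  · intro P hP
    rw [Dab, mem_filter] at hP
    obtain ⟨-, hnd, hmod⟩ := hP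
    have hval : P.parts.toFinset.val = P.parts := by
      rw [Multiset.toFinset_val, Multiset.dedup_eq_self.2 hnd]
    rw [mem_Sset]
    constructor
    · intro y hy
      rw [Multiset.mem_toFinset] at hy
      exact ⟨hmod y hy, P.parts_pos hy⟩
    · show (P.parts.toFinset.val.map id).sum = n
      rw [Multiset.map_id, hval]
      exact P.parts_sum
  · intro P hP Q hQ hPQ
    rw [Dab, mem_filter] at hP hQ
    apply Nat.Partition.ext
    have h1 : P.parts.toFinset.val = P.parts := by
      rw [Multiset.toFinset_val, Multiset.dedup_eq_self.2 hP.2.1]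
    have h2 : Q.parts.toFinset.val = Q.parts := by
      rw [Multiset.toFinset_val, Multiset.dedup_eq_self.2 hQ.2.1]
    rw [← h1, ← h2, hPQ]
  · intro Y hY
    rw [mem_Sset] at hY
    obtain ⟨hval, hsum⟩ := hY
    refine ⟨⟨Y.val, fun {x} hx => (hval x hx).2, ?_⟩, ?_, ?_⟩
    · show Y.val.sum = n
      rw [← hsum]
      show Y.val.sum = (Y.val.map id).sum
      rw [Multiset.map_id]
    · rw [Dab, mem_filter]
      exact ⟨mem_univ _, Y.nodup, fun x hx => (hval x hx).1⟩
    · exact Finset.val_toFinset Y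

end Stmt10

open Finset Stmt10


/-- There are residues `r < s < d` such that `|D_{a,b}(n)| ≡ r (mod d)` for infinitely
many `n ≡ bc (mod a)`, and `|D_{a,b}(n)| ≡ s (mod d)` for infinitely many such `n`. -/
theorem stmt10 (a b c d : ℕ) (hb : 1 ≤ b) (hab : b ≤ a) (hd : 2 ≤ d) :
    ∃ r s : ℕ, r < s ∧ s < d ∧
      {n : ℕ | n % a = (b * c) % a ∧ (Dab a b n).card % d = r}.Infinite ∧
      {n : ℕ | n % a = (b * c) % a ∧ (Dab a b n).card % d = s}.Infinite := by
  classical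
  have ha : 0 < a := by omega
  have hd0 : 0 < d := by omega
  -- the residue class is infinite
  have hA_inf : {n : ℕ | n % a = (b * c) % a}.Infinite := by
    apply Set.infinite_of_injective_forall_mem (f := fun t : ℕ => (b * c) % a + a * t)
    · intro t1 t2 h
      simp only at h
      have h2 : a * t1 = a * t2 := by omega
      exact Nat.eq_of_mul_eq_mul_left ha h2
    · intro t
      show ((b * c) % a + a * t) % a = (b * c) % a
      rw [Nat.add_mul_mod_self_left]
      exact Nat.mod_mod_of_dvd _ (dvd_refl a)
  -- pigeonhole : some residue class mod d occurs infinitely often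
  have hpig : ∃ r, r < d ∧ {n : ℕ | n % a = (b * c) % a ∧ (Dab a b n).card % d = r}.Infinite := by
    by_contra hall
    push_neg at hall
    have hfin : (⋃ i ∈ (Finset.range d : Finset ℕ),
        {n : ℕ | n % a = (b * c) % a ∧ (Dab a b n).card % d = i}).Finite := by
      apply Set.Finite.biUnion (Finset.range d).finite_toSet
      intro i hi
      rw [Finset.mem_coe, Finset.mem_range] at hi
      rw [← Set.not_infinite]
      exact Set.not_infinite.2 (hall i hi)
    apply hA_inf
    apply Set.Finite.subset hfin
    intro n hn
    refine Set.mem_biUnion (x := (Dab a b n).card % d) ?_ ?_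
    · exact Finset.mem_range.2 (Nat.mod_lt _ hd0)
    · exact ⟨hn, rfl⟩
  obtain ⟨r, hrd, hrinf⟩ := hpig
  by_contra hcon
  -- all other residues occur finitely often
  have hother : ∀ s, s < d → s ≠ r →
      {n : ℕ | n % a = (b * c) % a ∧ (Dab a b n).card % d = s}.Finite := by
    intro s hsd hsr
    by_contra hfin
    apply hcon
    rcases Nat.lt_or_ge r s with h | h
    · exact ⟨r, s, h, hsd, hrinf, hfin⟩
    · have h2 : s < r := by omega
      exact ⟨s, r, h2, hrd, hfin, hrinf⟩
  have hBfin : (⋃ s ∈ ((Finset.range d).erase r : Finset ℕ),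
      {n : ℕ | n % a = (b * c) % a ∧ (Dab a b n).card % d = s}).Finite := by
    apply Set.Finite.biUnion ((Finset.range d).erase r).finite_toSet
    intro s hs
    rw [Finset.mem_coe, Finset.mem_erase, Finset.mem_range] at hs
    exact hother s hs.2 hs.1
  obtain ⟨N, hN⟩ := hBfin.bddAbove
  have hconst : ∀ n, n % a = (b * c) % a → N + 1 ≤ n → (Dab a b n).card % d = r := by
    intro n h1 h2
    by_contra h3
    have hmem : n ∈ ⋃ s ∈ ((Finset.range d).erase r : Finset ℕ),
        {n : ℕ | n % a = (b * c) % a ∧ (Dab a b n).card % d = s} := by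
      refine Set.mem_biUnion (x := (Dab a b n).card % d) ?_ ?_
      · exact Finset.mem_erase.2 ⟨h3, Finset.mem_range.2 (Nat.mod_lt _ hd0)⟩
      · exact ⟨h1, rfl⟩
    have := hN hmem
    omega
  -- set up the magic evaluation point
  set m : ℕ := max (N + 1) 1 with hmdef
  have hm1 : 1 ≤ m := le_max_right _ _
  have hNm : N + 1 ≤ m := le_max_left _ _
  have hexK : ∃ k', m < k' ∧ k' * b % a = c * b % a := by
    refine ⟨c + a * (m + 1), ?_, ?_⟩
    · have : m + 1 ≤ a * (m + 1) := Nat.le_mul_of_pos_left _ ha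
      omega
    · have he : (c + a * (m + 1)) * b = c * b + a * ((m + 1) * b) := by ring
      rw [he, Nat.add_mul_mod_self_left]
  set K : ℕ := Nat.find hexK with hKdef
  have hKspec := Nat.find_spec hexK
  have hKmin : ∀ k', m < k' → k' * b % a = c * b % a → K ≤ k' := by
    intro k' h1 h2
    exact Nat.find_min' hexK ⟨h1, h2⟩
  have hK : m < K := hKspec.1
  have hKc : K * b % a = c * b % a := hKspec.2
  have hkey := key_identity hb hab hm1 hK hKmin hKc
  set M : ℕ := K * b + a * T K with hMdef
  -- expand the sum over the sigma set
  have hexp : (∑ X ∈ (Icc 1 m).powerset,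
      ((Sset a b (M - a * X.sum id)).card : ℤ) * (-1 : ℤ) ^ X.card) = 1 := by
    rw [Sig, Finset.sum_sigma] at hkey
    refine Eq.trans ?_ hkey
    apply Finset.sum_congr rfl
    intro X _
    show ((Sset a b (M - a * X.sum id)).card : ℤ) * (-1 : ℤ) ^ X.card
        = ∑ _Y ∈ Sset a b (M - a * X.sum id), (-1 : ℤ) ^ X.card
    rw [Finset.sum_const, nsmul_eq_mul]
  -- each summand's partition count is ≡ r mod d
  have hfr : ∀ X ∈ (Icc 1 m).powerset, (Sset a b (M - a * X.sum id)).card % d = r := by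
    intro X hX
    rw [Finset.mem_powerset] at hX
    have hXs : X.sum id ≤ T (m + 1) := by
      rw [← sum_Icc_id]
      exact Finset.sum_le_sum_of_subset hX
    have h1 : a * X.sum id ≤ a * T (m + 1) := Nat.mul_le_mul_left a hXs
    have h2 : a * T (m + 1) ≤ a * T K := Nat.mul_le_mul_left a (T_mono (by omega))
    have h3 : K ≤ K * b := Nat.le_mul_of_pos_right K hb
    have hge : N + 1 ≤ M - a * X.sum id := by omega
    have haXM : a * X.sum id ≤ M := by omega
    have hmod : (M - a * X.sum id) % a = (b * c) % a := by
      have hms : M - a * X.sum id + a * X.sum id = M := by omega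
      have e1 : (M - a * X.sum id) % a = M % a := by
        conv_rhs => rw [← hms, Nat.add_mul_mod_self_left]
      rw [e1, hMdef, Nat.add_mul_mod_self_left, hKc, Nat.mul_comm]
    have := hconst (M - a * X.sum id) hmod hge
    rw [← card_Dab]
    exact this
  -- conclude d ∣ 1
  have hne : (Icc 1 m).Nonempty := ⟨1, mem_Icc.2 ⟨le_refl 1, hm1⟩⟩
  have hs0 : ∑ X ∈ (Icc 1 m).powerset, (-1 : ℤ) ^ X.card = 0 :=
    Finset.sum_powerset_neg_one_pow_card_of_nonempty hne
  have h1 : ∑ X ∈ (Icc 1 m).powerset,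
      (((Sset a b (M - a * X.sum id)).card : ℤ) - r) * (-1 : ℤ) ^ X.card = 1 := by
    have hdecomp : ∑ X ∈ (Icc 1 m).powerset,
        ((Sset a b (M - a * X.sum id)).card : ℤ) * (-1 : ℤ) ^ X.card
        = ∑ X ∈ (Icc 1 m).powerset,
          (((Sset a b (M - a * X.sum id)).card : ℤ) - r) * (-1 : ℤ) ^ X.card
          + (r : ℤ) * ∑ X ∈ (Icc 1 m).powerset, (-1 : ℤ) ^ X.card := by
      rw [Finset.mul_sum, ← Finset.sum_add_distrib]
      apply Finset.sum_congr rfl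
      intro X _
      ring
    rw [hdecomp, hs0, mul_zero, add_zero] at hexp
    exact hexp
  have hdvd : (d : ℤ) ∣ (1 : ℤ) := by
    rw [← h1]
    apply Finset.dvd_sum
    intro X hX
    obtain ⟨q, hq⟩ : ∃ q, (Sset a b (M - a * X.sum id)).card = d * q + r := by
      refine ⟨(Sset a b (M - a * X.sum id)).card / d, ?_⟩
      have := Nat.div_add_mod ((Sset a b (M - a * X.sum id)).card) d
      have h2 := hfr X hX
      omega
    have he : ((Sset a b (M - a * X.sum id)).card : ℤ) - r = d * q := by
      rw [hq]; push_cast; ring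
    rw [he]
    exact dvd_mul_of_dvd_left (dvd_mul_right _ _) _
  have hle : (d : ℤ) ≤ 1 := Int.le_of_dvd one_pos hdvd
  have : d ≤ 1 := by exact_mod_cast hle
  omega
end

section
/- p(2n) takes each value of parity infinitely often: there are infinitely many n with p(2n) even and infinitely many n with p(2n) odd. -/
open Finset PowerSeries

namespace Stmt13

noncomputable def pp (n : ℕ) : ZMod 2 := Fintype.card (Nat.Partition n)

noncomputable def qq (n : ℕ) : ZMod 2 := (Nat.Partition.distincts n).card

def IsPent (n : ℕ) : Prop := ∃ k : ℕ, 2 * n = k * (3 * k - 1) ∨ 2 * n = k * (3 * k + 1)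

open Classical in
noncomputable def ee (n : ℕ) : ZMod 2 := if IsPent n then 1 else 0

lemma ee_pos {m : ℕ} (h : IsPent m) : ee m = 1 := by rw [ee, if_pos h]
lemma ee_neg {m : ℕ} (h : ¬ IsPent m) : ee m = 0 := by rw [ee, if_neg h]

def D (n : ℕ) : Finset (Finset ℕ) :=
  (Finset.range (n + 1)).powerset.filter (fun S => 0 ∉ S ∧ ∑ x ∈ S, x = n)

lemma zmod2_mul_self : ∀ x : ZMod 2, x * x = x := by decide
lemma zmod2_add_self : ∀ x : ZMod 2, x + x = 0 := by decide
lemma zmod2_cases : ∀ z : ZMod 2, z = 0 ∨ z = 1 := by decide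

lemma mem_D {n : ℕ} {S : Finset ℕ} : S ∈ D n ↔ 0 ∉ S ∧ ∑ x ∈ S, x = n := by
  simp only [D, mem_filter, mem_powerset, and_iff_right_iff_imp]
  rintro ⟨h0, hsum⟩ x hx
  have : x ≤ ∑ y ∈ S, y := Finset.single_le_sum (fun i _ => Nat.zero_le i) hx
  simp only [mem_range]; omega

lemma sum_val_eq {S : Finset ℕ} : S.val.sum = ∑ x ∈ S, x := by
  rw [Finset.sum_eq_multiset_sum, Multiset.map_id']

lemma qq_eq_cardD (n : ℕ) : qq n = ((D n).card : ZMod 2) := by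
  unfold qq
  congr 1
  apply Finset.card_bij (fun p _ => p.parts.toFinset)
  · intro p hp
    simp only [Nat.Partition.distincts, mem_filter] at hp
    rw [mem_D]
    have hval : p.parts.toFinset.val = p.parts := by
      rw [Multiset.toFinset_val, Multiset.dedup_eq_self.mpr hp.2]
    constructor
    · intro h0
      rw [Multiset.mem_toFinset] at h0
      exact absurd (p.parts_pos h0) (by omega)
    · rw [← sum_val_eq, hval, p.parts_sum]
  · intro p1 h1 p2 h2 heq
    simp only [Nat.Partition.distincts, mem_filter] at h1 h2
    ext1
    have e1 : p1.parts.toFinset.val = p1.parts := by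
      rw [Multiset.toFinset_val, Multiset.dedup_eq_self.mpr h1.2]
    have e2 : p2.parts.toFinset.val = p2.parts := by
      rw [Multiset.toFinset_val, Multiset.dedup_eq_self.mpr h2.2]
    rw [← e1, ← e2, heq]
  · intro S hS
    rw [mem_D] at hS
    refine ⟨⟨S.val, ?_, ?_⟩, ?_, ?_⟩
    · intro i hi
      have h1 : i ∈ S := hi
      have : i ≠ 0 := fun h => hS.1 (h ▸ h1)
      omega
    · rw [sum_val_eq, hS.2]
    · simp [Nat.Partition.distincts, S.nodup]
    · simp [Finset.val_toFinset]

lemma pp_zero : pp 0 = 1 := by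
  unfold pp
  rw [Fintype.card_unique]
  norm_num

lemma pp_mod {n : ℕ} : pp n = 1 ↔ Fintype.card (Nat.Partition n) % 2 = 1 := by
  unfold pp
  rw [← ZMod.natCast_mod]
  rcases Nat.mod_two_eq_zero_or_one (Fintype.card (Nat.Partition n)) with h | h <;>
    rw [h] <;> simp <;> decide

lemma pp_mod' {n : ℕ} : pp n = 0 ↔ Fintype.card (Nat.Partition n) % 2 = 0 := by
  unfold pp
  rw [← ZMod.natCast_mod]
  rcases Nat.mod_two_eq_zero_or_one (Fintype.card (Nat.Partition n)) with h | h <;>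
    rw [h] <;> simp <;> decide

lemma qq_zero : qq 0 = 1 := by
  unfold qq
  have : (Nat.Partition.distincts 0).card = 1 := by
    apply Finset.card_eq_one.mpr
    refine ⟨default, ?_⟩
    apply Finset.eq_singleton_iff_unique_mem.mpr
    constructor
    · simp [Nat.Partition.distincts]
    · intro x _; exact Subsingleton.elim x default
  rw [this]; norm_num

def pe (t : ℕ) : ℕ :=
  if Even t then (t / 2) * (3 * (t / 2) + 1) / 2
  else ((t + 1) / 2) * (3 * ((t + 1) / 2) - 1) / 2

lemma even_mul_succ (i : ℕ) : 2 ∣ i * (3 * i + 1) := by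
  rcases Nat.even_or_odd i with h | h
  · exact Dvd.dvd.mul_right h.two_dvd _
  · refine Dvd.dvd.mul_left ?_ _
    obtain ⟨j, hj⟩ := h
    omega

lemma even_mul_pred (i : ℕ) : 2 ∣ i * (3 * i - 1) := by
  rcases Nat.even_or_odd i with h | h
  · exact Dvd.dvd.mul_right h.two_dvd _
  · refine Dvd.dvd.mul_left ?_ _
    obtain ⟨j, hj⟩ := h
    omega

lemma pe_two_mul_even (i : ℕ) : 2 * pe (2 * i) = i * (3 * i + 1) := by
  have h : Even (2 * i) := even_two_mul i
  simp only [pe, if_pos h]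
  rw [Nat.mul_div_cancel_left i (by norm_num)]
  exact Nat.mul_div_cancel' (even_mul_succ i)

lemma pe_two_mul_odd (i : ℕ) : 2 * pe (2 * i + 1) = (i + 1) * (3 * (i + 1) - 1) := by
  have h : ¬ Even (2 * i + 1) := by simp [Nat.even_add_one, parity_simps]
  simp only [pe, if_neg h]
  have : (2 * i + 1 + 1) / 2 = i + 1 := by omega
  rw [this]
  exact Nat.mul_div_cancel' (even_mul_pred (i+1))

lemma pe_succ_even (i : ℕ) : pe (2 * i + 1) = pe (2 * i) + (2 * i + 1) := by
  have h1 := pe_two_mul_even i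
  have h2 := pe_two_mul_odd i
  have hu : i * (3 * i + 1) = 3 * (i*i) + i := by ring
  have hv : (i + 1) * (3 * (i + 1) - 1) = 3 * (i*i) + 5*i + 2 := by
    have : 3 * (i+1) - 1 = 3*i + 2 := by omega
    rw [this]; ring
  omega

lemma pe_succ_odd (i : ℕ) : pe (2 * i + 2) = pe (2 * i + 1) + (i + 1) := by
  have h1 := pe_two_mul_odd i
  have h2 : 2 * pe (2 * (i+1)) = (i+1) * (3 * (i+1) + 1) := pe_two_mul_even (i+1)
  have h2' : 2 * pe (2 * i + 2) = (i+1) * (3 * (i+1) + 1) := by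
    have : 2 * (i + 1) = 2 * i + 2 := by ring
    rwa [this] at h2
  have hu : (i+1) * (3 * (i + 1) - 1) = 3 * (i*i) + 5*i + 2 := by
    have : 3 * (i+1) - 1 = 3*i + 2 := by omega
    rw [this]; ring
  have hv : (i+1) * (3 * (i+1) + 1) = 3*(i*i) + 7*i + 4 := by ring
  omega

lemma pe_strictMono : StrictMono pe := by
  have h : ∀ t, pe t < pe (t + 1) := by
    intro t
    rcases Nat.even_or_odd t with ⟨i, hi⟩ | ⟨i, hi⟩
    · subst hi
      rw [show i + i = 2 * i by ring, pe_succ_even]; omega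
    · subst hi
      rw [show 2 * i + 1 + 1 = 2 * i + 2 by ring, pe_succ_odd]; omega
  exact strictMono_nat_of_lt_succ h

lemma pe_zero : pe 0 = 0 := by simp [pe]

lemma isPent_iff {m : ℕ} : IsPent m ↔ ∃ t, pe t = m := by
  constructor
  · rintro ⟨k, hk | hk⟩
    · rcases Nat.eq_zero_or_pos k with rfl | hkpos
      · exact ⟨0, by simp [pe_zero]; omega⟩
      · refine ⟨2 * (k - 1) + 1, ?_⟩
        have := pe_two_mul_odd (k - 1)
        have hk1 : k - 1 + 1 = k := by omega
        rw [hk1] at this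
        omega
    · rcases Nat.eq_zero_or_pos k with rfl | hkpos
      · exact ⟨0, by simp [pe_zero]; omega⟩
      · refine ⟨2 * k, ?_⟩
        have := pe_two_mul_even k
        omega
  · rintro ⟨t, rfl⟩
    rcases Nat.even_or_odd t with ⟨i, hi⟩ | ⟨i, hi⟩
    · subst hi
      refine ⟨i, Or.inr ?_⟩
      rw [show i + i = 2 * i by ring, pe_two_mul_even]
    · subst hi
      refine ⟨i + 1, Or.inl ?_⟩
      rw [show 2 * i + 1 = 2 * i + 1 by rfl, pe_two_mul_odd]

lemma pent_sq {m : ℕ} (h : IsPent m) : ∃ x : ℕ, x * x = 24 * m + 1 := by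
  obtain ⟨k, hk | hk⟩ := h
  · rcases Nat.eq_zero_or_pos k with rfl | hkpos
    · exact ⟨1, by omega⟩
    · refine ⟨6 * k - 1, ?_⟩
      have h3 : k * (3 * k - 1) = 3 * (k * k) - k := by
        cases k with
        | zero => omega
        | succ j =>
          have : 3 * (j + 1) - 1 = 3 * j + 2 := by omega
          rw [this]
          have : 3 * ((j+1)*(j+1)) = 3*j*j + 6*j + 3 := by ring
          rw [this]
          have : (j+1) * (3*j+2) = 3*j*j + 5*j + 2 := by ring
          omega
      have h4 : (6 * k - 1) * (6 * k - 1) = 36 * (k*k) - 12 * k + 1 := by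
        cases k with
        | zero => omega
        | succ j =>
          have e1 : 6 * (j+1) - 1 = 6 * j + 5 := by omega
          rw [e1]
          have : (6*j+5)*(6*j+5) = 36*(j*j) + 60*j + 25 := by ring
          rw [this]
          have : 36 * ((j+1)*(j+1)) = 36*(j*j) + 72*j+36 := by ring
          omega
      have hk3 : k ≤ 3 * (k * k) := by nlinarith
      omega
  · rcases Nat.eq_zero_or_pos k with rfl | hkpos
    · exact ⟨1, by omega⟩
    · refine ⟨6 * k + 1, ?_⟩
      have : (6*k+1)*(6*k+1) = 12 * (k * (3*k+1)) + 1 := by ring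
      omega

noncomputable def phi (S : Finset ℕ) : Finset ℕ :=
  if h : S.Nonempty then
    let M := S.max' h
    let s := S.min' h
    let σ := Nat.findGreatest (fun j => Finset.Icc (M + 1 - j) M ⊆ S) M
    if s ≤ σ then insert (M + 1) ((S.erase s).erase (M + 1 - s))
    else insert σ (insert (M - σ) (S.erase M))
  else ∅

def Exc (S : Finset ℕ) : Prop :=
  ∃ a : ℕ, 1 ≤ a ∧ (S = Finset.Icc a (2 * a - 1) ∨ (2 ≤ a ∧ S = Finset.Icc a (2 * a - 2)))

lemma D_nonempty {n : ℕ} (hn : 0 < n) {S : Finset ℕ} (hS : S ∈ D n) : S.Nonempty := by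
  rcases Finset.eq_empty_or_nonempty S with rfl | h
  · rw [mem_D] at hS; simp at hS; omega
  · exact h

/-- evaluation of phi on the branch -/

lemma phi_eval {S : Finset ℕ} (h : S.Nonempty) :
    phi S = (if S.min' h ≤ Nat.findGreatest
        (fun j => Finset.Icc (S.max' h + 1 - j) (S.max' h) ⊆ S) (S.max' h)
      then insert (S.max' h + 1) ((S.erase (S.min' h)).erase (S.max' h + 1 - S.min' h))
      else insert (Nat.findGreatest (fun j => Finset.Icc (S.max' h + 1 - j) (S.max' h) ⊆ S) (S.max' h))
        (insert (S.max' h - Nat.findGreatest (fun j => Finset.Icc (S.max' h + 1 - j) (S.max' h) ⊆ S) (S.max' h))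
          (S.erase (S.max' h)))) := by
  rw [phi, dif_pos h]

theorem phi_spec {n : ℕ} (hn : 0 < n) {S : Finset ℕ} (hS : S ∈ D n) (hex : ¬ Exc S) :
    phi S ∈ D n ∧ ¬ Exc (phi S) ∧ phi (phi S) = S ∧ phi S ≠ S := by
  obtain ⟨h0, hsum⟩ := mem_D.mp hS
  have h : S.Nonempty := D_nonempty hn hS
  set M := S.max' h with hM_def
  set s := S.min' h with hs_def
  set σ := Nat.findGreatest (fun j => Finset.Icc (M + 1 - j) M ⊆ S) M with hσ_def
  have hM : M ∈ S := S.max'_mem h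
  have hs : s ∈ S := S.min'_mem h
  have hub : ∀ x ∈ S, x ≤ M := fun x hx => S.le_max' x hx
  have hlb : ∀ x ∈ S, s ≤ x := fun x hx => S.min'_le x hx
  have hpos : ∀ x ∈ S, 1 ≤ x := fun x hx => by
    rcases Nat.eq_zero_or_pos x with rfl | h1
    · exact absurd hx h0
    · exact h1
  have hs1 : 1 ≤ s := hpos _ hs
  have hsM : s ≤ M := hlb _ hM
  have hM1 : 1 ≤ M := le_trans hs1 hsM
  have hP1 : Finset.Icc (M + 1 - 1) M ⊆ S := by
    intro x hx
    rw [Finset.mem_Icc] at hx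
    have : x = M := by omega
    rwa [this]
  have hσ1 : 1 ≤ σ := by
    rw [hσ_def]; exact Nat.le_findGreatest hM1 hP1
  have hPσ : Finset.Icc (M + 1 - σ) M ⊆ S := by
    rw [hσ_def]
    exact Nat.findGreatest_spec (P := fun j => Finset.Icc (M + 1 - j) M ⊆ S) hM1 hP1
  have hσM : σ ≤ M := by
    rw [hσ_def]; exact Nat.findGreatest_le M
  have htop : M + 1 - σ ∈ S := hPσ (by rw [Finset.mem_Icc]; omega)
  have hσs : s ≤ M + 1 - σ := hlb _ htop
  have hnotin : σ < M → M - σ ∉ S := by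
    intro hlt hmem
    have hP : Finset.Icc (M + 1 - (σ + 1)) M ⊆ S := by
      intro x hx
      rw [Finset.mem_Icc] at hx
      rcases Nat.eq_or_lt_of_le hx.1 with heq | hlt2
      · rw [← heq]
        have : M + 1 - (σ + 1) = M - σ := by omega
        rwa [this]
      · exact hPσ (by rw [Finset.mem_Icc]; omega)
    have hgr : ¬ (Finset.Icc (M + 1 - (σ + 1)) M ⊆ S) := by
      have h1 : Nat.findGreatest (fun j => Finset.Icc (M + 1 - j) M ⊆ S) M < σ + 1 := by
        rw [← hσ_def]; omega
      exact Nat.findGreatest_is_greatest h1 (by omega)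
    exact hgr hP
  have hSsub : S ⊆ Finset.Icc s M := fun x hx => by
    rw [Finset.mem_Icc]; exact ⟨hlb x hx, hub x hx⟩
  by_cases hcase : s ≤ σ
  -- ===================== CASE A =====================
  · have hA2s : 2 * s ≤ M := by
      by_contra h2s
      push_neg at h2s
      have h1 : σ ≤ M + 1 - s := by omega
      have h2 : M + 1 - s ≤ s := by omega
      have hσeq : σ = s := by omega
      have hMeq : M = 2 * s - 1 := by omega
      have hSeq : S = Finset.Icc s M := by
        apply Finset.Subset.antisymm hSsub
        have : Finset.Icc s M = Finset.Icc (M + 1 - σ) M := by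
          congr 1; omega
        rw [this]; exact hPσ
      exact hex ⟨s, hs1, Or.inl (by rw [hSeq, hMeq])⟩
    have hsltMs : s < M + 1 - s := by omega
    have hMs_in : M + 1 - s ∈ S := hPσ (by rw [Finset.mem_Icc]; omega)
    set S' := insert (M + 1) ((S.erase s).erase (M + 1 - s)) with hS'_def
    have hphiS : phi S = S' := by
      rw [phi_eval h, if_pos hcase]
    have hmemS' : ∀ x, x ∈ S' ↔ x = M + 1 ∨ (x ∈ S ∧ x ≠ s ∧ x ≠ M + 1 - s) := by
      intro x
      simp only [hS'_def, Finset.mem_insert, Finset.mem_erase]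
      tauto
    have hMs_er : M + 1 - s ∈ S.erase s := Finset.mem_erase.mpr ⟨by omega, hMs_in⟩
    have hM1nT : M + 1 ∉ (S.erase s).erase (M + 1 - s) := by
      intro hmem
      have := hub _ (Finset.mem_of_mem_erase (Finset.mem_of_mem_erase hmem))
      omega
    have hsum' : ∑ x ∈ S', x = n := by
      rw [hS'_def, Finset.sum_insert hM1nT]
      have e1 : (M + 1 - s) + ∑ x ∈ (S.erase s).erase (M + 1 - s), x = ∑ x ∈ S.erase s, x := by
        simpa using Finset.add_sum_erase _ (fun x => x) hMs_er
      have e2 : s + ∑ x ∈ S.erase s, x = ∑ x ∈ S, x := by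
        simpa using Finset.add_sum_erase _ (fun x => x) hs
      omega
    have hS'_mem : S' ∈ D n := by
      rw [mem_D]
      refine ⟨?_, hsum'⟩
      intro h0'
      rcases (hmemS' 0).mp h0' with h1 | ⟨h1, _, _⟩
      · omega
      · exact h0 h1
    have h' : S'.Nonempty := ⟨M + 1, (hmemS' _).mpr (Or.inl rfl)⟩
    have hmax' : S'.max' h' = M + 1 := by
      apply le_antisymm
      · apply Finset.max'_le
        intro x hx
        rcases (hmemS' x).mp hx with rfl | ⟨h1, _, _⟩
        · exact le_refl _
        · exact le_trans (hub x h1) (by omega)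
      · exact Finset.le_max' _ _ ((hmemS' _).mpr (Or.inl rfl))
    have hmin'_gt : s < S'.min' h' := by
      have hmm := S'.min'_mem h'
      rcases (hmemS' _).mp hmm with h1 | ⟨h1, h2, _⟩
      · omega
      · have := hlb _ h1; omega
    have hP's : Finset.Icc (M + 1 + 1 - s) (M + 1) ⊆ S' := by
      intro x hx
      rw [Finset.mem_Icc] at hx
      rcases Nat.eq_or_lt_of_le hx.2 with heq | hlt2
      · rw [heq]; exact (hmemS' _).mpr (Or.inl rfl)
      · apply (hmemS' x).mpr
        refine Or.inr ⟨hPσ (by rw [Finset.mem_Icc]; omega), by omega, by omega⟩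
    have hMs_nS' : M + 1 - s ∉ S' := by
      intro hmem
      rcases (hmemS' _).mp hmem with h1 | ⟨_, _, h3⟩
      · omega
      · exact h3 rfl
    set σ' := Nat.findGreatest (fun j => Finset.Icc (M + 1 + 1 - j) (M + 1) ⊆ S') (M + 1) with hσ'_def
    have hσ'_ge : s ≤ σ' := by
      rw [hσ'_def]; exact Nat.le_findGreatest (by omega) hP's
    have hσ'_le : σ' ≤ s := by
      by_contra hgt
      push_neg at hgt
      have hP'σ' : Finset.Icc (M + 1 + 1 - σ') (M + 1) ⊆ S' := by
        rw [hσ'_def]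
        exact Nat.findGreatest_spec (P := fun j => Finset.Icc (M + 1 + 1 - j) (M + 1) ⊆ S') (by omega) hP's
      exact hMs_nS' (hP'σ' (by rw [Finset.mem_Icc]; omega))
    have hσ'_eq : σ' = s := le_antisymm hσ'_le hσ'_ge
    have hphiS' : phi S' = S := by
      rw [phi_eval h']
      have hcond : ¬ (S'.min' h' ≤ Nat.findGreatest
          (fun j => Finset.Icc (S'.max' h' + 1 - j) (S'.max' h') ⊆ S') (S'.max' h')) := by
        rw [hmax']
        rw [← hσ'_def, hσ'_eq]
        omega
      rw [if_neg hcond, hmax', ← hσ'_def, hσ'_eq]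
      have e1 : S'.erase (M + 1) = (S.erase s).erase (M + 1 - s) := by
        rw [hS'_def, Finset.erase_insert hM1nT]
      rw [e1, Finset.insert_erase hMs_er, Finset.insert_erase hs]
    have hexS' : ¬ Exc S' := by
      rintro ⟨a, ha1, hc⟩
      have hab : ∀ b, S' = Finset.Icc a b → (a ≤ M + 1 ∧ b = M + 1) := by
        intro b hb
        have hm1 : M + 1 ∈ Finset.Icc a b := by rw [← hb]; exact (hmemS' _).mpr (Or.inl rfl)
        rw [Finset.mem_Icc] at hm1
        have hble : b ∈ S' := by
          rw [hb]; rw [Finset.mem_Icc]; omega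
        have hbub : b ≤ M + 1 := by
          rcases (hmemS' b).mp hble with h1 | ⟨h1, _, _⟩
          · omega
          · have := hub _ h1; omega
        exact ⟨hm1.1, by omega⟩
      have hMs2_in : M + 2 - s ∈ S' := hP's (by rw [Finset.mem_Icc]; omega)
      rcases hc with hb | ⟨ha2, hb⟩
      · obtain ⟨haM, hbM⟩ := hab _ hb
        by_cases hge : a ≤ M + 1 - s
        · exact hMs_nS' (by rw [hb, Finset.mem_Icc]; omega)
        · push_neg at hge
          have : a ≤ M + 2 - s := by
            have := hMs2_in
            rw [hb, Finset.mem_Icc] at this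
            omega
          have haeq : a = M + 2 - s := by omega
          omega
      · obtain ⟨haM, hbM⟩ := hab _ hb
        by_cases hge : a ≤ M + 1 - s
        · exact hMs_nS' (by rw [hb, Finset.mem_Icc]; omega)
        · push_neg at hge
          have : a ≤ M + 2 - s := by
            have := hMs2_in
            rw [hb, Finset.mem_Icc] at this
            omega
          have haeq : a = M + 2 - s := by omega
          omega
    have hne : phi S ≠ S := by
      rw [hphiS]
      intro heq
      have : M + 1 ∈ S := by rw [← heq]; exact (hmemS' _).mpr (Or.inl rfl)
      have := hub _ this
      omega
    rw [hphiS]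
    exact ⟨hS'_mem, hexS', by rw [hphiS'], by rw [← hphiS]; exact hne⟩
  -- ===================== CASE B =====================
  · push_neg at hcase
    have hσltM : σ < M := by
      rcases Nat.eq_or_lt_of_le hσM with heq | hlt
      · exfalso
        have h1in : (1 : ℕ) ∈ S := by
          have := htop
          rw [heq] at this
          have e : M + 1 - M = 1 := by omega
          rwa [e] at this
        have := hlb _ h1in
        omega
      · exact hlt
    have hMσ_notin : M - σ ∉ S := hnotin hσltM
    have hM2σ : 2 * σ ≤ M := by
      have := hσs
      omega
    have hM2σ1 : 2 * σ + 1 ≤ M := by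
      rcases Nat.eq_or_lt_of_le hM2σ with heq | hlt
      · exfalso
        have hseq : s = σ + 1 := by omega
        have hSeq : S = Finset.Icc s M := by
          apply Finset.Subset.antisymm hSsub
          have e : Finset.Icc s M = Finset.Icc (M + 1 - σ) M := by
            congr 1; omega
          rw [e]; exact hPσ
        apply hex
        refine ⟨s, by omega, Or.inr ⟨by omega, ?_⟩⟩
        rw [hSeq]
        congr 1
        omega
      · omega
    set S' := insert σ (insert (M - σ) (S.erase M)) with hS'_def
    have hphiS : phi S = S' := by
      have hcondB : ¬ (S.min' h ≤ Nat.findGreatest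
          (fun j => Finset.Icc (S.max' h + 1 - j) (S.max' h) ⊆ S) (S.max' h)) := by
        rw [← hM_def, ← hs_def, ← hσ_def]; omega
      rw [phi_eval h, if_neg hcondB, ← hM_def, ← hσ_def]
    have hmemS' : ∀ x, x ∈ S' ↔ x = σ ∨ x = M - σ ∨ (x ∈ S ∧ x ≠ M) := by
      intro x
      simp only [hS'_def, Finset.mem_insert, Finset.mem_erase]
      tauto
    have hσ_nin : σ ∉ insert (M - σ) (S.erase M) := by
      intro hmem
      rcases Finset.mem_insert.mp hmem with h1 | h1
      · omega
      · have := hlb _ (Finset.mem_of_mem_erase h1); omega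
    have hMσ_nin : M - σ ∉ S.erase M := fun h1 => hMσ_notin (Finset.mem_of_mem_erase h1)
    have hsum' : ∑ x ∈ S', x = n := by
      rw [hS'_def, Finset.sum_insert hσ_nin, Finset.sum_insert hMσ_nin]
      have e2 : M + ∑ x ∈ S.erase M, x = ∑ x ∈ S, x := by
        simpa using Finset.add_sum_erase _ (fun x => x) hM
      omega
    have hS'_mem : S' ∈ D n := by
      rw [mem_D]
      refine ⟨?_, hsum'⟩
      intro h0'
      rcases (hmemS' 0).mp h0' with h1 | h1 | ⟨h1, _⟩
      · omega
      · omega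
      · exact h0 h1
    have h' : S'.Nonempty := ⟨σ, (hmemS' _).mpr (Or.inl rfl)⟩
    have hmax' : S'.max' h' = M - 1 := by
      apply le_antisymm
      · apply Finset.max'_le
        intro x hx
        rcases (hmemS' x).mp hx with rfl | rfl | ⟨h1, h2⟩
        · omega
        · omega
        · have := hub _ h1; omega
      · apply Finset.le_max'
        apply (hmemS' _).mpr
        rcases Nat.eq_or_lt_of_le hσ1 with heq | hlt
        · exact Or.inr (Or.inl (by omega))
        · refine Or.inr (Or.inr ⟨hPσ ?_, by omega⟩)
          rw [Finset.mem_Icc]; omega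
    have hmin' : S'.min' h' = σ := by
      apply le_antisymm
      · exact Finset.min'_le _ _ ((hmemS' _).mpr (Or.inl rfl))
      · apply Finset.le_min'
        intro x hx
        rcases (hmemS' x).mp hx with rfl | rfl | ⟨h1, _⟩
        · omega
        · omega
        · have := hlb _ h1; omega
    set σ'' := Nat.findGreatest (fun j => Finset.Icc (M - 1 + 1 - j) (M - 1) ⊆ S') (M - 1) with hσ''_def
    have hP''σ : Finset.Icc (M - 1 + 1 - σ) (M - 1) ⊆ S' := by
      intro x hx
      rw [Finset.mem_Icc] at hx
      apply (hmemS' x).mpr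
      rcases Nat.eq_or_lt_of_le hx.1 with heq | hlt2
      · exact Or.inr (Or.inl (by omega))
      · refine Or.inr (Or.inr ⟨hPσ ?_, by omega⟩)
        rw [Finset.mem_Icc]; omega
    have hσ''_ge : σ ≤ σ'' := by
      rw [hσ''_def]; exact Nat.le_findGreatest (by omega) hP''σ
    have hphiS' : phi S' = S := by
      rw [phi_eval h']
      have hcond : S'.min' h' ≤ Nat.findGreatest
          (fun j => Finset.Icc (S'.max' h' + 1 - j) (S'.max' h') ⊆ S') (S'.max' h') := by
        rw [hmax', hmin', ← hσ''_def]
        exact hσ''_ge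
      rw [if_pos hcond, hmax', hmin']
      rw [show M - 1 + 1 = M by omega]
      have e1 : S'.erase σ = insert (M - σ) (S.erase M) := by
        rw [hS'_def, Finset.erase_insert hσ_nin]
      rw [e1, Finset.erase_insert hMσ_nin, Finset.insert_erase hM]
    have hexS' : ¬ Exc S' := by
      rintro ⟨a, ha1, hc⟩
      have hminmax : ∀ b, S' = Finset.Icc a b → (a = σ ∧ b = M - 1) := by
        intro b hb
        have hne2 : (Finset.Icc a b).Nonempty := hb ▸ h'
        have hab2 : a ≤ b := by
          obtain ⟨x, hx⟩ := hne2
          rw [Finset.mem_Icc] at hx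
          omega
        have hamem : a ∈ S' := by rw [hb, Finset.mem_Icc]; omega
        have hbmem : b ∈ S' := by rw [hb, Finset.mem_Icc]; omega
        have hσmem : σ ∈ Finset.Icc a b := by rw [← hb]; exact (hmemS' _).mpr (Or.inl rfl)
        have hMmem : M - 1 ∈ Finset.Icc a b := by
          rw [← hb, ← hmax']; exact S'.max'_mem h'
        rw [Finset.mem_Icc] at hσmem hMmem
        have h1 : σ ≤ a := hmin' ▸ S'.min'_le a hamem
        have h2 : b ≤ M - 1 := hmax' ▸ S'.le_max' b hbmem
        omega
      rcases hc with hb | ⟨ha2, hb⟩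
      · obtain ⟨he1, he2⟩ := hminmax _ hb
        omega
      · obtain ⟨he1, he2⟩ := hminmax _ hb
        omega
    have hne : phi S ≠ S := by
      rw [hphiS]
      intro heq
      have : σ ∈ S := by rw [← heq]; exact (hmemS' _).mpr (Or.inl rfl)
      have := hlb _ this
      omega
    rw [hphiS]
    exact ⟨hS'_mem, hexS', by rw [hphiS'], by rw [← hphiS]; exact hne⟩

lemma my_gauss (a b : ℕ) (ha : 1 ≤ a) (hab : a ≤ b + 1) :
    (∑ i ∈ Finset.Icc a b, i) * 2 = (b + a) * (b + 1 - a) := by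
  rw [← Finset.Ico_add_one_right_eq_Icc]
  have h1 : (∑ i ∈ Finset.Ico 0 a, i) + (∑ i ∈ Finset.Ico a (b+1), i)
      = ∑ i ∈ Finset.Ico 0 (b+1), i :=
    Finset.sum_Ico_consecutive _ (Nat.zero_le a) hab
  have h2 := Finset.sum_range_id_mul_two (b+1)
  have h3 := Finset.sum_range_id_mul_two a
  rw [Finset.range_eq_Ico] at h2 h3
  have e2 : (b + 1 - 1) = b := by omega
  rw [e2] at h2
  zify [hab, ha] at h1 h2 h3 ⊢
  linear_combination 2*h1 + h2 - h3

lemma exc_sum_pent {n : ℕ} {S : Finset ℕ} (hS : S ∈ D n) (h : Exc S) :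
    ∃ k : ℕ, 2 * n = k * (3 * k - 1) ∨ 2 * n = k * (3 * k + 1) := by
  obtain ⟨h0, hsum⟩ := mem_D.mp hS
  obtain ⟨a, ha1, hc | ⟨ha2, hc⟩⟩ := h
  · refine ⟨a, Or.inl ?_⟩
    have := my_gauss a (2 * a - 1) ha1 (by omega)
    rw [← hc, hsum] at this
    have e1 : (2 * a - 1 + a) = 3 * a - 1 := by omega
    have e2 : (2 * a - 1 + 1 - a) = a := by omega
    rw [e1, e2] at this
    have e3 : (3 * a - 1) * a = a * (3 * a - 1) := Nat.mul_comm _ _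
    omega
  · refine ⟨a - 1, Or.inr ?_⟩
    have := my_gauss a (2 * a - 2) ha1 (by omega)
    rw [← hc, hsum] at this
    have e1 : (2 * a - 2 + a) = 3 * a - 2 := by omega
    have e2 : (2 * a - 2 + 1 - a) = a - 1 := by omega
    rw [e1, e2] at this
    have e3 : (3 * a - 2) * (a - 1) = (a - 1) * (3 * (a - 1) + 1) := by
      have e4 : 3 * (a - 1) + 1 = 3 * a - 2 := by omega
      rw [e4, Nat.mul_comm]
    omega

lemma exc_exists {n : ℕ} (hn : 0 < n)
    (h : ∃ k : ℕ, 2 * n = k * (3 * k - 1) ∨ 2 * n = k * (3 * k + 1)) :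
    ∃ S ∈ D n, Exc S := by
  obtain ⟨k, hk | hk⟩ := h
  · have hk1 : 1 ≤ k := by
      by_contra hk0
      interval_cases k <;> omega
    refine ⟨Finset.Icc k (2 * k - 1), ?_, ⟨k, hk1, Or.inl rfl⟩⟩
    rw [mem_D]
    constructor
    · intro hmem
      rw [Finset.mem_Icc] at hmem
      omega
    · have := my_gauss k (2 * k - 1) hk1 (by omega)
      have e1 : (2 * k - 1 + k) = 3 * k - 1 := by omega
      have e2 : (2 * k - 1 + 1 - k) = k := by omega
      rw [e1, e2] at this
      have e3 : (3 * k - 1) * k = k * (3 * k - 1) := Nat.mul_comm _ _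
      omega
  · have hk1 : 1 ≤ k := by
      by_contra hk0
      interval_cases k <;> omega
    refine ⟨Finset.Icc (k + 1) (2 * k), ?_, ⟨k + 1, by omega, Or.inr ⟨by omega, by rw [show 2 * (k + 1) - 2 = 2 * k from by omega]⟩⟩⟩
    rw [mem_D]
    constructor
    · intro hmem
      rw [Finset.mem_Icc] at hmem
      omega
    · have := my_gauss (k + 1) (2 * k) (by omega) (by omega)
      have e1 : (2 * k + (k + 1)) = 3 * k + 1 := by omega
      have e2 : (2 * k + 1 - (k + 1)) = k := by omega
      rw [e1, e2] at this
      have e3 : (3 * k + 1) * k = k * (3 * k + 1) := Nat.mul_comm _ _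
      omega

lemma exc_sq {n : ℕ} {S : Finset ℕ} (hS : S ∈ D n) (h : Exc S) :
    ∃ a, 1 ≤ a ∧ ((S = Finset.Icc a (2 * a - 1) ∧ (6 * a - 1) * (6 * a - 1) = 24 * n + 1)
      ∨ (2 ≤ a ∧ S = Finset.Icc a (2 * a - 2) ∧ (6 * a - 5) * (6 * a - 5) = 24 * n + 1)) := by
  obtain ⟨h0, hsum⟩ := mem_D.mp hS
  obtain ⟨a, ha1, hc | ⟨ha2, hc⟩⟩ := h
  · refine ⟨a, ha1, Or.inl ⟨hc, ?_⟩⟩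
    have := my_gauss a (2 * a - 1) ha1 (by omega)
    rw [← hc, hsum] at this
    have e1 : (2 * a - 1 + a) = 3 * a - 1 := by omega
    have e2 : (2 * a - 1 + 1 - a) = a := by omega
    rw [e1, e2] at this
    -- this : n * 2 = (3 * a - 1) * a
    obtain ⟨j, rfl⟩ : ∃ j, a = j + 1 := ⟨a - 1, by omega⟩
    have e4 : (3 * (j + 1) - 1) = 3 * j + 2 := by omega
    rw [e4] at this
    have e5 : (3 * j + 2) * (j + 1) = 3 * (j * j) + 5 * j + 2 := by ring
    have e6 : 6 * (j + 1) - 1 = 6 * j + 5 := by omega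
    rw [e6]
    have e7 : (6 * j + 5) * (6 * j + 5) = 36 * (j * j) + 60 * j + 25 := by ring
    omega
  · refine ⟨a, ha1, Or.inr ⟨ha2, hc, ?_⟩⟩
    have := my_gauss a (2 * a - 2) ha1 (by omega)
    rw [← hc, hsum] at this
    have e1 : (2 * a - 2 + a) = 3 * a - 2 := by omega
    have e2 : (2 * a - 2 + 1 - a) = a - 1 := by omega
    rw [e1, e2] at this
    obtain ⟨j, rfl⟩ : ∃ j, a = j + 2 := ⟨a - 2, by omega⟩
    have e4 : (3 * (j + 2) - 2) = 3 * j + 4 := by omega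
    rw [e4] at this
    have e5 : (3 * j + 4) * (j + 2 - 1) = 3 * (j * j) + 7 * j + 4 := by
      have : j + 2 - 1 = j + 1 := by omega
      rw [this]; ring
    have e6 : 6 * (j + 2) - 5 = 6 * j + 7 := by omega
    rw [e6]
    have e7 : (6 * j + 7) * (6 * j + 7) = 36 * (j * j) + 84 * j + 49 := by ring
    omega

lemma exc_unique {n : ℕ} {S T : Finset ℕ} (hS : S ∈ D n) (hT : T ∈ D n)
    (h1 : Exc S) (h2 : Exc T) : S = T := by
  obtain ⟨a, ha1, hca⟩ := exc_sq hS h1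
  obtain ⟨b, hb1, hcb⟩ := exc_sq hT h2
  rcases hca with ⟨hSa, hqa⟩ | ⟨ha2, hSa, hqa⟩ <;> rcases hcb with ⟨hTb, hqb⟩ | ⟨hb2, hTb, hqb⟩
  · have : 6 * a - 1 = 6 * b - 1 := by
      have := Nat.mul_self_inj.mp (by omega : (6*a-1) * (6*a-1) = (6*b-1) * (6*b-1))
      omega
    have hab : a = b := by omega
    rw [hSa, hTb, hab]
  · exfalso
    have : 6 * a - 1 = 6 * b - 5 := by
      have := Nat.mul_self_inj.mp (by omega : (6*a-1) * (6*a-1) = (6*b-5) * (6*b-5))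
      omega
    omega
  · exfalso
    have : 6 * a - 5 = 6 * b - 1 := by
      have := Nat.mul_self_inj.mp (by omega : (6*a-5) * (6*a-5) = (6*b-1) * (6*b-1))
      omega
    omega
  · have : 6 * a - 5 = 6 * b - 5 := by
      have := Nat.mul_self_inj.mp (by omega : (6*a-5) * (6*a-5) = (6*b-5) * (6*b-5))
      omega
    have hab : a = b := by omega
    rw [hSa, hTb, hab]

theorem qq_eq_ee (n : ℕ) : qq n = ee n := by
  rcases Nat.eq_zero_or_pos n with rfl | hn
  · rw [qq_zero, ee_pos ⟨0, by omega⟩]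
  have hsum : qq n = ∑ _S ∈ D n, (1 : ZMod 2) := by
    rw [qq_eq_cardD, Finset.sum_const, nsmul_eq_mul, mul_one]
  by_cases hp : IsPent n
  · obtain ⟨E, hE, hEexc⟩ := exc_exists hn hp
    rw [ee_pos hp, hsum, ← Finset.sum_erase_add (D n) _ hE]
    have hzero : ∑ _S ∈ (D n).erase E, (1 : ZMod 2) = 0 := by
      apply Finset.sum_involution (fun S _ => phi S)
      · intro a _; exact zmod2_add_self 1
      · intro a ha _
        have haD := Finset.mem_of_mem_erase ha
        have hane := (Finset.mem_erase.mp ha).1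
        have hnex : ¬ Exc a := fun hx => hane (exc_unique haD hE hx hEexc)
        exact (phi_spec hn haD hnex).2.2.2
      · intro a ha
        have haD := Finset.mem_of_mem_erase ha
        have hane := (Finset.mem_erase.mp ha).1
        have hnex : ¬ Exc a := fun hx => hane (exc_unique haD hE hx hEexc)
        obtain ⟨h1, h2, _, _⟩ := phi_spec hn haD hnex
        refine Finset.mem_erase.mpr ⟨?_, h1⟩
        intro heq
        exact h2 (heq ▸ hEexc)
      · intro a ha
        have haD := Finset.mem_of_mem_erase ha
        have hane := (Finset.mem_erase.mp ha).1
        have hnex : ¬ Exc a := fun hx => hane (exc_unique haD hE hx hEexc)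
        exact (phi_spec hn haD hnex).2.2.1
    rw [hzero, zero_add]
  · rw [ee_neg hp, hsum]
    apply Finset.sum_involution (fun S _ => phi S)
    · intro a _; exact zmod2_add_self 1
    · intro a ha _
      have hnex : ¬ Exc a := fun hx => hp (exc_sum_pent ha hx)
      exact (phi_spec hn ha hnex).2.2.2
    · intro a ha
      have hnex : ¬ Exc a := fun hx => hp (exc_sum_pent ha hx)
      exact (phi_spec hn ha hnex).1
    · intro a ha
      have hnex : ¬ Exc a := fun hx => hp (exc_sum_pent ha hx)
      exact (phi_spec hn ha hnex).2.2.1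

lemma sup_id_mem {t : Finset ℕ} (h : t.Nonempty) : t.sup id ∈ t := by
  have h1 : t.sup id = t.max' h := by
    apply le_antisymm
    · exact Finset.sup_le fun x hx => Finset.le_max' t x hx
    · exact Finset.le_sup (f := id) (Finset.max'_mem t h)
  rw [h1]; exact Finset.max'_mem t h

def PL (n : ℕ) : Finset (Multiset ℕ) :=
  (Finset.univ : Finset (Nat.Partition n)).image Nat.Partition.parts

lemma mem_PL {n : ℕ} {L : Multiset ℕ} : L ∈ PL n ↔ (∀ x ∈ L, 0 < x) ∧ L.sum = n := by
  constructor
  · rintro hL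
    simp only [PL, mem_image] at hL
    obtain ⟨p, _, rfl⟩ := hL
    exact ⟨fun x hx => p.parts_pos hx, p.parts_sum⟩
  · rintro ⟨h1, h2⟩
    simp only [PL, mem_image]
    exact ⟨⟨L, fun hx => h1 _ hx, h2⟩, mem_univ _, rfl⟩

lemma card_PL (n : ℕ) : (PL n).card = Fintype.card (Nat.Partition n) := by
  rw [PL, Finset.card_image_of_injective _ (fun p q h => Nat.Partition.ext h), card_univ]

lemma pp_eq_cardPL (n : ℕ) : ((PL n).card : ZMod 2) = pp n := by
  rw [card_PL]; rfl

def BP (n : ℕ) : Finset (Finset ℕ × Multiset ℕ) :=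
  (Finset.range (n + 1)).biUnion (fun m => (D m) ×ˢ (PL (n - m)))

lemma mem_BP {n : ℕ} {p : Finset ℕ × Multiset ℕ} :
    p ∈ BP n ↔ 0 ∉ p.1 ∧ (∀ x ∈ p.2, 0 < x) ∧ (∑ x ∈ p.1, x) + p.2.sum = n := by
  simp only [BP, mem_biUnion, mem_range, mem_product, mem_D, mem_PL]
  constructor
  · rintro ⟨m, hm, ⟨h0, hsum⟩, hpos, hsum2⟩
    exact ⟨h0, hpos, by omega⟩
  · rintro ⟨h0, hpos, hsum⟩
    exact ⟨∑ x ∈ p.1, x, by omega, ⟨h0, rfl⟩, hpos, by omega⟩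

lemma sum_BP (n : ℕ) :
    (∑ _p ∈ BP n, (1 : ZMod 2)) = ∑ m ∈ Finset.range (n + 1), qq m * pp (n - m) := by
  rw [BP, Finset.sum_biUnion]
  · apply Finset.sum_congr rfl
    intro m _
    rw [Finset.sum_const, Finset.card_product, nsmul_eq_mul, mul_one, Nat.cast_mul,
      qq_eq_cardD, pp_eq_cardPL]
  · intro a ha b hb hab
    simp only [Finset.disjoint_left]
    intro p hpa hpb
    simp only [mem_product, mem_D, mem_PL] at hpa hpb
    exact hab (hpa.1.2 ▸ hpb.1.2 ▸ rfl)

/-- the involution -/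

def gv (p : Finset ℕ × Multiset ℕ) : Finset ℕ × Multiset ℕ :=
  let ℓ := (p.1 ∪ p.2.toFinset).sup id
  if ℓ ∈ p.1 then (p.1.erase ℓ, ℓ ::ₘ p.2)
  else (insert ℓ p.1, p.2.erase ℓ)

lemma top_spec {n : ℕ} (hn : 0 < n) {p : Finset ℕ × Multiset ℕ} (hp : p ∈ BP n) :
    ((p.1 ∪ p.2.toFinset).sup id ∈ p.1 ∨ (p.1 ∪ p.2.toFinset).sup id ∈ p.2) ∧
    (∀ x ∈ p.1, x ≤ (p.1 ∪ p.2.toFinset).sup id) ∧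
    (∀ x ∈ p.2, x ≤ (p.1 ∪ p.2.toFinset).sup id) := by
  rw [mem_BP] at hp
  have hne : (p.1 ∪ p.2.toFinset).Nonempty := by
    rcases Finset.eq_empty_or_nonempty p.1 with h1 | h1
    · rcases Multiset.empty_or_exists_mem p.2 with h2 | ⟨x, hx⟩
      · exfalso; rw [h1, h2] at hp; simp at hp; omega
      · exact ⟨x, Finset.mem_union_right _ (Multiset.mem_toFinset.mpr hx)⟩
    · obtain ⟨x, hx⟩ := h1
      exact ⟨x, Finset.mem_union_left _ hx⟩
  refine ⟨?_, ?_, ?_⟩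
  · have := sup_id_mem hne
    rcases Finset.mem_union.mp this with h | h
    · exact Or.inl h
    · exact Or.inr (Multiset.mem_toFinset.mp h)
  · intro x hx
    exact Finset.le_sup (f := id) (Finset.mem_union_left _ hx)
  · intro x hx
    exact Finset.le_sup (f := id) (Finset.mem_union_right _ (Multiset.mem_toFinset.mpr hx))

lemma gv_mem {n : ℕ} (hn : 0 < n) {p : Finset ℕ × Multiset ℕ} (hp : p ∈ BP n) :
    gv p ∈ BP n := by
  obtain ⟨hmem, hb1, hb2⟩ := top_spec hn hp
  rw [mem_BP] at hp ⊢
  obtain ⟨h0, hpos, hsum⟩ := hp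
  set ℓ := (p.1 ∪ p.2.toFinset).sup id with hℓ
  by_cases hc : ℓ ∈ p.1
  · simp only [gv, ← hℓ, if_pos hc]
    refine ⟨fun h => h0 (Finset.mem_of_mem_erase h), ?_, ?_⟩
    · intro x hx
      rcases Multiset.mem_cons.mp hx with rfl | hx
      · have : ℓ ≠ 0 := fun he => h0 (he ▸ hc)
        omega
      · exact hpos x hx
    · simp only [Multiset.sum_cons]
      have h' : ℓ + ∑ x ∈ p.1.erase ℓ, x = ∑ x ∈ p.1, x := by
        simpa using Finset.add_sum_erase p.1 (fun x => x) hc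
      omega
  · simp only [gv, ← hℓ, if_neg hc]
    have hℓ2 : ℓ ∈ p.2 := by tauto
    refine ⟨?_, fun x hx => hpos x (Multiset.mem_of_mem_erase hx), ?_⟩
    · intro h
      rcases Finset.mem_insert.mp h with h | h
      · exact absurd (hpos _ hℓ2) (by omega)
      · exact h0 h
    · rw [Finset.sum_insert hc]
      have hce : ℓ ::ₘ p.2.erase ℓ = p.2 := Multiset.cons_erase hℓ2
      have hsum2 : ℓ + (p.2.erase ℓ).sum = p.2.sum := by
        conv_rhs => rw [← hce]
        simp [Multiset.sum_cons]
      omega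

lemma gv_invol {n : ℕ} (hn : 0 < n) {p : Finset ℕ × Multiset ℕ} (hp : p ∈ BP n) :
    gv (gv p) = p := by
  obtain ⟨hmem, hb1, hb2⟩ := top_spec hn hp
  set ℓ := (p.1 ∪ p.2.toFinset).sup id with hℓ
  by_cases hc : ℓ ∈ p.1
  · have h1 : gv p = (p.1.erase ℓ, ℓ ::ₘ p.2) := by simp only [gv, ← hℓ, if_pos hc]
    rw [h1]
    have htop : ((p.1.erase ℓ) ∪ (ℓ ::ₘ p.2).toFinset).sup id = ℓ := by
      apply le_antisymm
      · apply Finset.sup_le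
        intro x hx
        rcases Finset.mem_union.mp hx with h | h
        · exact hb1 x (Finset.mem_of_mem_erase h)
        · rcases Multiset.mem_cons.mp (Multiset.mem_toFinset.mp h) with rfl | h
          · exact le_refl _
          · exact hb2 x h
      · exact Finset.le_sup (f := id) (Finset.mem_union_right _
          (Multiset.mem_toFinset.mpr (Multiset.mem_cons_self _ _)))
    have hnotin : ℓ ∉ p.1.erase ℓ := Finset.notMem_erase _ _
    simp only [gv, htop, if_neg hnotin]
    rw [Finset.insert_erase hc, Multiset.erase_cons_head]
  · have hℓ2 : ℓ ∈ p.2 := by tauto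
    have h1 : gv p = (insert ℓ p.1, p.2.erase ℓ) := by simp only [gv, ← hℓ, if_neg hc]
    rw [h1]
    have htop : ((insert ℓ p.1) ∪ (p.2.erase ℓ).toFinset).sup id = ℓ := by
      apply le_antisymm
      · apply Finset.sup_le
        intro x hx
        rcases Finset.mem_union.mp hx with h | h
        · rcases Finset.mem_insert.mp h with rfl | h
          · exact le_refl _
          · exact hb1 x h
        · exact hb2 x (Multiset.mem_of_mem_erase (Multiset.mem_toFinset.mp h))
      · exact Finset.le_sup (f := id) (Finset.mem_union_left _ (Finset.mem_insert_self _ _))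
    simp only [gv, htop, if_pos (Finset.mem_insert_self ℓ p.1)]
    rw [Finset.erase_insert hc, Multiset.cons_erase hℓ2]

lemma gv_ne {n : ℕ} (hn : 0 < n) {p : Finset ℕ × Multiset ℕ} (hp : p ∈ BP n) :
    gv p ≠ p := by
  obtain ⟨hmem, hb1, hb2⟩ := top_spec hn hp
  set ℓ := (p.1 ∪ p.2.toFinset).sup id with hℓ
  by_cases hc : ℓ ∈ p.1
  · simp only [gv, ← hℓ, if_pos hc]
    intro h
    have h2 := congrArg Prod.fst h
    simp only at h2
    rw [← h2] at hc
    exact Finset.notMem_erase ℓ p.1 hc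
  · simp only [gv, ← hℓ, if_neg hc]
    intro h
    have h2 := congrArg Prod.fst h
    simp only at h2
    rw [← h2] at hc
    exact hc (Finset.mem_insert_self ℓ p.1)

theorem conv_eq (n : ℕ) :
    ∑ p ∈ Finset.HasAntidiagonal.antidiagonal n, qq p.1 * pp p.2 = if n = 0 then 1 else 0 := by
  have hrw : ∑ p ∈ Finset.HasAntidiagonal.antidiagonal n, qq p.1 * pp p.2
      = ∑ m ∈ Finset.range (n + 1), qq m * pp (n - m) :=
    Finset.Nat.sum_antidiagonal_eq_sum_range_succ (fun i j => qq i * pp j) n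
  rw [hrw, ← sum_BP]
  rcases Nat.eq_zero_or_pos n with rfl | hn
  · simp only [if_pos rfl]
    have : BP 0 = {(∅, 0)} := by
      ext p
      simp only [mem_BP, Finset.mem_singleton]
      constructor
      · rintro ⟨h0, hpos, hsum⟩
        have h1 : p.1 = ∅ := by
          by_contra h
          obtain ⟨x, hx⟩ := Finset.nonempty_iff_ne_empty.mpr h
          have hx0 : x ≠ 0 := fun he => h0 (he ▸ hx)
          have : x ≤ ∑ y ∈ p.1, y := Finset.single_le_sum (fun i _ => Nat.zero_le i) hx
          omega
        have h2 : p.2 = 0 := by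
          apply Multiset.eq_zero_of_forall_notMem
          intro x hx
          have h3 := hpos x hx
          have : x ≤ p.2.sum := Multiset.single_le_sum (fun y _ => Nat.zero_le y) _ hx
          omega
        exact Prod.ext h1 h2
      · rintro rfl
        simp
    rw [this]
    simp
  · rw [if_neg (by omega)]
    apply Finset.sum_involution (fun p _ => gv p)
    · intro a ha; decide
    · intro a ha _
      exact gv_ne hn ha
    · intro a ha
      exact gv_mem hn ha
    · intro a ha
      exact gv_invol hn ha

abbrev PS := PowerSeries (ZMod 2)


lemma two_eq_zero_PS : (2 : PS) = 0 := by
  have h : (2 : PS) = 1 + 1 := by norm_num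
  rw [h]
  ext n
  rw [map_add, map_zero, PowerSeries.coeff_one]
  by_cases hn : n = 0
  · rw [if_pos hn]; decide
  · rw [if_neg hn]; decide

lemma coeff_sq (f : PS) (n : ℕ) :
    (coeff n) (f * f) = if Even n then coeff (n / 2) f else 0 := by
  rw [coeff_mul]
  rw [← Finset.sum_filter_add_sum_filter_not (Finset.HasAntidiagonal.antidiagonal n) (fun p => p.1 = p.2)]
  have h2 : ∑ p ∈ (Finset.HasAntidiagonal.antidiagonal n).filter (fun p => ¬ p.1 = p.2),
      coeff p.1 f * coeff p.2 f = 0 := by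
    apply Finset.sum_involution (fun p _ => (p.2, p.1))
    · intro a ha
      rw [mul_comm]
      exact zmod2_add_self _
    · intro a ha _
      simp only [mem_filter] at ha
      intro h
      exact ha.2 (congrArg Prod.fst h).symm
    · intro a ha
      simp only [mem_filter, Finset.HasAntidiagonal.mem_antidiagonal] at ha ⊢
      omega
    · intro a ha
      rfl
  rw [h2, add_zero]
  have h3 : (Finset.HasAntidiagonal.antidiagonal n).filter (fun p => p.1 = p.2)
      = if Even n then {(n / 2, n / 2)} else ∅ := by
    ext p
    simp only [mem_filter, Finset.HasAntidiagonal.mem_antidiagonal]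
    by_cases he : Even n
    · rw [if_pos he]
      simp only [Finset.mem_singleton, Prod.ext_iff]
      obtain ⟨i, hi⟩ := he
      constructor
      · rintro ⟨hsum, heq⟩; omega
      · rintro ⟨h1, h2⟩; omega
    · rw [if_neg he]
      simp only [Finset.notMem_empty, iff_false, not_and]
      intro hsum heq
      exact he ⟨p.1, by omega⟩
  rw [h3]
  by_cases he : Even n
  · rw [if_pos he, if_pos he, Finset.sum_singleton, zmod2_mul_self]
  · rw [if_neg he, if_neg he, Finset.sum_empty]

noncomputable def A : PS := PowerSeries.mk (fun i => pp (2 * i))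

noncomputable def B : PS := PowerSeries.mk (fun i => pp (2 * i + 1))

noncomputable def Q0 : PS := PowerSeries.mk (fun i => qq (2 * i))

noncomputable def Q1 : PS := PowerSeries.mk (fun i => qq (2 * i + 1))

noncomputable def F : PS := PowerSeries.mk pp

noncomputable def Q : PS := PowerSeries.mk qq

lemma split_F : F = A ^ 2 + X * B ^ 2 := by
  ext n
  rw [map_add, sq, coeff_sq, F, coeff_mk]
  rcases Nat.even_or_odd n with ⟨i, hi⟩ | ⟨i, hi⟩
  · have he : Even n := ⟨i, hi⟩
    rw [if_pos he]
    rcases Nat.eq_zero_or_pos n with rfl | hn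
    · simp [A, coeff_mk]
    · obtain ⟨m, hm⟩ : ∃ m, n = m + 1 := ⟨n - 1, by omega⟩
      subst hm
      rw [PowerSeries.coeff_succ_X_mul, sq, coeff_sq, if_neg (by rw [Nat.even_iff]; omega : ¬ Even m)]
      rw [A, coeff_mk, add_zero]
      congr 1
      omega
  · have he : ¬ Even n := by rw [Nat.even_iff]; omega
    rw [if_neg he]
    obtain ⟨m, hm⟩ : ∃ m, n = m + 1 := ⟨n - 1, by omega⟩
    subst hm
    rw [PowerSeries.coeff_succ_X_mul, sq, coeff_sq, if_pos (by rw [Nat.even_iff]; omega : Even m)]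
    rw [B, coeff_mk, zero_add]
    congr 1
    omega

lemma split_Q : Q = Q0 ^ 2 + X * Q1 ^ 2 := by
  ext n
  rw [map_add, sq, coeff_sq, Q, coeff_mk]
  rcases Nat.even_or_odd n with ⟨i, hi⟩ | ⟨i, hi⟩
  · have he : Even n := ⟨i, hi⟩
    rw [if_pos he]
    rcases Nat.eq_zero_or_pos n with rfl | hn
    · simp [Q0, coeff_mk]
    · obtain ⟨m, hm⟩ : ∃ m, n = m + 1 := ⟨n - 1, by omega⟩
      subst hm
      rw [PowerSeries.coeff_succ_X_mul, sq, coeff_sq, if_neg (by rw [Nat.even_iff]; omega : ¬ Even m)]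
      rw [Q0, coeff_mk, add_zero]
      congr 1
      omega
  · have he : ¬ Even n := by rw [Nat.even_iff]; omega
    rw [if_neg he]
    obtain ⟨m, hm⟩ : ∃ m, n = m + 1 := ⟨n - 1, by omega⟩
    subst hm
    rw [PowerSeries.coeff_succ_X_mul, sq, coeff_sq, if_pos (by rw [Nat.even_iff]; omega : Even m)]
    rw [Q1, coeff_mk, zero_add]
    congr 1
    omega

lemma FQ_one : Q * F = 1 := by
  ext n
  rw [coeff_mul]
  have : ∑ p ∈ Finset.HasAntidiagonal.antidiagonal n, coeff p.1 Q * coeff p.2 F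
      = ∑ p ∈ Finset.HasAntidiagonal.antidiagonal n, qq p.1 * pp p.2 := by
    apply Finset.sum_congr rfl
    intro p _
    rw [Q, F, coeff_mk, coeff_mk]
  rw [this, conv_eq]
  rcases Nat.eq_zero_or_pos n with rfl | hn
  · simp
  · rw [if_neg (by omega), PowerSeries.coeff_one, if_neg (by omega)]

lemma add_sq_PS (u v : PS) : (u + v) ^ 2 = u ^ 2 + v ^ 2 := by
  rw [add_sq, two_eq_zero_PS]
  ring

lemma G_H : A * Q0 + X * (B * Q1) = 1 ∧ A * Q1 + B * Q0 = 0 := by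
  have key : (A * Q0 + X * (B * Q1)) ^ 2 + X * (A * Q1 + B * Q0) ^ 2 = 1 := by
    have h1 : (A * Q0 + X * (B * Q1)) ^ 2 + X * (A * Q1 + B * Q0) ^ 2
        = (A ^ 2 + X * B ^ 2) * (Q0 ^ 2 + X * Q1 ^ 2) := by
      rw [add_sq_PS, add_sq_PS]
      ring
    rw [h1, ← split_F, ← split_Q, mul_comm, FQ_one]
  have coeff_zero_X_mul : ∀ f : PS, coeff 0 (X * f) = 0 := by
    intro f
    rw [PowerSeries.coeff_zero_eq_constantCoeff, map_mul, PowerSeries.constantCoeff_X, zero_mul]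
  constructor
  · ext n
    have hkey := congrArg (coeff (2 * n)) key
    rw [map_add, sq, coeff_sq, if_pos ⟨n, by ring⟩,
      show 2 * n / 2 = n by omega, PowerSeries.coeff_one] at hkey
    have hX : (coeff (2*n)) (X * (A * Q1 + B * Q0) ^ 2) = 0 := by
      rcases Nat.eq_zero_or_pos n with rfl | hn
      · exact coeff_zero_X_mul _
      · rw [show 2 * n = (2*n-1) + 1 by omega, PowerSeries.coeff_succ_X_mul,
          sq, coeff_sq, if_neg (by rw [Nat.even_iff]; omega : ¬ Even (2*n-1))]
    rw [hX, add_zero] at hkey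
    rw [hkey, PowerSeries.coeff_one]
    by_cases hn : n = 0
    · rw [if_pos hn, if_pos (by omega)]
    · rw [if_neg hn, if_neg (by omega)]
  · ext n
    have hkey := congrArg (coeff (2 * n + 1)) key
    rw [map_add, sq, coeff_sq, if_neg (by rw [Nat.even_iff]; omega : ¬ Even (2*n+1)),
      PowerSeries.coeff_succ_X_mul, sq, coeff_sq, if_pos ⟨n, by ring⟩,
      show 2 * n / 2 = n by omega, PowerSeries.coeff_one, if_neg (by omega),
      zero_add] at hkey
    rw [hkey, map_zero]

lemma AQ_eq_Q0 : A * Q = Q0 := by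
  obtain ⟨hG, hH⟩ := G_H
  have hsplit := split_Q
  have h2 := two_eq_zero_PS
  linear_combination Q0 * hG + (X * Q1) * hH + A * hsplit - (X * B * Q0 * Q1) * h2

theorem key_identity (n : ℕ) :
    ∑ p ∈ Finset.HasAntidiagonal.antidiagonal n, pp (2 * p.1) * qq p.2 = qq (2 * n) := by
  have := congrArg (coeff n) AQ_eq_Q0
  rw [coeff_mul, Q0, coeff_mk] at this
  rw [← this]
  apply Finset.sum_congr rfl
  intro p _
  rw [A, Q, coeff_mk, coeff_mk]

lemma key2 (n : ℕ) :
    ∑ a ∈ Finset.range (n + 1), pp (2 * a) * ee (n - a) = ee (2 * n) := by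
  have h1 := key_identity n
  have h2 : ∑ p ∈ Finset.HasAntidiagonal.antidiagonal n, pp (2 * p.1) * qq p.2
      = ∑ a ∈ Finset.range (n + 1), pp (2 * a) * qq (n - a) :=
    Finset.Nat.sum_antidiagonal_eq_sum_range_succ (fun i j => pp (2 * i) * qq j) n
  rw [h2] at h1
  rw [← qq_eq_ee, ← h1]
  apply Finset.sum_congr rfl
  intro a _
  rw [qq_eq_ee]

lemma count_pent {n T : ℕ} (h1 : pe T ≤ n) (h2 : n < pe (T + 1)) :
    ∑ j ∈ Finset.range (n + 1), ee j = ((T + 1 : ℕ) : ZMod 2) := by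
  classical
  have hsum : ∑ j ∈ Finset.range (n + 1), ee j
      = ∑ j ∈ Finset.range (n + 1), (if IsPent j then (1 : ZMod 2) else 0) := by
    apply Finset.sum_congr rfl
    intro j _
    by_cases h : IsPent j
    · rw [ee_pos h, if_pos h]
    · rw [ee_neg h, if_neg h]
  rw [hsum, Finset.sum_boole]
  have hfil : (Finset.range (n + 1)).filter (fun j => IsPent j)
      = (Finset.range (T + 1)).image pe := by
    ext j
    simp only [Finset.mem_filter, Finset.mem_image, Finset.mem_range]
    constructor
    · rintro ⟨hj, hp⟩
      obtain ⟨t, rfl⟩ := isPent_iff.mp hp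
      refine ⟨t, ?_, rfl⟩
      by_contra hT
      push_neg at hT
      have := pe_strictMono.monotone hT
      omega
    · rintro ⟨t, ht, rfl⟩
      have : pe t ≤ pe T := pe_strictMono.monotone (by omega)
      exact ⟨by omega, isPent_iff.mpr ⟨t, rfl⟩⟩
  rw [hfil, Finset.card_image_of_injective _ pe_strictMono.injective, Finset.card_range]

lemma squares_not_adjacent {n : ℕ} (hn : 100 ≤ n)
    (h1 : ∃ x : ℕ, x * x = 48 * n + 1) (h2 : ∃ y : ℕ, y * y = 48 * n + 49) : False := by
  obtain ⟨x, hx⟩ := h1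
  obtain ⟨y, hy⟩ := h2
  have hxy : x < y := by
    by_contra hle
    push_neg at hle
    have := Nat.mul_le_mul hle hle
    omega
  have h3 : (x + 1) * (x + 1) ≤ y * y := Nat.mul_le_mul hxy hxy
  have e : (x + 1) * (x + 1) = x * x + 2 * x + 1 := by ring
  have hxsmall : x ≤ 23 := by omega
  have := Nat.mul_le_mul hxsmall hxsmall
  omega

lemma mod5_choice : ∀ c : ZMod 5, ∃ r : ZMod 5, ∀ x : ZMod 5,
    x * x ≠ 24 * (r * (3 * r - 1)) + 48 * c + 1 := by decide

lemma cast_k_zmod5 (t : ℕ) (r : ZMod 5) : ((5 * t + r.val : ℕ) : ZMod 5) = r := by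
  push_cast
  rw [show ((5 : ZMod 5)) = 0 from by decide, zero_mul, zero_add]
  simp [ZMod.natCast_val, ZMod.cast_id]

/-- ODD case: if `pp (2 m) = 1` only finitely often, contradiction -/

lemma odd_case (N : ℕ) (hN : ∀ m, pp (2 * m) = 1 → m ≤ N) : False := by
  classical
  obtain ⟨m0, hm0P, hm0max⟩ : ∃ m0, pp (2 * m0) = 1 ∧ ∀ m, m0 < m → pp (2 * m) = 0 := by
    refine ⟨Nat.findGreatest (fun m => pp (2 * m) = 1) N, ?_, ?_⟩
    · have h00 : pp (2 * 0) = 1 := by simpa using pp_zero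
      exact Nat.findGreatest_spec (P := fun m => pp (2 * m) = 1) (Nat.zero_le N) h00
    · intro m hm
      rcases zmod2_cases (pp (2 * m)) with h | h
      · exact h
      · exfalso
        have hmN : m ≤ N := hN m h
        exact Nat.findGreatest_is_greatest (P := fun m => pp (2 * m) = 1) hm hmN h
  obtain ⟨r, hr⟩ := mod5_choice ((m0 : ℕ) : ZMod 5)
  -- choose k ≡ r (mod 5), k > m0
  obtain ⟨k, hk_def⟩ : ∃ k, k = 5 * (N + m0 + 2) + r.val := ⟨_, rfl⟩
  have hk_cast : ((k : ℕ) : ZMod 5) = r := by rw [hk_def]; exact cast_k_zmod5 _ r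
  have hk_big : m0 + 1 ≤ k ∧ 1 ≤ k := by
    constructor <;> omega
  obtain ⟨j, hkj⟩ : ∃ j, k = j + 1 := ⟨k - 1, by omega⟩
  obtain ⟨g, hg_def⟩ : ∃ g, g = pe (2 * j + 1) := ⟨_, rfl⟩
  have h2g : 2 * g = k * (3 * k - 1) := by
    rw [hg_def, pe_two_mul_odd, ← hkj]
  obtain ⟨n, hn_def⟩ : ∃ n, n = g + m0 := ⟨_, rfl⟩
  -- evaluate the sum
  have hterm : ∀ a ∈ Finset.range (n + 1),
      pp (2 * a) * ee (n - a) = if a = m0 then 1 else 0 := by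
    intro a ha
    rw [Finset.mem_range] at ha
    by_cases ham : a = m0
    · rw [if_pos ham]
      have h5 : n - a = g := by omega
      rw [h5, ham, hm0P, ee_pos (isPent_iff.mpr ⟨2 * j + 1, hg_def.symm⟩), mul_one]
    · rw [if_neg ham]
      by_cases hpent : IsPent (n - a)
      · obtain ⟨t, ht⟩ := isPent_iff.mp hpent
        have hppa : pp (2 * a) = 0 := by
          apply hm0max
          -- show m0 < a
          rcases lt_trichotomy t (2 * j + 1) with htl | hte | htg
          · have h1 : pe t ≤ pe (2 * j) := pe_strictMono.monotone (by omega)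
            have h2 := pe_succ_even j
            omega
          · exfalso
            rw [hte] at ht
            apply ham
            omega
          · have h1 : pe (2 * j + 2) ≤ pe t := pe_strictMono.monotone (by omega)
            have h2 := pe_succ_odd j
            omega
        rw [hppa, zero_mul]
      · rw [ee_neg hpent, mul_zero]
  have hsum1 : ∑ a ∈ Finset.range (n + 1), pp (2 * a) * ee (n - a) = 1 := by
    rw [Finset.sum_congr rfl hterm, Finset.sum_ite_eq' (Finset.range (n + 1)) m0 (fun _ => 1),
      if_pos (Finset.mem_range.mpr (by omega))]
  -- RHS is zero
  have hrhs : ee (2 * n) = 0 := by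
    apply ee_neg
    intro hpent
    obtain ⟨x, hx⟩ := pent_sq hpent
    have hx' : x * x = 48 * n + 1 := by omega
    have hcast : ((x : ZMod 5)) * (x : ZMod 5) = 24 * (r * (3 * r - 1)) + 48 * ((m0 : ℕ) : ZMod 5) + 1 := by
      have h1 : ((x * x : ℕ) : ZMod 5) = ((48 * n + 1 : ℕ) : ZMod 5) := by rw [hx']
      push_cast at h1
      rw [h1, ← hk_cast]
      have h2 : ((2 * g : ℕ) : ZMod 5) = ((k * (3 * k - 1) : ℕ) : ZMod 5) := by rw [h2g]
      have h3 : ((3 * k - 1 : ℕ) : ZMod 5) = 3 * (k : ZMod 5) - 1 := by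
        push_cast [Nat.cast_sub (by omega : 1 ≤ 3 * k)]
        ring
      push_cast [h3] at h2
      have h5 : ((n : ℕ) : ZMod 5) = ((g : ℕ) : ZMod 5) + ((m0 : ℕ) : ZMod 5) := by
        rw [hn_def]; push_cast; ring
      rw [h5]
      linear_combination (24 : ZMod 5) * h2
    exact hr (x : ZMod 5) hcast
  have := key2 n
  rw [hsum1, hrhs] at this
  exact absurd this (by decide)

/-- EVEN case: if `pp (2 m) = 0` only finitely often, contradiction -/

lemma even_case (N : ℕ) (hN : ∀ m, N < m → pp (2 * m) = 1) : False := by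
  obtain ⟨k, hk_def⟩ : ∃ k, k = N + 50 := ⟨_, rfl⟩
  obtain ⟨g2, hg2_def⟩ : ∃ g2, g2 = pe (2 * k) := ⟨_, rfl⟩
  have hgap : pe (2 * k + 1) = g2 + (2 * k + 1) := by rw [hg2_def]; exact pe_succ_even k
  have hg2big : 100 ≤ g2 := by
    have h1 : 2 * g2 = k * (3 * k + 1) := by rw [hg2_def]; exact pe_two_mul_even k
    have h2 : 50 * (3 * 50 + 1) ≤ k * (3 * k + 1) :=
      Nat.mul_le_mul (by omega) (by omega)
    omega
  obtain ⟨n, hn_def⟩ : ∃ n, n = g2 + N + 1 := ⟨_, rfl⟩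
  have hpent_of : ∀ n', g2 + N + 1 ≤ n' → n' + 1 ≤ g2 + 2 * k → IsPent (2 * n') := by
    intro n' hlo hhi
    have hsum : ∑ a ∈ Finset.range (n' + 1), pp (2 * a) * ee (n' - a)
        = ∑ a ∈ Finset.range (n' + 1), ee (n' - a) := by
      apply Finset.sum_congr rfl
      intro a ha
      rw [Finset.mem_range] at ha
      by_cases hpent : IsPent (n' - a)
      · obtain ⟨t, ht⟩ := isPent_iff.mp hpent
        have htle : t ≤ 2 * k := by
          by_contra hgt
          push_neg at hgt
          have h9 : pe (2 * k + 1) ≤ pe t := pe_strictMono.monotone (by omega)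
          omega
        have h8 : pe t ≤ g2 := by rw [hg2_def]; exact pe_strictMono.monotone htle
        have hage : N < a := by omega
        rw [hN a hage, one_mul]
      · rw [ee_neg hpent, mul_zero]
    have hreflect : ∑ a ∈ Finset.range (n' + 1), ee (n' - a)
        = ∑ j ∈ Finset.range (n' + 1), ee j := by
      have := Finset.sum_range_reflect ee (n' + 1)
      simpa using this
    have hcount : ∑ j ∈ Finset.range (n' + 1), ee j = ((2 * k + 1 : ℕ) : ZMod 2) :=
      count_pent (n := n') (T := 2 * k) (by omega) (by omega)
    have hone : ((2 * k + 1 : ℕ) : ZMod 2) = 1 := by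
      push_cast
      rw [show ((2 : ZMod 2)) = 0 from by decide]
      ring
    have := key2 n'
    rw [hsum, hreflect, hcount, hone] at this
    rcases zmod2_cases (ee (2 * n')) with h | h
    · rw [h] at this; exact absurd this (by decide)
    · by_contra hnp
      rw [ee_neg hnp] at h
      exact absurd h (by decide)
  have hp1 : IsPent (2 * n) := hpent_of n (by omega) (by omega)
  have hp2 : IsPent (2 * (n + 1)) := hpent_of (n + 1) (by omega) (by omega)
  obtain ⟨x, hx⟩ := pent_sq hp1
  obtain ⟨y, hy⟩ := pent_sq hp2
  exact squares_not_adjacent (n := n) (by omega) ⟨x, by omega⟩ ⟨y, by omega⟩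

theorem stmt13' :
    {n : ℕ | Fintype.card (Nat.Partition (2 * n)) % 2 = 0}.Infinite ∧
    {n : ℕ | Fintype.card (Nat.Partition (2 * n)) % 2 = 1}.Infinite := by
  constructor
  · by_contra hfin
    rw [Set.not_infinite] at hfin
    obtain ⟨N, hNub⟩ := hfin.bddAbove
    apply even_case N
    intro m hm
    rcases zmod2_cases (pp (2 * m)) with h | h
    · exfalso
      have hmem : m ∈ {n : ℕ | Fintype.card (Nat.Partition (2 * n)) % 2 = 0} := pp_mod'.mp h
      have := hNub hmem
      omega
    · exact h
  · by_contra hfin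
    rw [Set.not_infinite] at hfin
    obtain ⟨N, hNub⟩ := hfin.bddAbove
    apply odd_case N
    intro m hm
    exact hNub (pp_mod.mp hm)

end Stmt13

/-- `p(2n)` takes each value of parity infinitely often. -/
theorem stmt13 :
    {n : ℕ | Fintype.card (Nat.Partition (2 * n)) % 2 = 0}.Infinite ∧
    {n : ℕ | Fintype.card (Nat.Partition (2 * n)) % 2 = 1}.Infinite := Stmt13.stmt13'
end
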